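/- arXiv:1908.10665 — 8 statements merged into one kernel-verified Lean document; each statement's English description precedes it below -/
import Mathlib

section
/- Let G be a countable group, I and Λ nonempty countable sets, P : Λ × I → G a matrix, and let S = M[G;I,Λ;P] be a normalised Rees matrix semigroup. If S is homogeneous as a completely simple semigroup, then G is a homogeneous group and the subsemigroup ⟨E(S)⟩ generated by the idempotents of S is homogeneous as a completely simple semigroup. -/
section CSDefs

variable {S : Type*}

/-- Closure of a subset under a binary operation `op` and a unary operation `star`. -/
inductive CSClosure (op : S → S → S) (star : S → S) (X : Set S) : S → Prop
  | base {x : S} : x ∈ X → CSClosure op star X x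
  | mul {x y : S} : CSClosure op star X x → CSClosure op star X y →
      CSClosure op star X (op x y)
  | inv {x : S} : CSClosure op star X x → CSClosure op star X (star x)

/-- Homogeneity as a completely simple semigroup, for the completely simple semigroup with
carrier `S`, multiplication `op` and unary operation `star` (inversion in the maximal
subgroup): every multiplication-preserving bijection between finitely generated
`(op, star)`-closed subsemigroups extends to an automorphism of `S`. -/
def IsCSHomogeneous (op : S → S → S) (star : S → S) : Prop :=
  ∀ (X Y : Finset S) (φ : S → S),
    Set.BijOn φ {s | CSClosure op star (X : Set S) s} {s | CSClosure op star (Y : Set S) s} →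
    (∀ x y : S, CSClosure op star (X : Set S) x → CSClosure op star (X : Set S) y →
      φ (op x y) = op (φ x) (φ y)) →
    ∃ Φ : S → S, Function.Bijective Φ ∧
      (∀ x y : S, Φ (op x y) = op (Φ x) (Φ y)) ∧
      ∀ x : S, CSClosure op star (X : Set S) x → Φ x = φ x

end CSDefs

/-- A countable group is homogeneous if every isomorphism between finitely generated
subgroups extends to an automorphism. -/
def IsHomogeneousGroup (G : Type*) [Group G] : Prop :=
  ∀ (A B : Subgroup G), A.FG → B.FG → ∀ e : A ≃* B,
    ∃ Φ : G ≃* G, ∀ a : A, Φ (a : G) = ((e a : B) : G)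

section Rees

variable {G H I Λ J M : Type*} [Group G] [Group H]

/-- Multiplication of the Rees matrix semigroup `M[G;I,Λ;P]`. -/
def reesMul (P : Λ → I → G) (x y : I × G × Λ) : I × G × Λ :=
  (x.1, x.2.1 * P x.2.2 y.1 * y.2.1, y.2.2)

/-- The unary operation on `M[G;I,Λ;P]` sending an element to its inverse in its
maximal subgroup. -/
def reesInv (P : Λ → I → G) (x : I × G × Λ) : I × G × Λ :=
  (x.1, (P x.2.2 x.1)⁻¹ * x.2.1⁻¹ * (P x.2.2 x.1)⁻¹, x.2.2)

/-- The set `G^P` of entries of the sandwich matrix `P`. -/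
def reesEntries (P : Λ → I → G) : Set G := {g | ∃ l i, P l i = g}

/-- The sandwich matrix `P` viewed as a matrix over the subgroup `⟨G^P⟩` generated by its
entries; the Rees matrix semigroup over it is the idempotent-generated subsemigroup
`⟨E(S)⟩ = I × ⟨G^P⟩ × Λ` of `M[G;I,Λ;P]` (for normalised `P`). -/
def reesEntriesMatrix (P : Λ → I → G) : Λ → I → ↥(Subgroup.closure (reesEntries P)) :=
  fun l i => ⟨P l i, Subgroup.subset_closure ⟨l, i, rfl⟩⟩

/-- The map `[θ, ψ, u, v]` between Rees matrix semigroups. -/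
def reesMap (θ : G →* H) (ψI : I → J) (ψΛ : Λ → M) (u : I → H) (v : Λ → H) :
    I × G × Λ → J × H × M :=
  fun x => (ψI x.1, u x.1 * θ x.2.1 * v x.2.2, ψΛ x.2.2)

end Rees

/-- The set `A` forms a characteristic subgroup of `G`: it is a subgroup (contains the
identity and is closed under products and inverses) and is invariant under every
automorphism of `G`. -/
def IsCharacteristicSubgroupSet {G : Type*} [Group G] (A : Set G) : Prop :=
  1 ∈ A ∧ (∀ a ∈ A, ∀ b ∈ A, a * b ∈ A) ∧ (∀ a ∈ A, a⁻¹ ∈ A) ∧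
    ∀ θ : G ≃* G, θ '' A = A

/-- Homogeneity of a complete edge-coloured bipartite graph with left set `L`,
right set `R` and colouring function `F`. -/
def IsHomogeneousBipartite {L R C : Type*} (F : L → R → C) : Prop :=
  ∀ (A : Finset L) (B : Finset R) (α : L → L) (β : R → R),
    Set.InjOn α ↑A → Set.InjOn β ↑B →
    (∀ a ∈ A, ∀ b ∈ B, F (α a) (β b) = F a b) →
    ∃ (α' : Equiv.Perm L) (β' : Equiv.Perm R),
      (∀ a ∈ A, α' a = α a) ∧ (∀ b ∈ B, β' b = β b) ∧
      ∀ (x : L) (y : R), F (α' x) (β' y) = F x y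

section RHProof

variable {G I Λ : Type*} [Group G]

private lemma RH_clos_line (P : Λ → I → G) (iI : I) (lL : Λ)
    (hrow : ∀ j : I, P lL j = 1) (hcol : ∀ m : Λ, P m iI = 1) (T : Set G) :
    {s | CSClosure (reesMul P) (reesInv P) ((fun a => (iI, a, lL)) '' insert 1 T) s}
      = {x : I × G × Λ | x.1 = iI ∧ x.2.1 ∈ Subgroup.closure T ∧ x.2.2 = lL} := by
  ext s
  constructor
  · intro h
    induction h with
    | base hx =>
      obtain ⟨a, ha, rfl⟩ := hx
      refine ⟨rfl, ?_, rfl⟩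
      rcases ha with rfl | ha
      · exact one_mem _
      · exact Subgroup.subset_closure ha
    | mul hx hy ihx ihy =>
      refine ⟨ihx.1, ?_, ihy.2.2⟩
      show _ * _ * _ ∈ _
      rw [ihx.2.2, hrow]
      simpa using mul_mem ihx.2.1 ihy.2.1
    | inv hx ih =>
      refine ⟨ih.1, ?_, ih.2.2⟩
      show _ * _ * _ ∈ _
      rw [ih.2.2, hrow]
      simpa using inv_mem ih.2.1
  · rintro ⟨h1, h2, h3⟩
    have key : ∀ g ∈ Subgroup.closure T,
        CSClosure (reesMul P) (reesInv P) ((fun a => (iI, a, lL)) '' insert 1 T) (iI, g, lL) := by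
      intro g hg
      induction hg using Subgroup.closure_induction with
      | mem x hx => exact .base ⟨x, Set.mem_insert_of_mem _ hx, rfl⟩
      | one => exact .base ⟨1, Set.mem_insert _ _, rfl⟩
      | mul a b ha hb iha ihb =>
        have heq : reesMul P (iI, a, lL) (iI, b, lL) = (iI, a * b, lL) := by
          simp [reesMul, hcol]
        exact heq ▸ CSClosure.mul iha ihb
      | inv a ha iha =>
        have heq : reesInv P (iI, a, lL) = (iI, a⁻¹, lL) := by
          simp [reesInv, hcol]
        exact heq ▸ CSClosure.inv iha
    have hs : s = (iI, s.2.1, lL) := by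
      rw [← h1, ← h3]
    rw [hs]
    exact key _ h2

private lemma RH_part1 (P : Λ → I → G) (iI : I) (lL : Λ)
    (hrow : ∀ j : I, P lL j = 1) (hcol : ∀ m : Λ, P m iI = 1)
    (hhom : IsCSHomogeneous (reesMul P) (reesInv P)) :
    IsHomogeneousGroup G := by
  classical
  intro A B hA hB e
  obtain ⟨TA, hTA⟩ := hA
  obtain ⟨TB, hTB⟩ := hB
  set f : G → G := fun g => if h : g ∈ A then ((e ⟨g, h⟩ : B) : G) else g with hf
  have hfA : ∀ (g : G) (h : g ∈ A), f g = ((e ⟨g, h⟩ : B) : G) := fun g h => dif_pos h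
  set X : Finset (I × G × Λ) := (insert 1 TA).image (fun a => (iI, a, lL)) with hX
  set Y : Finset (I × G × Λ) := (insert 1 TB).image (fun a => (iI, a, lL)) with hY
  have hXc : (X : Set (I × G × Λ)) = (fun a => (iI, a, lL)) '' insert 1 (TA : Set G) := by
    simp [hX, Set.image_insert_eq]
  have hYc : (Y : Set (I × G × Λ)) = (fun a => (iI, a, lL)) '' insert 1 (TB : Set G) := by
    simp [hY, Set.image_insert_eq]
  have hclX : {s | CSClosure (reesMul P) (reesInv P) (X : Set (I × G × Λ)) s}
      = {x : I × G × Λ | x.1 = iI ∧ x.2.1 ∈ A ∧ x.2.2 = lL} := by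
    rw [hXc, RH_clos_line P iI lL hrow hcol, hTA]
  have hclY : {s | CSClosure (reesMul P) (reesInv P) (Y : Set (I × G × Λ)) s}
      = {x : I × G × Λ | x.1 = iI ∧ x.2.1 ∈ B ∧ x.2.2 = lL} := by
    rw [hYc, RH_clos_line P iI lL hrow hcol, hTB]
  set φ : I × G × Λ → I × G × Λ := fun x => (x.1, f x.2.1, x.2.2) with hφ
  have hφbij : Set.BijOn φ {s | CSClosure (reesMul P) (reesInv P) (X : Set (I × G × Λ)) s}
      {s | CSClosure (reesMul P) (reesInv P) (Y : Set (I × G × Λ)) s} := by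
    rw [hclX, hclY]
    refine ⟨?_, ?_, ?_⟩
    · rintro x ⟨h1, h2, h3⟩
      exact ⟨h1, by rw [show φ x = (x.1, f x.2.1, x.2.2) from rfl, hfA _ h2]; exact (e ⟨x.2.1, h2⟩).2, h3⟩
    · rintro x ⟨hx1, hx2, hx3⟩ y ⟨hy1, hy2, hy3⟩ hxy
      have h1 : x.1 = y.1 := by rw [hx1, hy1]
      have h3 : x.2.2 = y.2.2 := by rw [hx3, hy3]
      have h2 : f x.2.1 = f y.2.1 := congrArg (fun z => z.2.1) hxy
      rw [hfA _ hx2, hfA _ hy2] at h2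
      have h2' : x.2.1 = y.2.1 := by
        have := e.injective (SetLike.coe_eq_coe.mp h2)
        exact congrArg Subtype.val this
      exact Prod.ext h1 (Prod.ext h2' h3)
    · rintro y ⟨hy1, hy2, hy3⟩
      set a : G := ((e.symm ⟨y.2.1, hy2⟩ : A) : G) with ha
      have hm : a ∈ A := (e.symm ⟨y.2.1, hy2⟩).2
      refine ⟨(iI, a, lL), ⟨rfl, hm, rfl⟩, ?_⟩
      show ((iI, f a, lL) : I × G × Λ) = y
      rw [hfA _ hm]
      have h0 : (⟨a, hm⟩ : A) = e.symm ⟨y.2.1, hy2⟩ := rfl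
      rw [h0, e.apply_symm_apply]
      exact Prod.ext_iff.mpr ⟨hy1.symm, Prod.ext_iff.mpr ⟨rfl, hy3.symm⟩⟩
  have hφmul : ∀ x y : I × G × Λ,
      CSClosure (reesMul P) (reesInv P) (X : Set (I × G × Λ)) x →
      CSClosure (reesMul P) (reesInv P) (X : Set (I × G × Λ)) y →
      φ (reesMul P x y) = reesMul P (φ x) (φ y) := by
    intro x y hx hy
    have hx' : x ∈ {x : I × G × Λ | x.1 = iI ∧ x.2.1 ∈ A ∧ x.2.2 = lL} := by
      rw [← hclX]; exact hx
    have hy' : y ∈ {x : I × G × Λ | x.1 = iI ∧ x.2.1 ∈ A ∧ x.2.2 = lL} := by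
      rw [← hclX]; exact hy
    obtain ⟨hx1, hx2, hx3⟩ := hx'
    obtain ⟨hy1, hy2, hy3⟩ := hy'
    refine Prod.ext rfl (Prod.ext ?_ rfl)
    show f (x.2.1 * P x.2.2 y.1 * y.2.1) = f x.2.1 * P x.2.2 y.1 * f y.2.1
    rw [hx3, hrow, mul_one, mul_one]
    have hxy2 : x.2.1 * y.2.1 ∈ A := mul_mem hx2 hy2
    rw [hfA _ hxy2, hfA _ hx2, hfA _ hy2]
    have h0 : (⟨x.2.1 * y.2.1, hxy2⟩ : A) = ⟨x.2.1, hx2⟩ * ⟨y.2.1, hy2⟩ := rfl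
    rw [h0, map_mul]
    rfl
  obtain ⟨Φ, hΦbij, hΦmul, hΦext⟩ := hhom X Y φ hφbij hφmul
  have he₀mem : CSClosure (reesMul P) (reesInv P) (X : Set (I × G × Λ)) (iI, (1 : G), lL) := by
    have h0 : ((iI, (1 : G), lL) : I × G × Λ)
        ∈ {x : I × G × Λ | x.1 = iI ∧ x.2.1 ∈ A ∧ x.2.2 = lL} := ⟨rfl, one_mem A, rfl⟩
    rw [← hclX] at h0; exact h0
  have hf1 : f 1 = 1 := by
    rw [hfA 1 (one_mem A)]
    have h0 : (⟨(1 : G), one_mem A⟩ : A) = 1 := rfl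
    rw [h0, map_one]; rfl
  have hΦe₀ : Φ (iI, (1 : G), lL) = (iI, (1 : G), lL) := by
    rw [hΦext _ he₀mem]
    show ((iI, f 1, lL) : I × G × Λ) = _
    rw [hf1]
  have hsand1 : ∀ g : G,
      reesMul P (reesMul P (iI, (1 : G), lL) (iI, g, lL)) (iI, (1 : G), lL) = (iI, g, lL) := by
    intro g; simp [reesMul, hrow, hcol]
  have hsand2 : ∀ y : I × G × Λ,
      reesMul P (reesMul P (iI, (1 : G), lL) y) (iI, (1 : G), lL) = (iI, y.2.1, lL) := by
    intro y; simp [reesMul, hrow, hcol]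
  set θ : G → G := fun g => (Φ (iI, g, lL)).2.1 with hθ
  have hΦform : ∀ g : G, Φ (iI, g, lL) = (iI, θ g, lL) := by
    intro g
    conv_lhs => rw [← hsand1 g]
    rw [hΦmul, hΦmul, hΦe₀, hsand2]
  have hθmul : ∀ g h : G, θ (g * h) = θ g * θ h := by
    intro g h
    have h1 : ((iI, g * h, lL) : I × G × Λ) = reesMul P (iI, g, lL) (iI, h, lL) := by
      simp [reesMul, hcol]
    have h2 : Φ (iI, g * h, lL) = reesMul P (iI, θ g, lL) (iI, θ h, lL) := by
      rw [h1, hΦmul, hΦform g, hΦform h]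
    have h3 := congrArg (fun z : I × G × Λ => z.2.1) h2
    simp only [reesMul, hcol, mul_one] at h3
    exact h3
  have hθinj : Function.Injective θ := by
    intro g h hgh
    have h1 : Φ (iI, g, lL) = Φ (iI, h, lL) := by
      rw [hΦform g, hΦform h, hgh]
    have h2 := hΦbij.1 h1
    exact congrArg (fun z : I × G × Λ => z.2.1) h2
  have hθsurj : Function.Surjective θ := by
    intro h
    obtain ⟨x, hx⟩ := hΦbij.2 (iI, h, lL)
    refine ⟨x.2.1, ?_⟩
    have h1 : Φ (iI, x.2.1, lL) = (iI, h, lL) := by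
      rw [← hsand2 x, hΦmul, hΦmul, hΦe₀, hx, hsand1]
    have := hΦform x.2.1
    rw [h1] at this
    exact (congrArg (fun z : I × G × Λ => z.2.1) this).symm
  refine ⟨MulEquiv.ofBijective (MonoidHom.mk' θ hθmul) ⟨hθinj, hθsurj⟩, ?_⟩
  intro a
  show θ (a : G) = ((e a : B) : G)
  have hmem : CSClosure (reesMul P) (reesInv P) (X : Set (I × G × Λ)) (iI, (a : G), lL) := by
    have h0 : ((iI, (a : G), lL) : I × G × Λ)
        ∈ {x : I × G × Λ | x.1 = iI ∧ x.2.1 ∈ A ∧ x.2.2 = lL} := ⟨rfl, a.2, rfl⟩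
    rw [← hclX] at h0; exact h0
  show (Φ (iI, (a : G), lL)).2.1 = ((e a : B) : G)
  rw [hΦext _ hmem]
  show f (a : G) = ((e a : B) : G)
  rw [hfA _ a.2]
private def RHiota (P : Λ → I → G) (t : I × ↥(Subgroup.closure (reesEntries P)) × Λ) :
    I × G × Λ := (t.1, (t.2.1 : G), t.2.2)

private lemma RH_iota_inj (P : Λ → I → G) : Function.Injective (RHiota P) := by
  intro a b h
  have h1 := congrArg Prod.fst h
  have h2 := congrArg (fun z : I × G × Λ => z.2.1) h
  have h3 := congrArg (fun z : I × G × Λ => z.2.2) h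
  exact Prod.ext_iff.mpr ⟨h1, Prod.ext_iff.mpr ⟨SetLike.coe_eq_coe.mp h2, h3⟩⟩

private lemma RH_iota_mul (P : Λ → I → G)
    (a b : I × ↥(Subgroup.closure (reesEntries P)) × Λ) :
    RHiota P (reesMul (reesEntriesMatrix P) a b) = reesMul P (RHiota P a) (RHiota P b) := by
  simp [RHiota, reesMul, reesEntriesMatrix]

private lemma RH_iota_inv (P : Λ → I → G)
    (a : I × ↥(Subgroup.closure (reesEntries P)) × Λ) :
    RHiota P (reesInv (reesEntriesMatrix P) a) = reesInv P (RHiota P a) := by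
  simp [RHiota, reesInv, reesEntriesMatrix]

/-- The set of idempotents. -/
private def RHE (P : Λ → I → G) : Set (I × G × Λ) := {x | reesMul P x x = x}

private lemma RH_mem_E (P : Λ → I → G) {x : I × G × Λ} :
    x ∈ RHE P ↔ x.2.1 * P x.2.2 x.1 = 1 := by
  constructor
  · intro h
    have h2 : x.2.1 * P x.2.2 x.1 * x.2.1 = x.2.1 :=
      congrArg (fun z : I × G × Λ => z.2.1) h
    exact mul_right_cancel (h2.trans (one_mul x.2.1).symm)
  · intro h
    have h1 : x.2.1 * P x.2.2 x.1 * x.2.1 = x.2.1 := by rw [h, one_mul]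
    show (x.1, x.2.1 * P x.2.2 x.1 * x.2.1, x.2.2) = x
    rw [h1]

private lemma RH_E_middle (P : Λ → I → G) {x : I × G × Λ} (h : x ∈ RHE P) :
    x.2.1 ∈ Subgroup.closure (reesEntries P) := by
  have h1 : x.2.1 = (P x.2.2 x.1)⁻¹ := eq_inv_of_mul_eq_one_left ((RH_mem_E P).mp h)
  rw [h1]
  exact inv_mem (Subgroup.subset_closure ⟨x.2.2, x.1, rfl⟩)

private lemma RH_MClos_mem (P : Λ → I → G) {x : I × G × Λ}
    (h : CSClosure (reesMul P) id (RHE P) x) :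
    x.2.1 ∈ Subgroup.closure (reesEntries P) := by
  induction h with
  | base hx => exact RH_E_middle P hx
  | mul hx hy ihx ihy =>
    exact mul_mem (mul_mem ihx (Subgroup.subset_closure ⟨_, _, rfl⟩)) ihy
  | inv hx ih => exact ih

private lemma RH_MClos_of_mem (P : Λ → I → G) (iI : I) (lL : Λ)
    (hrow : ∀ j : I, P lL j = 1) (hcol : ∀ m : Λ, P m iI = 1)
    (x : I × G × Λ) (hx : x.2.1 ∈ Subgroup.closure (reesEntries P)) :
    CSClosure (reesMul P) id (RHE P) x := by
  have eR : ∀ i : I, ((i, (1 : G), lL) : I × G × Λ) ∈ RHE P :=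
    fun i => (RH_mem_E P).mpr (by simp [hrow])
  have eC : ∀ l : Λ, ((iI, (1 : G), l) : I × G × Λ) ∈ RHE P :=
    fun l => (RH_mem_E P).mpr (by simp [hcol])
  have eG : ∀ (l : Λ) (i : I), ((i, (P l i)⁻¹, l) : I × G × Λ) ∈ RHE P :=
    fun l i => (RH_mem_E P).mpr (by simp)
  have key : ∀ g ∈ Subgroup.closure (reesEntries P),
      CSClosure (reesMul P) id (RHE P) (iI, g, lL) ∧
        CSClosure (reesMul P) id (RHE P) (iI, g⁻¹, lL) := by
    intro g hg
    induction hg using Subgroup.closure_induction with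
    | mem y hy =>
      obtain ⟨l, i, rfl⟩ := hy
      constructor
      · have h1 : reesMul P (iI, (1 : G), l) (i, (1 : G), lL) = (iI, P l i, lL) := by
          simp [reesMul]
        exact h1 ▸ CSClosure.mul (.base (eC l)) (.base (eR i))
      · have h1 : reesMul P (reesMul P (iI, (1 : G), lL) (i, (P l i)⁻¹, l))
            (iI, (1 : G), lL) = (iI, (P l i)⁻¹, lL) := by
          simp [reesMul, hrow, hcol]
        exact h1 ▸ CSClosure.mul (CSClosure.mul (.base (eR iI)) (.base (eG l i)))
          (.base (eC lL))
    | one =>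
      refine ⟨.base (eR iI), ?_⟩
      rw [inv_one]
      exact .base (eR iI)
    | mul a b ha hb iha ihb =>
      constructor
      · have h1 : reesMul P (iI, a, lL) (iI, b, lL) = (iI, a * b, lL) := by
          simp [reesMul, hcol]
        exact h1 ▸ CSClosure.mul iha.1 ihb.1
      · have h1 : reesMul P (iI, b⁻¹, lL) (iI, a⁻¹, lL) = (iI, (a * b)⁻¹, lL) := by
          simp [reesMul, hcol, mul_inv_rev]
        exact h1 ▸ CSClosure.mul ihb.2 iha.2
    | inv a ha iha =>
      refine ⟨iha.2, ?_⟩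
      rw [inv_inv]
      exact iha.1
  have h1 : reesMul P (reesMul P (x.1, (1 : G), lL) (iI, x.2.1, lL)) (iI, (1 : G), x.2.2)
      = x := by
    simp [reesMul, hrow, hcol]
  exact h1 ▸ CSClosure.mul (CSClosure.mul (.base (eR x.1)) ((key _ hx).1))
    (.base (eC x.2.2))

private lemma RH_MClos_map (P : Λ → I → G) {Φ : I × G × Λ → I × G × Λ}
    (hmul : ∀ x y, Φ (reesMul P x y) = reesMul P (Φ x) (Φ y)) {x : I × G × Λ}
    (h : CSClosure (reesMul P) id (RHE P) x) :
    CSClosure (reesMul P) id (RHE P) (Φ x) := by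
  induction h with
  | @base z hz =>
    refine .base ?_
    have hz' : reesMul P z z = z := hz
    show reesMul P (Φ z) (Φ z) = Φ z
    rw [← hmul, hz']
  | mul hx hy ihx ihy =>
    rw [hmul]
    exact .mul ihx ihy
  | inv hx ih => exact ih

private lemma RH_up (P : Λ → I → G)
    (X₀ : Set (I × ↥(Subgroup.closure (reesEntries P)) × Λ))
    {s : I × ↥(Subgroup.closure (reesEntries P)) × Λ}
    (h : CSClosure (reesMul (reesEntriesMatrix P)) (reesInv (reesEntriesMatrix P)) X₀ s) :
    CSClosure (reesMul P) (reesInv P) (RHiota P '' X₀) (RHiota P s) := by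
  induction h with
  | base hx => exact .base ⟨_, hx, rfl⟩
  | mul hx hy ihx ihy =>
    rw [RH_iota_mul]
    exact .mul ihx ihy
  | inv hx ih =>
    rw [RH_iota_inv]
    exact .inv ih

private lemma RH_down (P : Λ → I → G)
    (X₀ : Set (I × ↥(Subgroup.closure (reesEntries P)) × Λ))
    {t : I × G × Λ}
    (h : CSClosure (reesMul P) (reesInv P) (RHiota P '' X₀) t) :
    ∃ s, CSClosure (reesMul (reesEntriesMatrix P)) (reesInv (reesEntriesMatrix P)) X₀ s ∧
      RHiota P s = t := by
  induction h with
  | base hx =>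
    obtain ⟨s, hs, heq⟩ := hx
    exact ⟨s, .base hs, heq⟩
  | mul hx hy ihx ihy =>
    obtain ⟨a, ha, ha2⟩ := ihx
    obtain ⟨b, hb, hb2⟩ := ihy
    subst ha2; subst hb2
    exact ⟨_, .mul ha hb, RH_iota_mul P a b⟩
  | inv hx ih =>
    obtain ⟨a, ha, ha2⟩ := ih
    subst ha2
    exact ⟨_, .inv ha, RH_iota_inv P a⟩

open Classical in
private noncomputable def RHlift (P : Λ → I → G)
    (φ : I × ↥(Subgroup.closure (reesEntries P)) × Λ →
      I × ↥(Subgroup.closure (reesEntries P)) × Λ)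
    (x : I × G × Λ) : I × G × Λ :=
  if h : x.2.1 ∈ Subgroup.closure (reesEntries P) then
    RHiota P (φ (x.1, ⟨x.2.1, h⟩, x.2.2))
  else x

private lemma RHlift_iota (P : Λ → I → G)
    (φ : I × ↥(Subgroup.closure (reesEntries P)) × Λ →
      I × ↥(Subgroup.closure (reesEntries P)) × Λ)
    (s : I × ↥(Subgroup.closure (reesEntries P)) × Λ) :
    RHlift P φ (RHiota P s) = RHiota P (φ s) := by
  unfold RHlift
  rw [dif_pos (show (RHiota P s).2.1 ∈ Subgroup.closure (reesEntries P) from s.2.1.2)]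
  have h0 : (((RHiota P s).1, (⟨(RHiota P s).2.1, s.2.1.2⟩ :
      ↥(Subgroup.closure (reesEntries P))), (RHiota P s).2.2)) = s :=
    Prod.ext_iff.mpr ⟨rfl, Prod.ext_iff.mpr ⟨Subtype.ext rfl, rfl⟩⟩
  exact congrArg (fun z => RHiota P (φ z)) h0

private lemma RH_part2 (P : Λ → I → G) (iI : I) (lL : Λ)
    (hrow : ∀ j : I, P lL j = 1) (hcol : ∀ m : Λ, P m iI = 1)
    (hhom : IsCSHomogeneous (reesMul P) (reesInv P)) :
    IsCSHomogeneous (reesMul (reesEntriesMatrix P)) (reesInv (reesEntriesMatrix P)) := by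
  classical
  intro X Y φ hφbij hφmul
  have hXset : {t | CSClosure (reesMul P) (reesInv P) (↑(X.image (RHiota P))) t}
      = RHiota P '' {s | CSClosure (reesMul (reesEntriesMatrix P))
          (reesInv (reesEntriesMatrix P)) (↑X) s} := by
    ext t
    constructor
    · intro h
      rw [Finset.coe_image] at h
      obtain ⟨s, hs, heq⟩ := RH_down P (↑X) h
      exact ⟨s, hs, heq⟩
    · rintro ⟨s, hs, rfl⟩
      have h0 := RH_up P (↑X) hs
      rwa [← Finset.coe_image] at h0
  have hYset : {t | CSClosure (reesMul P) (reesInv P) (↑(Y.image (RHiota P))) t}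
      = RHiota P '' {s | CSClosure (reesMul (reesEntriesMatrix P))
          (reesInv (reesEntriesMatrix P)) (↑Y) s} := by
    ext t
    constructor
    · intro h
      rw [Finset.coe_image] at h
      obtain ⟨s, hs, heq⟩ := RH_down P (↑Y) h
      exact ⟨s, hs, heq⟩
    · rintro ⟨s, hs, rfl⟩
      have h0 := RH_up P (↑Y) hs
      rwa [← Finset.coe_image] at h0
  have hbij' : Set.BijOn (RHlift P φ)
      {t | CSClosure (reesMul P) (reesInv P) (↑(X.image (RHiota P))) t}
      {t | CSClosure (reesMul P) (reesInv P) (↑(Y.image (RHiota P))) t} := by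
    rw [hXset, hYset]
    refine ⟨?_, ?_, ?_⟩
    · rintro t ⟨s, hs, rfl⟩
      rw [RHlift_iota]
      exact ⟨φ s, hφbij.1 hs, rfl⟩
    · rintro t ⟨a, ha, rfl⟩ t' ⟨b, hb, rfl⟩ h
      rw [RHlift_iota, RHlift_iota] at h
      exact congrArg (RHiota P) (hφbij.2.1 ha hb (RH_iota_inj P h))
    · rintro t ⟨b, hb, rfl⟩
      obtain ⟨a, ha, hab⟩ := hφbij.2.2 hb
      refine ⟨RHiota P a, ⟨a, ha, rfl⟩, ?_⟩
      rw [RHlift_iota, hab]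
  have hmul' : ∀ x y : I × G × Λ,
      CSClosure (reesMul P) (reesInv P) (↑(X.image (RHiota P))) x →
      CSClosure (reesMul P) (reesInv P) (↑(X.image (RHiota P))) y →
      RHlift P φ (reesMul P x y) = reesMul P (RHlift P φ x) (RHlift P φ y) := by
    intro x y hx hy
    have hx2 : x ∈ RHiota P '' {s | CSClosure (reesMul (reesEntriesMatrix P))
        (reesInv (reesEntriesMatrix P)) (↑X) s} := by rw [← hXset]; exact hx
    have hy2 : y ∈ RHiota P '' {s | CSClosure (reesMul (reesEntriesMatrix P))
        (reesInv (reesEntriesMatrix P)) (↑X) s} := by rw [← hXset]; exact hy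
    obtain ⟨a, ha, rfl⟩ := hx2
    obtain ⟨b, hb, rfl⟩ := hy2
    rw [← RH_iota_mul, RHlift_iota, RHlift_iota, RHlift_iota, hφmul a b ha hb,
      RH_iota_mul]
  obtain ⟨Φ, hΦbij, hΦmul, hΦext⟩ :=
    hhom (X.image (RHiota P)) (Y.image (RHiota P)) (RHlift P φ) hbij' hmul'
  have hΦΨ : ∀ t, Φ ((Equiv.ofBijective Φ hΦbij).symm t) = t :=
    fun t => (Equiv.ofBijective Φ hΦbij).apply_symm_apply t
  set Ψ : I × G × Λ → I × G × Λ := fun t => (Equiv.ofBijective Φ hΦbij).symm t with hΨ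
  have hΨmul : ∀ x y, Ψ (reesMul P x y) = reesMul P (Ψ x) (Ψ y) := by
    intro x y
    apply hΦbij.1
    rw [hΦmul]
    show Φ ((Equiv.ofBijective Φ hΦbij).symm _) = reesMul P (Φ ((Equiv.ofBijective Φ hΦbij).symm _)) (Φ ((Equiv.ofBijective Φ hΦbij).symm _))
    rw [hΦΨ, hΦΨ, hΦΨ]
  have hmemΦ : ∀ s : I × ↥(Subgroup.closure (reesEntries P)) × Λ,
      (Φ (RHiota P s)).2.1 ∈ Subgroup.closure (reesEntries P) :=
    fun s => RH_MClos_mem P (RH_MClos_map P hΦmul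
      (RH_MClos_of_mem P iI lL hrow hcol _ s.2.1.2))
  have hmemΨ : ∀ s : I × ↥(Subgroup.closure (reesEntries P)) × Λ,
      (Ψ (RHiota P s)).2.1 ∈ Subgroup.closure (reesEntries P) :=
    fun s => RH_MClos_mem P (RH_MClos_map P hΨmul
      (RH_MClos_of_mem P iI lL hrow hcol _ s.2.1.2))
  set Φt : I × ↥(Subgroup.closure (reesEntries P)) × Λ →
      I × ↥(Subgroup.closure (reesEntries P)) × Λ :=
    fun s => ((Φ (RHiota P s)).1, ⟨(Φ (RHiota P s)).2.1, hmemΦ s⟩, (Φ (RHiota P s)).2.2)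
    with hΦt
  have hkey : ∀ s, RHiota P (Φt s) = Φ (RHiota P s) := fun s => rfl
  refine ⟨Φt, ⟨?_, ?_⟩, ?_, ?_⟩
  · intro a b h
    have h2 : Φ (RHiota P a) = Φ (RHiota P b) := by
      rw [← hkey, ← hkey, h]
    exact RH_iota_inj P (hΦbij.1 h2)
  · intro t
    refine ⟨((Ψ (RHiota P t)).1, ⟨(Ψ (RHiota P t)).2.1, hmemΨ t⟩, (Ψ (RHiota P t)).2.2), ?_⟩
    apply RH_iota_inj P
    rw [hkey]
    show Φ (Ψ (RHiota P t)) = RHiota P t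
    exact hΦΨ _
  · intro x y
    apply RH_iota_inj P
    rw [hkey, RH_iota_mul, hΦmul, RH_iota_mul, hkey, hkey]
  · intro s hs
    apply RH_iota_inj P
    rw [hkey]
    have h1 : CSClosure (reesMul P) (reesInv P) (↑(X.image (RHiota P))) (RHiota P s) := by
      have h0 : RHiota P s ∈ RHiota P '' {s | CSClosure (reesMul (reesEntriesMatrix P))
          (reesInv (reesEntriesMatrix P)) (↑X) s} := ⟨s, hs, rfl⟩
      rw [← hXset] at h0
      exact h0
    rw [hΦext _ h1, RHlift_iota]

end RHProof


/-- If a normalised Rees matrix semigroup `S = M[G;I,Λ;P]` over a countable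
group `G` with countable nonempty index sets is homogeneous as a completely simple
semigroup, then `G` is a homogeneous group and `⟨E(S)⟩` is homogeneous as a completely
simple semigroup. -/
theorem rees_homogeneous_imp {G I Λ : Type*} [Group G] [Countable G]
    [Countable I] [Countable Λ] [Nonempty I] [Nonempty Λ]
    (P : Λ → I → G) (iI : I) (lL : Λ)
    (hrow : ∀ j : I, P lL j = 1) (hcol : ∀ m : Λ, P m iI = 1)
    (hhom : IsCSHomogeneous (reesMul P) (reesInv P)) :
    IsHomogeneousGroup G ∧
      IsCSHomogeneous (reesMul (reesEntriesMatrix P)) (reesInv (reesEntriesMatrix P)) := by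
  exact ⟨RH_part1 P iI lL hrow hcol hhom, RH_part2 P iI lL hrow hcol hhom⟩
end

section
/- Let G be a countable group, I and Λ nonempty countable sets, P : Λ × I → G a matrix, and let S = M[G;I,Λ;P] be a normalised Rees matrix semigroup such that the set G^P is a subgroup of G which is either trivial or cyclic of prime order (i.e. a simple abelian group). Then S is homogeneous as a completely simple semigroup if and only if G is a homogeneous group, the subsemigroup ⟨E(S)⟩ generated by the idempotents of S is homogeneous as a completely simple semigroup, and G^P is a characteristic subgroup of G. -/
/-! ### Auxiliary lemmas -/

section Aux

variable {G I Λ : Type*} [Group G]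

variable (P : Λ → I → G)

lemma reesMul_assoc' (x y z : I × G × Λ) :
    reesMul P (reesMul P x y) z = reesMul P x (reesMul P y z) := by
  simp [reesMul, mul_assoc]

lemma idem_mid {f : I × G × Λ} (hf : reesMul P f f = f) : f.2.1 = (P f.2.2 f.1)⁻¹ := by
  obtain ⟨i, g, l⟩ := f
  simp only [reesMul, Prod.mk.injEq] at hf
  have hmid : g * P l i * g = g := hf.2.1
  calc g = (g * P l i * g) * g⁻¹ * (P l i)⁻¹ * (P l i) * g * g⁻¹ * (P l i)⁻¹ := by group
  _ = g * g⁻¹ * (P l i)⁻¹ * (P l i) * g * g⁻¹ * (P l i)⁻¹ := by rw [hmid]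
  _ = (P l i)⁻¹ := by group

lemma rees_e_mul {f t : I × G × Λ} (hf : reesMul P f f = f) (h1 : f.1 = t.1) :
    reesMul P f t = t := by
  have hm := idem_mid P hf
  obtain ⟨i, g, l⟩ := f; obtain ⟨j, m, μ⟩ := t
  simp only at hm h1
  subst h1; subst hm
  simp only [reesMul, Prod.mk.injEq]
  exact ⟨by trivial, by group, by trivial⟩

lemma rees_mul_e {f t : I × G × Λ} (hf : reesMul P f f = f) (h1 : f.2.2 = t.2.2) :
    reesMul P t f = t := by
  have hm := idem_mid P hf
  obtain ⟨i, g, l⟩ := f; obtain ⟨j, m, μ⟩ := t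
  simp only at hm h1
  subst h1; subst hm
  simp only [reesMul, Prod.mk.injEq]
  exact ⟨by trivial, by group, by trivial⟩

lemma rees_key (t t' : I × G × Λ) (h : t.1 = t'.1) :
    reesMul P t (reesMul P (reesInv P t) t') = t' := by
  obtain ⟨i, g, l⟩ := t; obtain ⟨j, m, μ⟩ := t'
  simp only at h; subst h
  simp only [reesMul, reesInv, Prod.mk.injEq]
  exact ⟨by trivial, by group, by trivial⟩

lemma rees_key' (t t' : I × G × Λ) (h : t.2.2 = t'.2.2) :
    reesMul P (reesMul P t' (reesInv P t)) t = t' := by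
  obtain ⟨i, g, l⟩ := t; obtain ⟨j, m, μ⟩ := t'
  simp only at h; subst h
  simp only [reesMul, reesInv, Prod.mk.injEq]
  exact ⟨by trivial, by group, by trivial⟩

def wfun (i0 : I) (l0 : Λ) (t : I × G × Λ) : G :=
  P l0 t.1 * t.2.1 * P t.2.2 i0 * (P l0 i0)⁻¹

def cfun (i0 : I) (l0 : Λ) (l : Λ) (j : I) : G :=
  P l0 i0 * (P l i0)⁻¹ * P l j * (P l0 j)⁻¹

lemma wfun_mul (i0 : I) (l0 : Λ) (x y : I × G × Λ) :
    wfun P i0 l0 (reesMul P x y)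
      = wfun P i0 l0 x * cfun P i0 l0 x.2.2 y.1 * wfun P i0 l0 y := by
  simp only [wfun, cfun, reesMul]
  group

lemma wfun_inv (i0 : I) (l0 : Λ) (x : I × G × Λ) :
    wfun P i0 l0 (reesInv P x)
      = (cfun P i0 l0 x.2.2 x.1)⁻¹ * (wfun P i0 l0 x)⁻¹ * (cfun P i0 l0 x.2.2 x.1)⁻¹ := by
  simp only [wfun, cfun, reesInv]
  group

lemma P_decomp (i0 : I) (l0 : Λ) (l : Λ) (j : I) :
    P l j = P l i0 * (P l0 i0)⁻¹ * cfun P i0 l0 l j * P l0 j := by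
  simp only [cfun]
  group

lemma sandwich (i0 : I) (l0 : Λ) (t : I × G × Λ) :
    reesMul P (reesMul P (i0, (P l0 i0)⁻¹, l0) t) (i0, (P l0 i0)⁻¹, l0)
      = (i0, (P l0 i0)⁻¹ * wfun P i0 l0 t, l0) := by
  simp only [reesMul, wfun, Prod.mk.injEq]
  exact ⟨by trivial, by group, by trivial⟩

lemma equiv_symm_mul {α : Type*} (op : α → α → α) (Φ : α → α) (hb : Function.Bijective Φ)
    (hm : ∀ x y, Φ (op x y) = op (Φ x) (Φ y)) (x y : α) :
    (Equiv.ofBijective Φ hb).symm (op x y)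
      = op ((Equiv.ofBijective Φ hb).symm x) ((Equiv.ofBijective Φ hb).symm y) := by
  set E := Equiv.ofBijective Φ hb with hE
  apply E.injective
  calc E (E.symm (op x y)) = op x y := E.apply_symm_apply _
  _ = op (E (E.symm x)) (E (E.symm y)) := by rw [E.apply_symm_apply, E.apply_symm_apply]
  _ = E (op (E.symm x) (E.symm y)) := (hm _ _).symm

variable {P}

variable {T : Set (I × G × Λ)}
  (hTm : ∀ a ∈ T, ∀ b ∈ T, reesMul P a b ∈ T)
  (hTi : ∀ a ∈ T, reesInv P a ∈ T)
  {φ : I × G × Λ → I × G × Λ}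
  (hφ : ∀ a ∈ T, ∀ b ∈ T, φ (reesMul P a b) = reesMul P (φ a) (φ b))
  (hinj : Set.InjOn φ T)

include hTm hTi hφ in
lemma coord_fst_of_eq {t t' : I × G × Λ} (ht : t ∈ T) (ht' : t' ∈ T) (h : t.1 = t'.1) :
    (φ t).1 = (φ t').1 := by
  have hz : reesMul P (reesInv P t) t' ∈ T := hTm _ (hTi _ ht) _ ht'
  have : φ t' = reesMul P (φ t) (φ (reesMul P (reesInv P t) t')) := by
    conv_lhs => rw [← rees_key P t t' h]
    exact hφ _ ht _ hz
  rw [this]; rfl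

include hTm hTi hφ in
lemma coord_thd_of_eq {t t' : I × G × Λ} (ht : t ∈ T) (ht' : t' ∈ T) (h : t.2.2 = t'.2.2) :
    (φ t).2.2 = (φ t').2.2 := by
  have hz : reesMul P t' (reesInv P t) ∈ T := hTm _ ht' _ (hTi _ ht)
  have : φ t' = reesMul P (φ (reesMul P t' (reesInv P t))) (φ t) := by
    conv_lhs => rw [← rees_key' P t t' h]
    exact hφ _ hz _ ht
  rw [this]; rfl

include hTm hTi hφ hinj in
lemma coord_fst_rev {t t' : I × G × Λ} (ht : t ∈ T) (ht' : t' ∈ T)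
    (h : (φ t).1 = (φ t').1) : t.1 = t'.1 := by
  set z := reesMul P (reesInv P t) t' with hzdef
  have hz : z ∈ T := hTm _ (hTi _ ht) _ ht'
  have htz : reesMul P t z ∈ T := hTm _ ht _ hz
  have h1 : φ (reesMul P t z) = reesMul P (φ t) (φ z) := hφ _ ht _ hz
  have hei : reesMul P t (reesInv P t) ∈ T := hTm _ ht _ (hTi _ ht)
  have hf : φ (reesMul P t (reesInv P t)) = reesMul P (φ t) (φ (reesInv P t)) :=
    hφ _ ht _ (hTi _ ht)
  have hidem : reesMul P (φ (reesMul P t (reesInv P t))) (φ (reesMul P t (reesInv P t)))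
      = φ (reesMul P t (reesInv P t)) := by
    rw [← hφ _ hei _ hei]
    congr 1
    obtain ⟨i, g, l⟩ := t
    simp only [reesMul, reesInv, Prod.mk.injEq]
    exact ⟨by trivial, by group, by trivial⟩
  have hf1 : (φ (reesMul P t (reesInv P t))).1 = (φ t').1 := by
    rw [hf, ← h]; rfl
  have h2 : reesMul P (φ t) (φ z) = reesMul P (φ (reesMul P t (reesInv P t))) (φ t') := by
    rw [hf, hzdef, hφ _ (hTi _ ht) _ ht']
    exact (reesMul_assoc' P _ _ _).symm
  have h3 : φ (reesMul P t z) = φ t' := by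
    rw [h1, h2, rees_e_mul P hidem hf1]
  have := hinj htz ht' h3
  have : (reesMul P t z).1 = t'.1 := by rw [this]
  simpa [reesMul] using this

include hTm hTi hφ hinj in
lemma coord_thd_rev {t t' : I × G × Λ} (ht : t ∈ T) (ht' : t' ∈ T)
    (h : (φ t).2.2 = (φ t').2.2) : t.2.2 = t'.2.2 := by
  set z := reesMul P t' (reesInv P t) with hzdef
  have hz : z ∈ T := hTm _ ht' _ (hTi _ ht)
  have htz : reesMul P z t ∈ T := hTm _ hz _ ht
  have h1 : φ (reesMul P z t) = reesMul P (φ z) (φ t) := hφ _ hz _ ht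
  have hei : reesMul P (reesInv P t) t ∈ T := hTm _ (hTi _ ht) _ ht
  have hf : φ (reesMul P (reesInv P t) t) = reesMul P (φ (reesInv P t)) (φ t) :=
    hφ _ (hTi _ ht) _ ht
  have hidem : reesMul P (φ (reesMul P (reesInv P t) t)) (φ (reesMul P (reesInv P t) t))
      = φ (reesMul P (reesInv P t) t) := by
    rw [← hφ _ hei _ hei]
    congr 1
    obtain ⟨i, g, l⟩ := t
    simp only [reesMul, reesInv, Prod.mk.injEq]
    exact ⟨by trivial, by group, by trivial⟩
  have hf3 : (φ (reesMul P (reesInv P t) t)).2.2 = (φ t').2.2 := by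
    rw [hf, ← h]; rfl
  have h2 : reesMul P (φ z) (φ t) = reesMul P (φ t') (φ (reesMul P (reesInv P t) t)) := by
    rw [hf, hzdef, hφ _ ht' _ (hTi _ ht)]
    exact reesMul_assoc' P _ _ _
  have h3 : φ (reesMul P z t) = φ t' := by
    rw [h1, h2, rees_mul_e P hidem hf3]
  have := hinj htz ht' h3
  have : (reesMul P z t).2.2 = t'.2.2 := by rw [this]
  simpa [reesMul] using this

end Aux

section Aux2

variable {G I Λ : Type*} [Group G] {P : Λ → I → G} {iI : I} {lL : Λ}

lemma mid_mem (hrow : ∀ j, P lL j = 1) (hcol : ∀ m, P m iI = 1)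
    {K : Subgroup G} (hK : (K : Set G) = reesEntries P)
    {Φ : I × G × Λ → I × G × Λ} (hm : ∀ x y, Φ (reesMul P x y) = reesMul P (Φ x) (Φ y)) :
    ∀ x : I × G × Λ, x.2.1 ∈ K → (Φ x).2.1 ∈ K := by
  have hPK : ∀ (m : Λ) (j : I), P m j ∈ K := by
    intro m j
    have : P m j ∈ (K : Set G) := by rw [hK]; exact ⟨m, j, rfl⟩
    exact this
  have hidem : ∀ f : I × G × Λ, reesMul P f f = f → (Φ f).2.1 ∈ K := by
    intro f hf
    have : reesMul P (Φ f) (Φ f) = Φ f := by rw [← hm, hf]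
    rw [idem_mid P this]
    exact inv_mem (hPK _ _)
  rintro ⟨i, g, l⟩ hg
  have : g ∈ (K : Set G) := hg
  rw [hK] at this
  obtain ⟨m, j, hmj⟩ := this
  have hdec : (i, g, l) = reesMul P (reesMul P (reesMul P (i, 1, lL) (iI, 1, m)) (j, 1, lL))
      (iI, 1, l) := by
    simp only [reesMul, Prod.mk.injEq, hrow, hcol, hmj]
    exact ⟨by trivial, by group, by trivial⟩
  have h1 : reesMul P (i, (1:G), lL) (i, 1, lL) = (i, 1, lL) := by
    simp [reesMul, hrow]
  have h2 : reesMul P (iI, (1:G), m) (iI, 1, m) = (iI, 1, m) := by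
    simp [reesMul, hcol]
  have h3 : reesMul P (j, (1:G), lL) (j, 1, lL) = (j, 1, lL) := by
    simp [reesMul, hrow]
  have h4 : reesMul P (iI, (1:G), l) (iI, 1, l) = (iI, 1, l) := by
    simp [reesMul, hcol]
  rw [hdec, hm, hm, hm]
  simp only [reesMul]
  exact K.mul_mem (K.mul_mem (K.mul_mem (K.mul_mem (K.mul_mem (K.mul_mem
    (hidem _ h1) (hPK _ _)) (hidem _ h2)) (hPK _ _)) (hidem _ h3)) (hPK _ _)) (hidem _ h4)

lemma corner_sandwich (hrow : ∀ j, P lL j = 1) (hcol : ∀ m, P m iI = 1) (x : I × G × Λ) :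
    reesMul P (reesMul P (iI, (1:G), lL) x) (iI, 1, lL) = (iI, x.2.1, lL) := by
  obtain ⟨i, g, l⟩ := x
  simp [reesMul, hrow, hcol]

lemma clos_corner (hrow : ∀ j, P lL j = 1) (hcol : ∀ m, P m iI = 1) (SA : Set G) :
    {s | CSClosure (reesMul P) (reesInv P)
        (insert (iI, 1, lL) ((fun a => (iI, a, lL)) '' SA)) s}
      = {s : I × G × Λ | s.1 = iI ∧ s.2.2 = lL ∧ s.2.1 ∈ Subgroup.closure SA} := by
  ext s
  constructor
  · intro h
    induction h with
    | base hx =>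
      rcases hx with h | ⟨a, ha, rfl⟩
      · rw [h]; exact ⟨rfl, rfl, one_mem _⟩
      · exact ⟨rfl, rfl, Subgroup.subset_closure ha⟩
    | mul hx hy ihx ihy =>
      obtain ⟨hx1, hx3, hxm⟩ := ihx
      obtain ⟨hy1, hy3, hym⟩ := ihy
      refine ⟨hx1, hy3, ?_⟩
      simp only [reesMul]
      rw [hx3, hy1, hrow]
      simpa using mul_mem hxm hym
    | inv hx ihx =>
      obtain ⟨hx1, hx3, hxm⟩ := ihx
      refine ⟨hx1, hx3, ?_⟩
      simp only [reesInv]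
      rw [hx3, hx1, hrow]
      simpa using inv_mem hxm
  · rintro ⟨h1, h3, hm⟩
    obtain ⟨i, g, l⟩ := s
    simp only at h1 h3
    subst h1; subst h3
    simp only at hm
    refine Subgroup.closure_induction (fun a ha => ?_) ?_ (fun a b _ _ pa pb => ?_)
      (fun a _ pa => ?_) hm
    · exact CSClosure.base (Or.inr ⟨a, ha, rfl⟩)
    · exact CSClosure.base (Or.inl rfl)
    · have := CSClosure.mul pa pb
      simpa [reesMul, hrow] using this
    · have := CSClosure.inv pa
      simpa [reesInv, hrow] using this

end Aux2

/-- Let `S = M[G;I,Λ;P]` be a normalised Rees matrix semigroup over a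
countable group `G` (countable nonempty index sets) such that the entry set `G^P` is a
subgroup of `G` which is trivial or cyclic of prime order. Then `S` is homogeneous as a
completely simple semigroup iff `G` is homogeneous, `⟨E(S)⟩` is homogeneous as a
completely simple semigroup, and `G^P` is a characteristic subgroup of `G`. -/
theorem rees_homogeneous_iff_of_simple_abelian {G I Λ : Type*} [Group G] [Countable G]
    [Countable I] [Countable Λ] [Nonempty I] [Nonempty Λ]
    (P : Λ → I → G) (iI : I) (lL : Λ)
    (hrow : ∀ j : I, P lL j = 1) (hcol : ∀ m : Λ, P m iI = 1)
    (K : Subgroup G) (hK : (K : Set G) = reesEntries P)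
    (hsimple : K = ⊥ ∨ ∃ p : ℕ, p.Prime ∧ Nat.card K = p) :
    IsCSHomogeneous (reesMul P) (reesInv P) ↔
      IsHomogeneousGroup G ∧
      IsCSHomogeneous (reesMul (reesEntriesMatrix P)) (reesInv (reesEntriesMatrix P)) ∧
      (∀ θ : G ≃* G, θ '' reesEntries P = reesEntries P) := by
  classical
  have hPmem : ∀ (m : Λ) (j : I), P m j ∈ K := fun m j => by
    have : P m j ∈ (K : Set G) := by rw [hK]; exact ⟨m, j, rfl⟩
    exact this
  have hKfin : (K : Set G).Finite := by
    rcases hsimple with h | ⟨p, hp, hcard⟩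
    · rw [h, Subgroup.coe_bot]; exact Set.finite_singleton 1
    · haveI : Finite ↥K := Nat.finite_of_card_ne_zero (by rw [hcard]; exact hp.ne_zero)
      haveI : Finite ↥(K : Set G) := ‹Finite ↥K›
      exact Set.toFinite _
  constructor
  · intro hS
    refine ⟨?_, ?_, ?_⟩
    · -- G is homogeneous
      intro A B hA hB e
      obtain ⟨SA, hSA, hSAfin⟩ := (Subgroup.fg_iff _).mp hA
      obtain ⟨SB, hSB, hSBfin⟩ := (Subgroup.fg_iff _).mp hB
      set X : Finset (I × G × Λ) :=
        insert (iI, 1, lL) (hSAfin.toFinset.image (fun a => (iI, a, lL))) with hXdef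
      set Y : Finset (I × G × Λ) :=
        insert (iI, 1, lL) (hSBfin.toFinset.image (fun a => (iI, a, lL))) with hYdef
      have hXcoe : (X : Set (I × G × Λ))
          = insert (iI, 1, lL) ((fun a => (iI, a, lL)) '' SA) := by
        simp [hXdef]
      have hYcoe : (Y : Set (I × G × Λ))
          = insert (iI, 1, lL) ((fun a => (iI, a, lL)) '' SB) := by
        simp [hYdef]
      have hclX : {s | CSClosure (reesMul P) (reesInv P) (X : Set (I × G × Λ)) s}
          = {s : I × G × Λ | s.1 = iI ∧ s.2.2 = lL ∧ s.2.1 ∈ A} := by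
        rw [hXcoe, clos_corner hrow hcol, hSA]
      have hclY : {s | CSClosure (reesMul P) (reesInv P) (Y : Set (I × G × Λ)) s}
          = {s : I × G × Λ | s.1 = iI ∧ s.2.2 = lL ∧ s.2.1 ∈ B} := by
        rw [hYcoe, clos_corner hrow hcol, hSB]
      set ebar : G → G := fun g => if h : g ∈ A then ((e ⟨g, h⟩ : B) : G) else 1 with hebar
      set φ : I × G × Λ → I × G × Λ := fun s => (iI, ebar s.2.1, lL) with hφdef
      have hφA : ∀ (g : G) (hg : g ∈ A), ebar g = ((e ⟨g, hg⟩ : B) : G) :=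
        fun g hg => dif_pos hg
      have hbij : Set.BijOn φ {s | CSClosure (reesMul P) (reesInv P) (X : Set _) s}
          {s | CSClosure (reesMul P) (reesInv P) (Y : Set _) s} := by
        rw [hclX, hclY]
        refine ⟨?_, ?_, ?_⟩
        · rintro ⟨i, g, l⟩ ⟨h1, h3, hg⟩
          simp only at h1 h3 hg
          refine ⟨rfl, rfl, ?_⟩
          simp only [hφdef]
          rw [hφA g hg]
          exact (e ⟨g, hg⟩).2
        · rintro ⟨i, g, l⟩ ⟨h1, h3, hg⟩ ⟨i', g', l'⟩ ⟨h1', h3', hg'⟩ heq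
          simp only at h1 h3 hg h1' h3' hg'
          simp only [hφdef, Prod.mk.injEq] at heq
          have hge : ebar g = ebar g' := heq.2.1
          rw [hφA g hg, hφA g' hg'] at hge
          have h5 := e.injective (Subtype.ext hge)
          have h6 : g = g' := congrArg Subtype.val h5
          simp only [Prod.mk.injEq]
          exact ⟨h1.trans h1'.symm, h6, h3.trans h3'.symm⟩
        · rintro ⟨i, g, l⟩ ⟨h1, h3, hg⟩
          simp only at h1 h3 hg
          refine ⟨(iI, ((e.symm ⟨g, hg⟩ : A) : G), lL),
            ⟨rfl, rfl, (e.symm ⟨g, hg⟩).2⟩, ?_⟩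
          simp only [hφdef]
          rw [hφA _ (e.symm ⟨g, hg⟩).2]
          simp only [Prod.mk.injEq]
          refine ⟨h1.symm, ?_, h3.symm⟩
          simp
      have hmult : ∀ x y : I × G × Λ,
          CSClosure (reesMul P) (reesInv P) (X : Set _) x →
          CSClosure (reesMul P) (reesInv P) (X : Set _) y →
          φ (reesMul P x y) = reesMul P (φ x) (φ y) := by
        intro x y hx hy
        have hx' : x ∈ {s : I × G × Λ | s.1 = iI ∧ s.2.2 = lL ∧ s.2.1 ∈ A} := hclX ▸ hx
        have hy' : y ∈ {s : I × G × Λ | s.1 = iI ∧ s.2.2 = lL ∧ s.2.1 ∈ A} := hclX ▸ hy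
        obtain ⟨hx1, hx3, hxA⟩ := hx'
        obtain ⟨hy1, hy3, hyA⟩ := hy'
        simp only [hφdef, reesMul, Prod.mk.injEq]
        refine ⟨by trivial, ?_, by trivial⟩
        rw [hx3, hy1, hrow iI]
        simp only [mul_one]
        rw [hφA _ hxA, hφA _ hyA, hφA _ (mul_mem hxA hyA)]
        have : (⟨x.2.1 * y.2.1, mul_mem hxA hyA⟩ : A) = ⟨x.2.1, hxA⟩ * ⟨y.2.1, hyA⟩ := rfl
        rw [this, map_mul]
        rfl
      obtain ⟨Φ, hΦbij, hΦmul, hΦext⟩ := hS X Y φ hbij hmult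
      have he0X : (iI, (1:G), lL) ∈ {s | CSClosure (reesMul P) (reesInv P) (X : Set _) s} := by
        rw [hclX]; exact ⟨rfl, rfl, one_mem A⟩
      have hΦe0 : Φ (iI, (1:G), lL) = (iI, 1, lL) := by
        rw [hΦext _ he0X]
        simp only [hφdef]
        rw [hφA 1 (one_mem A)]
        have : (⟨(1:G), one_mem A⟩ : A) = 1 := rfl
        rw [this, map_one]
        rfl
      have hform : ∀ g, Φ (iI, g, lL) = (iI, (Φ (iI, g, lL)).2.1, lL) := by
        intro g
        calc Φ (iI, g, lL)
            = Φ (reesMul P (reesMul P (iI,1,lL) (iI,g,lL)) (iI,1,lL)) := by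
              rw [corner_sandwich hrow hcol]
        _ = reesMul P (reesMul P (Φ (iI,1,lL)) (Φ (iI,g,lL))) (Φ (iI,1,lL)) := by
              rw [hΦmul, hΦmul]
        _ = (iI, (Φ (iI,g,lL)).2.1, lL) := by
              rw [hΦe0]; exact corner_sandwich hrow hcol _
      set θf : G → G := fun g => (Φ (iI, g, lL)).2.1 with hθf
      have hθmul : ∀ g h, θf (g * h) = θf g * θf h := by
        intro g h
        have h1 : Φ (iI, g * h, lL) = reesMul P (Φ (iI,g,lL)) (Φ (iI,h,lL)) := by
          have h2 := hΦmul (iI,g,lL) (iI,h,lL)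
          rw [show reesMul P (iI,g,lL) (iI,h,lL) = (iI, g*h, lL) by
            simp [reesMul, hrow]] at h2
          exact h2
        have e2 : (Φ (iI,g,lL)).2.2 = lL := by rw [hform g]
        have e1 : (Φ (iI,h,lL)).1 = iI := by rw [hform h]
        show (Φ (iI, g*h, lL)).2.1 = θf g * θf h
        rw [h1]
        simp only [reesMul]
        rw [e2, e1, hrow, mul_one]
      have hθbij : Function.Bijective θf := by
        constructor
        · intro g h hgh
          have : Φ (iI, g, lL) = Φ (iI, h, lL) := by
            rw [hform g, hform h]
            simp only [hθf] at hgh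
            rw [hgh]
          have := hΦbij.injective this
          simpa using congrArg (fun s => s.2.1) this
        · intro h
          obtain ⟨x, hx⟩ := hΦbij.surjective (iI, h, lL)
          refine ⟨x.2.1, ?_⟩
          have h1 : Φ (reesMul P (reesMul P (iI,1,lL) x) (iI,1,lL))
              = (iI, h, lL) := by
            rw [hΦmul, hΦmul, hΦe0, hx, corner_sandwich hrow hcol]
          rw [corner_sandwich hrow hcol] at h1
          simp only [hθf]
          rw [h1]
      set ΦG : G ≃* G := MulEquiv.mk' (Equiv.ofBijective θf hθbij) hθmul with hΦG
      refine ⟨ΦG, fun a => ?_⟩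
      have haX : (iI, (a : G), lL)
          ∈ {s | CSClosure (reesMul P) (reesInv P) (X : Set _) s} := by
        rw [hclX]; exact ⟨rfl, rfl, a.2⟩
      have : ΦG (a : G) = (Φ (iI, (a:G), lL)).2.1 := rfl
      rw [this, hΦext _ haX]
      simp only [hφdef]
      rw [hφA _ a.2]
    · -- idempotent-generated part is homogeneous
      intro XK YK φK hbijK hmultK
      have hK'' : ((Subgroup.closure (reesEntries P) : Subgroup G) : Set G)
          = reesEntries P := by
        rw [show Subgroup.closure (reesEntries P) = K by rw [← hK, Subgroup.closure_eq], hK]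
      set ι : I × ↥(Subgroup.closure (reesEntries P)) × Λ → I × G × Λ :=
        fun t => (t.1, (t.2.1 : G), t.2.2) with hι
      have hιinj : Function.Injective ι := by
        rintro ⟨i,k,l⟩ ⟨i',k',l'⟩ h
        simp only [hι, Prod.mk.injEq] at h
        simp only [Prod.mk.injEq]
        exact ⟨h.1, Subtype.ext h.2.1, h.2.2⟩
      have hmul_ι : ∀ a b, ι (reesMul (reesEntriesMatrix P) a b) = reesMul P (ι a) (ι b) := by
        rintro ⟨i,k,l⟩ ⟨j,m,μ⟩
        simp [hι, reesMul, reesEntriesMatrix]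
      have hinv_ι : ∀ a, ι (reesInv (reesEntriesMatrix P) a) = reesInv P (ι a) := by
        rintro ⟨i,k,l⟩
        simp [hι, reesInv, reesEntriesMatrix]
      have hclos : ∀ Z : Finset (I × ↥(Subgroup.closure (reesEntries P)) × Λ),
          {s | CSClosure (reesMul P) (reesInv P) ((Z.image ι : Finset _) : Set _) s}
            = ι '' {t | CSClosure (reesMul (reesEntriesMatrix P))
                (reesInv (reesEntriesMatrix P)) (Z : Set _) t} := by
        intro Z
        ext s
        constructor
        · intro h
          induction h with
          | base hx =>
            rw [Finset.coe_image] at hx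
            obtain ⟨t, ht, rfl⟩ := hx
            exact ⟨t, CSClosure.base ht, rfl⟩
          | mul hx hy ihx ihy =>
            obtain ⟨a, ha, rfl⟩ := ihx
            obtain ⟨b, hb, rfl⟩ := ihy
            exact ⟨_, CSClosure.mul ha hb, hmul_ι a b⟩
          | inv hx ihx =>
            obtain ⟨a, ha, rfl⟩ := ihx
            exact ⟨_, CSClosure.inv ha, hinv_ι a⟩
        · rintro ⟨t, ht, rfl⟩
          induction ht with
          | base hx => exact CSClosure.base (by rw [Finset.coe_image]; exact ⟨_, hx, rfl⟩)
          | mul hx hy ihx ihy => rw [hmul_ι]; exact CSClosure.mul ihx ihy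
          | inv hx ihx => rw [hinv_ι]; exact CSClosure.inv ihx
      set φS : I × G × Λ → I × G × Λ :=
        fun s => if h : s.2.1 ∈ Subgroup.closure (reesEntries P)
          then ι (φK (s.1, ⟨s.2.1, h⟩, s.2.2)) else s with hφS
      have hφSι : ∀ t, φS (ι t) = ι (φK t) := by
        rintro ⟨i,k,l⟩
        simp only [hφS, hι]
        rw [dif_pos k.2]
      have hbijS : Set.BijOn φS
          {s | CSClosure (reesMul P) (reesInv P) ((XK.image ι : Finset _) : Set _) s}
          {s | CSClosure (reesMul P) (reesInv P) ((YK.image ι : Finset _) : Set _) s} := by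
        rw [hclos XK, hclos YK]
        refine ⟨?_, ?_, ?_⟩
        · rintro s ⟨t, ht, rfl⟩
          rw [hφSι]
          exact ⟨φK t, hbijK.mapsTo ht, rfl⟩
        · rintro s ⟨t, ht, rfl⟩ s' ⟨t', ht', rfl⟩ heq
          rw [hφSι, hφSι] at heq
          rw [hbijK.injOn ht ht' (hιinj heq)]
        · rintro s ⟨t', ht', rfl⟩
          obtain ⟨t, ht, htt⟩ := hbijK.surjOn ht'
          exact ⟨ι t, ⟨t, ht, rfl⟩, by rw [hφSι, htt]⟩
      have hmultS : ∀ x y : I × G × Λ,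
          CSClosure (reesMul P) (reesInv P) ((XK.image ι : Finset _) : Set _) x →
          CSClosure (reesMul P) (reesInv P) ((XK.image ι : Finset _) : Set _) y →
          φS (reesMul P x y) = reesMul P (φS x) (φS y) := by
        intro x y hx hy
        have hx' := (hclos XK) ▸ (show x ∈ {s | CSClosure _ _ _ s} from hx)
        have hy' := (hclos XK) ▸ (show y ∈ {s | CSClosure _ _ _ s} from hy)
        obtain ⟨a, ha, rfl⟩ := hx'
        obtain ⟨b, hb, rfl⟩ := hy'
        rw [← hmul_ι, hφSι, hφSι, hφSι, hmultK a b ha hb, hmul_ι]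
      obtain ⟨Φ, hΦbij, hΦmul, hΦext⟩ := hS (XK.image ι) (YK.image ι) φS hbijS hmultS
      have hmid : ∀ x : I × G × Λ, x.2.1 ∈ Subgroup.closure (reesEntries P) →
          (Φ x).2.1 ∈ Subgroup.closure (reesEntries P) :=
        mid_mem hrow hcol hK'' hΦmul
      set E := Equiv.ofBijective Φ hΦbij with hE
      have hEmul := equiv_symm_mul (reesMul P) Φ hΦbij hΦmul
      have hmidsymm : ∀ x : I × G × Λ, x.2.1 ∈ Subgroup.closure (reesEntries P) →
          (E.symm x).2.1 ∈ Subgroup.closure (reesEntries P) :=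
        mid_mem hrow hcol hK'' hEmul
      set Φ' : I × ↥(Subgroup.closure (reesEntries P)) × Λ
          → I × ↥(Subgroup.closure (reesEntries P)) × Λ :=
        fun t => ((Φ (ι t)).1, ⟨(Φ (ι t)).2.1, hmid (ι t) t.2.1.2⟩, (Φ (ι t)).2.2) with hΦ'
      have hιΦ' : ∀ t, ι (Φ' t) = Φ (ι t) := fun t => rfl
      refine ⟨Φ', ⟨?_, ?_⟩, ?_, ?_⟩
      · intro t t' h
        have : Φ (ι t) = Φ (ι t') := by rw [← hιΦ', ← hιΦ', h]
        exact hιinj (hΦbij.injective this)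
      · intro t'
        have hst : (E.symm (ι t')).2.1 ∈ Subgroup.closure (reesEntries P) := hmidsymm (ι t') t'.2.1.2
        refine ⟨((E.symm (ι t')).1, ⟨(E.symm (ι t')).2.1, hst⟩, (E.symm (ι t')).2.2), ?_⟩
        apply hιinj
        rw [hιΦ']
        have : ι ((E.symm (ι t')).1,
            (⟨(E.symm (ι t')).2.1, hst⟩ : ↥(Subgroup.closure (reesEntries P))),
            (E.symm (ι t')).2.2) = E.symm (ι t') := rfl
        rw [this]
        exact E.apply_symm_apply (ι t')
      · intro x y
        apply hιinj
        rw [hιΦ', hmul_ι, hmul_ι, hιΦ', hιΦ', hΦmul]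
      · intro t ht
        apply hιinj
        have hmem : ι t ∈ {s | CSClosure (reesMul P) (reesInv P)
            ((XK.image ι : Finset _) : Set _) s} := by
          rw [hclos XK]; exact ⟨t, ht, rfl⟩
        rw [hιΦ', hΦext _ hmem, hφSι]
    · -- entries characteristic
      have main : ∀ θ : G ≃* G, ∀ k, k ∈ K → θ k ∈ K := by
        intro θ k hk
        set D := Subgroup.map θ.toMonoidHom K with hD
        have hDfin : (D : Set G).Finite := by
          rw [hD, Subgroup.coe_map]
          exact hKfin.image _
        set X : Finset (I × G × Λ) :=
          insert (iI, 1, lL) (hKfin.toFinset.image (fun a => (iI, a, lL))) with hXdef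
        set Y : Finset (I × G × Λ) :=
          insert (iI, 1, lL) (hDfin.toFinset.image (fun a => (iI, a, lL))) with hYdef
        have hclX : {s | CSClosure (reesMul P) (reesInv P) (X : Set (I × G × Λ)) s}
            = {s : I × G × Λ | s.1 = iI ∧ s.2.2 = lL ∧ s.2.1 ∈ K} := by
          rw [show (X : Set (I × G × Λ))
              = insert (iI, 1, lL) ((fun a => (iI, a, lL)) '' (K : Set G)) by simp [hXdef]]
          rw [clos_corner hrow hcol, Subgroup.closure_eq]
        have hclY : {s | CSClosure (reesMul P) (reesInv P) (Y : Set (I × G × Λ)) s}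
            = {s : I × G × Λ | s.1 = iI ∧ s.2.2 = lL ∧ s.2.1 ∈ D} := by
          rw [show (Y : Set (I × G × Λ))
              = insert (iI, 1, lL) ((fun a => (iI, a, lL)) '' (D : Set G)) by simp [hYdef]]
          rw [clos_corner hrow hcol, Subgroup.closure_eq]
        set φ : I × G × Λ → I × G × Λ := fun s => (iI, θ s.2.1, lL) with hφdef
        have hbij : Set.BijOn φ {s | CSClosure (reesMul P) (reesInv P) (X : Set _) s}
            {s | CSClosure (reesMul P) (reesInv P) (Y : Set _) s} := by
          rw [hclX, hclY]
          refine ⟨?_, ?_, ?_⟩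
          · rintro ⟨i, g, l⟩ ⟨h1, h3, hg⟩
            exact ⟨rfl, rfl, ⟨g, hg, rfl⟩⟩
          · rintro ⟨i, g, l⟩ ⟨h1, h3, hg⟩ ⟨i', g', l'⟩ ⟨h1', h3', hg'⟩ heq
            simp only at h1 h3 hg h1' h3' hg'
            simp only [hφdef, Prod.mk.injEq] at heq
            simp only [Prod.mk.injEq]
            exact ⟨h1.trans h1'.symm, θ.injective heq.2.1, h3.trans h3'.symm⟩
          · rintro ⟨i, g, l⟩ ⟨h1, h3, hg⟩
            simp only at h1 h3 hg
            obtain ⟨k', hk', hk2⟩ := hg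
            refine ⟨(iI, k', lL), ⟨rfl, rfl, hk'⟩, ?_⟩
            simp only [hφdef, Prod.mk.injEq]
            exact ⟨h1.symm, hk2, h3.symm⟩
        have hmult : ∀ x y : I × G × Λ,
            CSClosure (reesMul P) (reesInv P) (X : Set _) x →
            CSClosure (reesMul P) (reesInv P) (X : Set _) y →
            φ (reesMul P x y) = reesMul P (φ x) (φ y) := by
          intro x y hx hy
          have hx' : x ∈ {s : I × G × Λ | s.1 = iI ∧ s.2.2 = lL ∧ s.2.1 ∈ K} := hclX ▸ hx
          have hy' : y ∈ {s : I × G × Λ | s.1 = iI ∧ s.2.2 = lL ∧ s.2.1 ∈ K} := hclX ▸ hy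
          obtain ⟨hx1, hx3, hxK⟩ := hx'
          obtain ⟨hy1, hy3, hyK⟩ := hy' 
          simp only [hφdef, reesMul, Prod.mk.injEq]
          refine ⟨by trivial, ?_, by trivial⟩
          rw [hx3, hy1, hrow iI]
          simp only [mul_one]
          rw [map_mul]
        obtain ⟨Φ, hΦbij, hΦmul, hΦext⟩ := hS X Y φ hbij hmult
        have h1 : (Φ (iI, k, lL)).2.1 ∈ K := mid_mem hrow hcol hK hΦmul (iI, k, lL) hk
        have hkmem : (iI, k, lL) ∈ {s | CSClosure (reesMul P) (reesInv P) (X : Set _) s} := by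
          rw [hclX]; exact ⟨rfl, rfl, hk⟩
        have h2 : Φ (iI, k, lL) = (iI, θ k, lL) := by
          rw [hΦext _ hkmem]
        rw [h2] at h1
        exact h1
      intro θ
      rw [← hK]
      ext g
      constructor
      · rintro ⟨k, hk, rfl⟩
        exact main θ k hk
      · intro hg
        exact ⟨θ.symm g, main θ.symm g hg, θ.apply_symm_apply g⟩
  · -- backward direction
    rintro ⟨hG, hE, hchar⟩
    intro X Y φ hbij hmult
    by_cases hne : {s | CSClosure (reesMul P) (reesInv P) (X : Set (I × G × Λ)) s}.Nonempty
    case neg =>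
      have hT1e : {s | CSClosure (reesMul P) (reesInv P) (X : Set (I × G × Λ)) s} = ∅ :=
        Set.not_nonempty_iff_eq_empty.mp hne
      refine ⟨id, Function.bijective_id, fun x y => rfl, fun x hx => absurd
        (show x ∈ {s | CSClosure (reesMul P) (reesInv P) (X : Set (I × G × Λ)) s} from hx)
        (by rw [hT1e]; exact Set.notMem_empty x)⟩
    case pos =>
    obtain ⟨t0, ht0⟩ := hne
    set T1 := {s | CSClosure (reesMul P) (reesInv P) (X : Set (I × G × Λ)) s} with hT1def
    have hT1m : ∀ a ∈ T1, ∀ b ∈ T1, reesMul P a b ∈ T1 := fun a ha b hb =>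
      CSClosure.mul ha hb
    have hT1i : ∀ a ∈ T1, reesInv P a ∈ T1 := fun a ha => CSClosure.inv ha
    have hφm : ∀ a ∈ T1, ∀ b ∈ T1, φ (reesMul P a b) = reesMul P (φ a) (φ b) :=
      fun a ha b hb => hmult a b ha hb
    have hφinj : Set.InjOn φ T1 := hbij.injOn
    set I1 : Finset I := X.image Prod.fst with hI1def
    set Λ1 : Finset Λ := X.image (fun t => t.2.2) with hΛ1def
    have hcoords : ∀ t ∈ T1, t.1 ∈ I1 ∧ t.2.2 ∈ Λ1 := by
      intro t ht
      induction ht with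
      | base hx => exact ⟨Finset.mem_image_of_mem _ hx, Finset.mem_image_of_mem _ hx⟩
      | mul hx hy ihx ihy => exact ⟨ihx.1, ihy.2⟩
      | inv hx ihx => exact ihx
    have hI1 : ∀ i ∈ I1, ∃ t, t ∈ T1 ∧ t.1 = i := by
      intro i hi
      obtain ⟨x, hx, rfl⟩ := Finset.mem_image.mp hi
      exact ⟨x, CSClosure.base hx, rfl⟩
    have hΛ1 : ∀ l ∈ Λ1, ∃ t, t ∈ T1 ∧ t.2.2 = l := by
      intro l hl
      obtain ⟨x, hx, rfl⟩ := Finset.mem_image.mp hl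
      exact ⟨x, CSClosure.base hx, rfl⟩
    have hαex : ∀ t ∈ T1, ∀ t' ∈ T1, t.1 = t'.1 → (φ t).1 = (φ t').1 :=
      fun t ht t' ht' h => coord_fst_of_eq hT1m hT1i hφm ht ht' h
    have hβex : ∀ t ∈ T1, ∀ t' ∈ T1, t.2.2 = t'.2.2 → (φ t).2.2 = (φ t').2.2 :=
      fun t ht t' ht' h => coord_thd_of_eq hT1m hT1i hφm ht ht' h
    set α : I → I := fun i => if h : ∃ t, t ∈ T1 ∧ t.1 = i then (φ h.choose).1 else i
      with hαdef
    set β : Λ → Λ := fun l => if h : ∃ t, t ∈ T1 ∧ t.2.2 = l then (φ h.choose).2.2 else l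
      with hβdef
    have hαspec : ∀ t, t ∈ T1 → (φ t).1 = α t.1 := by
      intro t ht
      have hex : ∃ s, s ∈ T1 ∧ s.1 = t.1 := ⟨t, ht, rfl⟩
      rw [hαdef]
      simp only
      rw [dif_pos hex]
      exact hαex t ht hex.choose hex.choose_spec.1 hex.choose_spec.2.symm
    have hβspec : ∀ t, t ∈ T1 → (φ t).2.2 = β t.2.2 := by
      intro t ht
      have hex : ∃ s, s ∈ T1 ∧ s.2.2 = t.2.2 := ⟨t, ht, rfl⟩
      rw [hβdef]
      simp only
      rw [dif_pos hex]
      exact hβex t ht hex.choose hex.choose_spec.1 hex.choose_spec.2.symm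
    have hαinjOn : ∀ i ∈ I1, ∀ i' ∈ I1, α i = α i' → i = i' := by
      intro i hi i' hi' h
      obtain ⟨t, ht, rfl⟩ := hI1 i hi
      obtain ⟨t', ht', rfl⟩ := hI1 i' hi'
      have h1 : (φ t).1 = (φ t').1 := by rw [hαspec t ht, hαspec t' ht', h]
      exact coord_fst_rev hT1m hT1i hφm hφinj ht ht' h1
    have hβinjOn : ∀ l ∈ Λ1, ∀ l' ∈ Λ1, β l = β l' → l = l' := by
      intro l hl l' hl' h
      obtain ⟨t, ht, rfl⟩ := hΛ1 l hl
      obtain ⟨t', ht', rfl⟩ := hΛ1 l' hl'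
      have h1 : (φ t).2.2 = (φ t').2.2 := by rw [hβspec t ht, hβspec t' ht', h]
      exact coord_thd_rev hT1m hT1i hφm hφinj ht ht' h1
    -- base point
    obtain ⟨i0, g0, l0⟩ := t0
    have hi0 : i0 ∈ I1 := (hcoords _ ht0).1
    have hl0 : l0 ∈ Λ1 := (hcoords _ ht0).2
    have he0T : (i0, (P l0 i0)⁻¹, l0) ∈ T1 := by
      have h := hT1m _ ht0 _ (hT1i _ ht0)
      have heq : reesMul P (i0, g0, l0) (reesInv P (i0, g0, l0))
          = (i0, (P l0 i0)⁻¹, l0) := by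
        simp only [reesMul, reesInv, Prod.mk.injEq]
        exact ⟨by trivial, by group, by trivial⟩
      rwa [heq] at h
    -- the subgroup V generated by the w-values, and the partial isomorphism τ
    set Ω : Set G := (wfun P i0 l0 '' (X : Set (I × G × Λ)))
        ∪ ((fun p : Λ × I => cfun P i0 l0 p.1 p.2) ''
            ((Λ1 ×ˢ I1 : Finset (Λ × I)) : Set (Λ × I))) with hΩdef
    have hΩfin : Ω.Finite :=
      Set.Finite.union (X.finite_toSet.image _) ((Λ1 ×ˢ I1).finite_toSet.image _)
    have hcΩ : ∀ l ∈ Λ1, ∀ j ∈ I1, cfun P i0 l0 l j ∈ Ω := by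
      intro l hl j hj
      exact Or.inr ⟨(l, j), Finset.mem_coe.mpr (Finset.mem_product.mpr ⟨hl, hj⟩), rfl⟩
    have hwΩ : ∀ x ∈ X, wfun P i0 l0 x ∈ Ω := fun x hx => Or.inl ⟨x, hx, rfl⟩
    have hwV : ∀ t ∈ T1, wfun P i0 l0 t ∈ Subgroup.closure Ω := by
      intro t ht
      induction ht with
      | base hx => exact Subgroup.subset_closure (hwΩ _ hx)
      | mul hx hy ihx ihy =>
        rw [wfun_mul]
        exact mul_mem (mul_mem ihx (Subgroup.subset_closure
          (hcΩ _ (hcoords _ hx).2 _ (hcoords _ hy).1))) ihy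
      | inv hx ihx =>
        rw [wfun_inv]
        exact mul_mem (mul_mem (inv_mem (Subgroup.subset_closure
          (hcΩ _ (hcoords _ hx).2 _ (hcoords _ hx).1))) (inv_mem ihx))
          (inv_mem (Subgroup.subset_closure (hcΩ _ (hcoords _ hx).2 _ (hcoords _ hx).1)))
    have hV0one : (i0, (P l0 i0)⁻¹ * (1:G), l0) ∈ T1 := by
      rw [mul_one]; exact he0T
    have hV0mul : ∀ a b : G, (i0, (P l0 i0)⁻¹ * a, l0) ∈ T1 →
        (i0, (P l0 i0)⁻¹ * b, l0) ∈ T1 → (i0, (P l0 i0)⁻¹ * (a * b), l0) ∈ T1 := by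
      intro a b ha hb
      have h := hT1m _ ha _ hb
      have heq : reesMul P (i0, (P l0 i0)⁻¹ * a, l0) (i0, (P l0 i0)⁻¹ * b, l0)
          = (i0, (P l0 i0)⁻¹ * (a * b), l0) := by
        simp only [reesMul, Prod.mk.injEq]
        exact ⟨by trivial, by group, by trivial⟩
      rwa [heq] at h
    have hV0inv : ∀ a : G, (i0, (P l0 i0)⁻¹ * a, l0) ∈ T1 →
        (i0, (P l0 i0)⁻¹ * a⁻¹, l0) ∈ T1 := by
      intro a ha
      have h := hT1i _ ha
      have heq : reesInv P (i0, (P l0 i0)⁻¹ * a, l0) = (i0, (P l0 i0)⁻¹ * a⁻¹, l0) := by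
        simp only [reesInv, Prod.mk.injEq]
        exact ⟨by trivial, by group, by trivial⟩
      rwa [heq] at h
    have hwgen : ∀ t ∈ T1, (i0, (P l0 i0)⁻¹ * wfun P i0 l0 t, l0) ∈ T1 := by
      intro t ht
      have h := hT1m _ (hT1m _ he0T _ ht) _ he0T
      rwa [sandwich P i0 l0 t] at h
    have hcV0 : ∀ l ∈ Λ1, ∀ j ∈ I1, (i0, (P l0 i0)⁻¹ * cfun P i0 l0 l j, l0) ∈ T1 := by
      intro l hl j hj
      obtain ⟨x, hx, hxl⟩ := hΛ1 l hl
      obtain ⟨y, hy, hyj⟩ := hI1 j hj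
      have hxy : reesMul P x y ∈ T1 := hT1m _ hx _ hy
      have hc : cfun P i0 l0 l j
          = (wfun P i0 l0 x)⁻¹ * wfun P i0 l0 (reesMul P x y) * (wfun P i0 l0 y)⁻¹ := by
        rw [wfun_mul, hxl, hyj]
        group
      rw [hc]
      exact hV0mul _ _ (hV0mul _ _ (hV0inv _ (hwgen x hx)) (hwgen _ hxy))
        (hV0inv _ (hwgen y hy))
    have hVmem : ∀ g ∈ Subgroup.closure Ω, (i0, (P l0 i0)⁻¹ * g, l0) ∈ T1 := by
      intro g hg
      refine Subgroup.closure_induction (fun a ha => ?_) hV0one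
        (fun a b _ _ pa pb => hV0mul a b pa pb) (fun a _ pa => hV0inv a pa) hg
      rcases ha with ⟨x, hx, rfl⟩ | ⟨⟨l, j⟩, hlj, rfl⟩
      · exact hwgen x (CSClosure.base hx)
      · have h := Finset.mem_product.mp (Finset.mem_coe.mp hlj)
        exact hcV0 l h.1 j h.2
    -- image of the base idempotent
    have hidem0 : reesMul P (i0, (P l0 i0)⁻¹, l0) (i0, (P l0 i0)⁻¹, l0)
        = (i0, (P l0 i0)⁻¹, l0) := by
      simp only [reesMul, Prod.mk.injEq]
      exact ⟨by trivial, by group, by trivial⟩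
    have hφe0 : φ (i0, (P l0 i0)⁻¹, l0) = (α i0, (P (β l0) (α i0))⁻¹, β l0) := by
      have hidem2 : reesMul P (φ (i0, (P l0 i0)⁻¹, l0)) (φ (i0, (P l0 i0)⁻¹, l0))
          = φ (i0, (P l0 i0)⁻¹, l0) := by
        rw [← hφm _ he0T _ he0T, hidem0]
      have hmid := idem_mid P hidem2
      have h1 : (φ (i0, (P l0 i0)⁻¹, l0)).1 = α i0 := hαspec _ he0T
      have h3 : (φ (i0, (P l0 i0)⁻¹, l0)).2.2 = β l0 := hβspec _ he0T
      rw [h1, h3] at hmid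
      exact Prod.ext h1 (Prod.ext hmid h3)
    set τ : G → G :=
      fun g => P (β l0) (α i0) * (φ (i0, (P l0 i0)⁻¹ * g, l0)).2.1 with hτdef
    have hτspec : ∀ g : G, τ g = P (β l0) (α i0) * (φ (i0, (P l0 i0)⁻¹ * g, l0)).2.1 :=
      fun g => rfl
    have hτone : τ 1 = 1 := by
      rw [hτspec]
      rw [show ((i0, (P l0 i0)⁻¹ * (1:G), l0) : I × G × Λ) = (i0, (P l0 i0)⁻¹, l0) by
        rw [mul_one]]
      rw [hφe0]
      group
    have hτmul : ∀ a b : G, (i0, (P l0 i0)⁻¹ * a, l0) ∈ T1 →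
        (i0, (P l0 i0)⁻¹ * b, l0) ∈ T1 → τ (a * b) = τ a * τ b := by
      intro a b ha hb
      have h1 := hφm _ ha _ hb
      have heq : reesMul P (i0, (P l0 i0)⁻¹ * a, l0) (i0, (P l0 i0)⁻¹ * b, l0)
          = (i0, (P l0 i0)⁻¹ * (a * b), l0) := by
        simp only [reesMul, Prod.mk.injEq]
        exact ⟨by trivial, by group, by trivial⟩
      rw [heq] at h1
      have ha3 : (φ (i0, (P l0 i0)⁻¹ * a, l0)).2.2 = β l0 := hβspec _ ha
      have hb1 : (φ (i0, (P l0 i0)⁻¹ * b, l0)).1 = α i0 := hαspec _ hb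
      have h2 := congrArg (fun s : I × G × Λ => s.2.1) h1
      simp only [reesMul] at h2
      rw [ha3, hb1] at h2
      rw [hτspec, hτspec, hτspec, h2]
      group
    have hτinv : ∀ a : G, (i0, (P l0 i0)⁻¹ * a, l0) ∈ T1 → τ a⁻¹ = (τ a)⁻¹ := by
      intro a ha
      have h := hτmul a a⁻¹ ha (hV0inv a ha)
      rw [mul_inv_cancel, hτone] at h
      exact eq_inv_of_mul_eq_one_right h.symm
    have hτw : ∀ t ∈ T1, τ (wfun P i0 l0 t) = wfun P (α i0) (β l0) (φ t) := by
      intro t ht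
      have hm1 : φ (reesMul P (reesMul P (i0, (P l0 i0)⁻¹, l0) t) (i0, (P l0 i0)⁻¹, l0))
          = reesMul P (reesMul P (φ (i0, (P l0 i0)⁻¹, l0)) (φ t))
              (φ (i0, (P l0 i0)⁻¹, l0)) := by
        rw [hφm _ (hT1m _ he0T _ ht) _ he0T, hφm _ he0T _ ht]
      rw [hφe0, sandwich P i0 l0 t] at hm1
      have h2 := congrArg (fun s : I × G × Λ => s.2.1) hm1
      rw [hτspec, h2]
      have h3 := congrArg (fun s : I × G × Λ => s.2.1) (sandwich P (α i0) (β l0) (φ t))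
      rw [h3]
      group
    have hτdomeq : ∀ a b : G, (i0, (P l0 i0)⁻¹ * a, l0) ∈ T1 →
        (i0, (P l0 i0)⁻¹ * b, l0) ∈ T1 → τ a = τ b → a = b := by
      intro a b ha hb h
      rw [hτspec, hτspec] at h
      have hmid : (φ (i0, (P l0 i0)⁻¹ * a, l0)).2.1 = (φ (i0, (P l0 i0)⁻¹ * b, l0)).2.1 :=
        mul_left_cancel h
      have hφab : φ (i0, (P l0 i0)⁻¹ * a, l0) = φ (i0, (P l0 i0)⁻¹ * b, l0) := by
        refine Prod.ext ?_ (Prod.ext hmid ?_)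
        · rw [hαspec _ ha, hαspec _ hb]
        · rw [hβspec _ ha, hβspec _ hb]
      have h4 := hφinj ha hb hφab
      have h5 := congrArg (fun s : I × G × Λ => s.2.1) h4
      simp only at h5
      exact mul_left_cancel h5
    have hτΩ : ∀ g ∈ Subgroup.closure Ω, τ g ∈ Subgroup.closure (τ '' Ω) := by
      intro g hg
      refine Subgroup.closure_induction (fun a ha => Subgroup.subset_closure ⟨a, ha, rfl⟩)
        (by rw [hτone]; exact one_mem _)
        (fun a b hha hhb pa pb => by
          rw [hτmul a b (hVmem a hha) (hVmem b hhb)]; exact mul_mem pa pb)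
        (fun a hha pa => by rw [hτinv a (hVmem a hha)]; exact inv_mem pa) hg
    set θhom : ↥(Subgroup.closure Ω) →* ↥(Subgroup.closure (τ '' Ω)) :=
      MonoidHom.mk' (fun v => ⟨τ ↑v, hτΩ ↑v v.2⟩)
        (fun a b => Subtype.ext (hτmul ↑a ↑b (hVmem _ a.2) (hVmem _ b.2))) with hθhom
    have hθbij : Function.Bijective θhom := by
      constructor
      · intro a b h
        have h1 : τ ↑a = τ ↑b := congrArg Subtype.val h
        exact Subtype.ext (hτdomeq _ _ (hVmem _ a.2) (hVmem _ b.2) h1)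
      · rintro ⟨v', hv'⟩
        have h1 : ∃ v ∈ Subgroup.closure Ω, τ v = v' := by
          refine Subgroup.closure_induction ?_ ?_ ?_ ?_ hv'
          · rintro x ⟨a, ha, rfl⟩
            exact ⟨a, Subgroup.subset_closure ha, rfl⟩
          · exact ⟨1, one_mem _, hτone⟩
          · rintro x y hx hy ⟨a, haV, rfl⟩ ⟨b, hbV, rfl⟩
            exact ⟨a * b, mul_mem haV hbV, hτmul a b (hVmem _ haV) (hVmem _ hbV)⟩
          · rintro x hx ⟨a, haV, rfl⟩
            exact ⟨a⁻¹, inv_mem haV, hτinv a (hVmem _ haV)⟩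
        obtain ⟨v, hvV, hv⟩ := h1
        exact ⟨⟨v, hvV⟩, Subtype.ext hv⟩
    have hVfg : (Subgroup.closure Ω).FG := (Subgroup.fg_iff _).mpr ⟨Ω, rfl, hΩfin⟩
    have hV'fg : (Subgroup.closure (τ '' Ω)).FG :=
      (Subgroup.fg_iff _).mpr ⟨τ '' Ω, rfl, hΩfin.image τ⟩
    obtain ⟨θh, hθh⟩ := hG _ _ hVfg hV'fg (MulEquiv.ofBijective θhom hθbij)
    have hθV : ∀ g ∈ Subgroup.closure Ω, θh g = τ g := by
      intro g hg
      exact hθh ⟨g, hg⟩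
    -- θh preserves K
    have hKmem : ∀ g : G, g ∈ K ↔ g ∈ reesEntries P := by
      intro g
      constructor
      · intro h
        have h2 : g ∈ (K : Set G) := h
        rw [hK] at h2
        exact h2
      · intro h
        have h2 : g ∈ (K : Set G) := by rw [hK]; exact h
        exact h2
    have hθKmem : ∀ (θ : G ≃* G) (g : G), g ∈ K → θ g ∈ K := by
      intro θ g hg
      have h1 := hchar θ
      have h2 : θ g ∈ θ '' reesEntries P := ⟨g, (hKmem g).mp hg, rfl⟩
      rw [h1] at h2
      exact (hKmem _).mpr h2
    have hθhK : ∀ g, g ∈ K → θh g ∈ K := fun g => hθKmem θh g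
    have hcV : ∀ l ∈ Λ1, ∀ j ∈ I1, cfun P i0 l0 l j ∈ Subgroup.closure Ω :=
      fun l hl j hj => Subgroup.subset_closure (hcΩ l hl j hj)
    have hτc : ∀ l ∈ Λ1, ∀ j ∈ I1,
        τ (cfun P i0 l0 l j) = cfun P (α i0) (β l0) (β l) (α j) := by
      intro l hl j hj
      obtain ⟨x, hx, hxl⟩ := hΛ1 l hl
      obtain ⟨y, hy, hyj⟩ := hI1 j hj
      have hxy : reesMul P x y ∈ T1 := hT1m _ hx _ hy
      have hc : cfun P i0 l0 l j
          = (wfun P i0 l0 x)⁻¹ * (wfun P i0 l0 (reesMul P x y) * (wfun P i0 l0 y)⁻¹) := by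
        rw [wfun_mul, hxl, hyj]
        group
      rw [hc]
      rw [hτmul _ _ (hV0inv _ (hwgen x hx))
        (hV0mul _ _ (hwgen _ hxy) (hV0inv _ (hwgen y hy)))]
      rw [hτinv _ (hwgen x hx), hτmul _ _ (hwgen _ hxy) (hV0inv _ (hwgen y hy)),
        hτinv _ (hwgen y hy), hτw _ hx, hτw _ hxy, hτw _ hy]
      rw [hφm _ hx _ hy, wfun_mul]
      rw [hβspec _ hx, hαspec _ hy, hxl, hyj]
      group
    have hC1 : ∀ l ∈ Λ1, ∀ j ∈ I1,
        θh (P l j) = (θh (P l i0) * (θh (P l0 i0))⁻¹ * P (β l0) (α i0)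
            * (P (β l) (α i0))⁻¹)
          * P (β l) (α j) * ((P (β l0) (α j))⁻¹ * θh (P l0 j)) := by
      intro l hl j hj
      have hcc : θh (cfun P i0 l0 l j) = cfun P (α i0) (β l0) (β l) (α j) := by
        rw [hθV _ (hcV l hl j hj)]
        exact hτc l hl j hj
      conv_lhs => rw [P_decomp P i0 l0 l j]
      rw [map_mul, map_mul, map_mul, map_inv, hcc]
      simp only [cfun]
      group
    -- finiteness of the entry subgroup
    have hKE : Subgroup.closure (reesEntries P) = K := by rw [← hK, Subgroup.closure_eq]
    have hPKE : ∀ (l : Λ) (i : I), P l i ∈ Subgroup.closure (reesEntries P) :=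
      fun l i => Subgroup.subset_closure ⟨l, i, rfl⟩
    have hKEK : ∀ g : G, g ∈ Subgroup.closure (reesEntries P) ↔ g ∈ K := fun g => by
      rw [hKE]
    haveI hKfinite : Finite ↥K := by
      rcases hsimple with h | ⟨p, hp, hcard⟩
      · haveI : Subsingleton ↥(⊥ : Subgroup G) := ⟨fun a b => Subtype.ext (by
          rw [Subgroup.mem_bot.mp a.2, Subgroup.mem_bot.mp b.2])⟩
        rw [h]
        exact Finite.of_subsingleton
      · exact Nat.finite_of_card_ne_zero (by rw [hcard]; exact hp.ne_zero)
    haveI hKEfinite : Finite ↥(Subgroup.closure (reesEntries P)) := by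
      rw [hKE]; exact hKfinite
    haveI : Fintype ↥(Subgroup.closure (reesEntries P)) := Fintype.ofFinite _
    have hu1KE : ∀ i : I,
        (P (β l0) (α i))⁻¹ * θh (P l0 i) ∈ Subgroup.closure (reesEntries P) :=
      fun i => mul_mem (inv_mem (hPKE _ _))
        ((hKEK _).mpr (hθhK _ ((hKEK _).mp (hPKE _ _))))
    have hv1KE : ∀ l : Λ,
        θh (P l i0) * (θh (P l0 i0))⁻¹ * P (β l0) (α i0) * (P (β l) (α i0))⁻¹
          ∈ Subgroup.closure (reesEntries P) :=
      fun l => mul_mem (mul_mem (mul_mem ((hKEK _).mpr (hθhK _ ((hKEK _).mp (hPKE _ _))))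
        (inv_mem ((hKEK _).mpr (hθhK _ ((hKEK _).mp (hPKE _ _)))))) (hPKE _ _))
        (inv_mem (hPKE _ _))
    set XK : Finset (I × ↥(Subgroup.closure (reesEntries P)) × Λ) :=
      I1 ×ˢ (Finset.univ ×ˢ Λ1) with hXK
    set YK : Finset (I × ↥(Subgroup.closure (reesEntries P)) × Λ) :=
      (I1.image α) ×ˢ (Finset.univ ×ˢ (Λ1.image β)) with hYK
    have hXKmem : ∀ t : I × ↥(Subgroup.closure (reesEntries P)) × Λ,
        t ∈ XK ↔ t.1 ∈ I1 ∧ t.2.2 ∈ Λ1 := by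
      intro t
      simp [hXK, Finset.mem_product]
    have hYKmem : ∀ t : I × ↥(Subgroup.closure (reesEntries P)) × Λ,
        t ∈ YK ↔ t.1 ∈ I1.image α ∧ t.2.2 ∈ Λ1.image β := by
      intro t
      simp [hYK, Finset.mem_product]
    have hclXK : {t | CSClosure (reesMul (reesEntriesMatrix P))
        (reesInv (reesEntriesMatrix P)) (XK : Set _) t} = (XK : Set _) := by
      ext t
      constructor
      · intro h
        induction h with
        | base hx => exact hx
        | mul hx hy ihx ihy =>
          have h1 := (hXKmem _).mp (Finset.mem_coe.mp ihx)
          have h2 := (hXKmem _).mp (Finset.mem_coe.mp ihy)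
          exact Finset.mem_coe.mpr ((hXKmem _).mpr ⟨h1.1, h2.2⟩)
        | inv hx ihx =>
          have h1 := (hXKmem _).mp (Finset.mem_coe.mp ihx)
          exact Finset.mem_coe.mpr ((hXKmem _).mpr h1)
      · exact CSClosure.base
    have hclYK : {t | CSClosure (reesMul (reesEntriesMatrix P))
        (reesInv (reesEntriesMatrix P)) (YK : Set _) t} = (YK : Set _) := by
      ext t
      constructor
      · intro h
        induction h with
        | base hx => exact hx
        | mul hx hy ihx ihy =>
          have h1 := (hYKmem _).mp (Finset.mem_coe.mp ihx)
          have h2 := (hYKmem _).mp (Finset.mem_coe.mp ihy)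
          exact Finset.mem_coe.mpr ((hYKmem _).mpr ⟨h1.1, h2.2⟩)
        | inv hx ihx =>
          have h1 := (hYKmem _).mp (Finset.mem_coe.mp ihx)
          exact Finset.mem_coe.mpr ((hYKmem _).mpr h1)
      · exact CSClosure.base
    set φK : I × ↥(Subgroup.closure (reesEntries P)) × Λ
        → I × ↥(Subgroup.closure (reesEntries P)) × Λ :=
      fun t => (α t.1,
        ⟨((P (β l0) (α t.1))⁻¹ * θh (P l0 t.1)) * θh ↑t.2.1
          * (θh (P t.2.2 i0) * (θh (P l0 i0))⁻¹ * P (β l0) (α i0)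
              * (P (β t.2.2) (α i0))⁻¹),
          mul_mem (mul_mem (hu1KE t.1) ((hKEK _).mpr (hθhK _ ((hKEK _).mp t.2.1.2))))
            (hv1KE t.2.2)⟩,
        β t.2.2) with hφK
    have hφKfst : ∀ t, (φK t).1 = α t.1 := fun t => rfl
    have hφKthd : ∀ t, (φK t).2.2 = β t.2.2 := fun t => rfl
    have hφKmid : ∀ t, ((φK t).2.1 : G)
        = ((P (β l0) (α t.1))⁻¹ * θh (P l0 t.1)) * θh ↑t.2.1
          * (θh (P t.2.2 i0) * (θh (P l0 i0))⁻¹ * P (β l0) (α i0)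
              * (P (β t.2.2) (α i0))⁻¹) := fun t => rfl
    have hbijK : Set.BijOn φK
        {t | CSClosure (reesMul (reesEntriesMatrix P))
          (reesInv (reesEntriesMatrix P)) (XK : Set _) t}
        {t | CSClosure (reesMul (reesEntriesMatrix P))
          (reesInv (reesEntriesMatrix P)) (YK : Set _) t} := by
      rw [hclXK, hclYK]
      refine ⟨?_, ?_, ?_⟩
      · intro t ht
        have h1 := (hXKmem t).mp (Finset.mem_coe.mp ht)
        exact Finset.mem_coe.mpr ((hYKmem _).mpr ⟨Finset.mem_image_of_mem α h1.1,
          Finset.mem_image_of_mem β h1.2⟩)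
      · intro t ht t' ht' heq
        have h1 := (hXKmem t).mp (Finset.mem_coe.mp ht)
        have h1' := (hXKmem t').mp (Finset.mem_coe.mp ht')
        have e1 : α t.1 = α t'.1 := congrArg Prod.fst heq
        have e3 : β t.2.2 = β t'.2.2 := congrArg (fun s => s.2.2) heq
        have hi : t.1 = t'.1 := hαinjOn _ h1.1 _ h1'.1 e1
        have hl : t.2.2 = t'.2.2 := hβinjOn _ h1.2 _ h1'.2 e3
        have e2 : ((φK t).2.1 : G) = ((φK t').2.1 : G) := by
          rw [heq]
        rw [hφKmid, hφKmid, hi, hl] at e2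
        have e4 : θh ↑t.2.1 = θh ↑t'.2.1 := by
          have e5 := mul_right_cancel e2
          exact mul_left_cancel e5
        have e6 : t.2.1 = t'.2.1 := Subtype.ext (θh.injective e4)
        exact Prod.ext hi (Prod.ext e6 hl)
      · intro t' ht'
        have h1' := (hYKmem t').mp (Finset.mem_coe.mp ht')
        obtain ⟨i, hi, hie⟩ := Finset.mem_image.mp h1'.1
        obtain ⟨l, hlm, hle⟩ := Finset.mem_image.mp h1'.2
        have hkK : θh.symm ((((P (β l0) (α i))⁻¹ * θh (P l0 i)))⁻¹ * ↑t'.2.1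
            * (θh (P l i0) * (θh (P l0 i0))⁻¹ * P (β l0) (α i0)
              * (P (β l) (α i0))⁻¹)⁻¹) ∈ Subgroup.closure (reesEntries P) := by
          refine (hKEK _).mpr (hθKmem θh.symm _ ?_)
          exact mul_mem (mul_mem (inv_mem ((hKEK _).mp (hu1KE i))) ((hKEK _).mp t'.2.1.2))
            (inv_mem ((hKEK _).mp (hv1KE l)))
        refine ⟨(i, ⟨_, hkK⟩, l),
          Finset.mem_coe.mpr ((hXKmem _).mpr ⟨hi, hlm⟩), ?_⟩
        refine Prod.ext hie (Prod.ext (Subtype.ext ?_) hle)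
        rw [hφKmid]
        simp only
        rw [MulEquiv.apply_symm_apply]
        group
    have hmultK : ∀ a b : I × ↥(Subgroup.closure (reesEntries P)) × Λ,
        CSClosure (reesMul (reesEntriesMatrix P)) (reesInv (reesEntriesMatrix P))
          (XK : Set _) a →
        CSClosure (reesMul (reesEntriesMatrix P)) (reesInv (reesEntriesMatrix P))
          (XK : Set _) b →
        φK (reesMul (reesEntriesMatrix P) a b)
          = reesMul (reesEntriesMatrix P) (φK a) (φK b) := by
      intro a b ha hb
      have ha' : a ∈ (XK : Set _) := by rw [← hclXK]; exact ha
      have hb' : b ∈ (XK : Set _) := by rw [← hclXK]; exact hb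
      have h1 := (hXKmem a).mp (Finset.mem_coe.mp ha')
      have h2 := (hXKmem b).mp (Finset.mem_coe.mp hb')
      refine Prod.ext rfl (Prod.ext (Subtype.ext ?_) rfl)
      show ((φK (reesMul (reesEntriesMatrix P) a b)).2.1 : G)
        = ((reesMul (reesEntriesMatrix P) (φK a) (φK b)).2.1 : G)
      rw [hφKmid]
      have hmm : ((reesMul (reesEntriesMatrix P) (φK a) (φK b)).2.1 : G)
          = ((φK a).2.1 : G) * P (β a.2.2) (α b.1) * ((φK b).2.1 : G) := rfl
      rw [hmm, hφKmid, hφKmid]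
      have hco : ((reesMul (reesEntriesMatrix P) a b).2.1 : G)
          = ↑a.2.1 * P a.2.2 b.1 * ↑b.2.1 := rfl
      have hco1 : (reesMul (reesEntriesMatrix P) a b).1 = a.1 := rfl
      have hco3 : (reesMul (reesEntriesMatrix P) a b).2.2 = b.2.2 := rfl
      rw [hco, hco1, hco3, map_mul, map_mul]
      rw [hC1 _ h1.2 _ h2.1]
      group
    obtain ⟨ΦK, hΦKbij, hΦKmul, hΦKext⟩ := hE XK YK φK hbijK hmultK
    -- decomposition of the automorphism of the idempotent-generated part
    have hΦKm' : ∀ a ∈ (Set.univ : Set (I × ↥(Subgroup.closure (reesEntries P)) × Λ)),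
        ∀ b ∈ (Set.univ : Set (I × ↥(Subgroup.closure (reesEntries P)) × Λ)),
        ΦK (reesMul (reesEntriesMatrix P) a b)
          = reesMul (reesEntriesMatrix P) (ΦK a) (ΦK b) := fun a _ b _ => hΦKmul a b
    have hunivm : ∀ a ∈ (Set.univ : Set (I × ↥(Subgroup.closure (reesEntries P)) × Λ)),
        ∀ b ∈ (Set.univ : Set (I × ↥(Subgroup.closure (reesEntries P)) × Λ)),
        reesMul (reesEntriesMatrix P) a b ∈ Set.univ := fun _ _ _ _ => trivial
    have hunivi : ∀ a ∈ (Set.univ : Set (I × ↥(Subgroup.closure (reesEntries P)) × Λ)),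
        reesInv (reesEntriesMatrix P) a ∈ Set.univ := fun _ _ => trivial
    have hΦKinjOn : Set.InjOn ΦK Set.univ := hΦKbij.injective.injOn
    set α2 : I → I := fun i => (ΦK (i, 1, l0)).1 with hα2
    set β2 : Λ → Λ := fun l => (ΦK (i0, 1, l)).2.2 with hβ2
    have hα2spec : ∀ t, (ΦK t).1 = α2 t.1 :=
      fun t => coord_fst_of_eq hunivm hunivi hΦKm' trivial trivial rfl
    have hβ2spec : ∀ t, (ΦK t).2.2 = β2 t.2.2 :=
      fun t => coord_thd_of_eq hunivm hunivi hΦKm' trivial trivial rfl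
    have hα2inj : Function.Injective α2 := by
      intro i i' h
      have h1 : (ΦK ((i, 1, l0) : I × ↥(Subgroup.closure (reesEntries P)) × Λ)).1
          = (ΦK (i', 1, l0)).1 := h
      exact coord_fst_rev hunivm hunivi hΦKm' hΦKinjOn trivial trivial h1
    have hβ2inj : Function.Injective β2 := by
      intro l l' h
      have h1 : (ΦK ((i0, 1, l) : I × ↥(Subgroup.closure (reesEntries P)) × Λ)).2.2
          = (ΦK (i0, 1, l')).2.2 := h
      exact coord_thd_rev hunivm hunivi hΦKm' hΦKinjOn trivial trivial h1
    have hα2surj : Function.Surjective α2 := by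
      intro i'
      obtain ⟨x, hx⟩ := hΦKbij.surjective (i', 1, l0)
      refine ⟨x.1, ?_⟩
      have h1 := hα2spec x
      rw [hx] at h1
      exact h1.symm
    have hβ2surj : Function.Surjective β2 := by
      intro l'
      obtain ⟨x, hx⟩ := hΦKbij.surjective (i0, 1, l')
      refine ⟨x.2.2, ?_⟩
      have h1 := hβ2spec x
      rw [hx] at h1
      exact h1.symm
    set αe : I ≃ I := Equiv.ofBijective α2 ⟨hα2inj, hα2surj⟩ with hαe
    set βe : Λ ≃ Λ := Equiv.ofBijective β2 ⟨hβ2inj, hβ2surj⟩ with hβe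
    have hα2α : ∀ i ∈ I1, α2 i = α i := by
      intro i hi
      have hmem : ((i, 1, l0) : I × ↥(Subgroup.closure (reesEntries P)) × Λ)
          ∈ {t | CSClosure (reesMul (reesEntriesMatrix P))
            (reesInv (reesEntriesMatrix P)) (XK : Set _) t} := by
        rw [hclXK]
        exact Finset.mem_coe.mpr ((hXKmem _).mpr ⟨hi, hl0⟩)
      have h1 := hΦKext _ hmem
      have h2 : (ΦK ((i, 1, l0) : I × ↥(Subgroup.closure (reesEntries P)) × Λ)).1
          = (φK (i, 1, l0)).1 := by rw [h1]
      rw [hφKfst] at h2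
      exact h2
    have hβ2β : ∀ l ∈ Λ1, β2 l = β l := by
      intro l hl
      have hmem : ((i0, 1, l) : I × ↥(Subgroup.closure (reesEntries P)) × Λ)
          ∈ {t | CSClosure (reesMul (reesEntriesMatrix P))
            (reesInv (reesEntriesMatrix P)) (XK : Set _) t} := by
        rw [hclXK]
        exact Finset.mem_coe.mpr ((hXKmem _).mpr ⟨hi0, hl⟩)
      have h1 := hΦKext _ hmem
      have h2 : (ΦK ((i0, 1, l) : I × ↥(Subgroup.closure (reesEntries P)) × Λ)).2.2
          = (φK (i0, 1, l)).2.2 := by rw [h1]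
      rw [hφKthd] at h2
      exact h2
    -- the key matrix compatibility
    have hnbase : ∀ k : ↥(Subgroup.closure (reesEntries P)),
        ((ΦK (i0, k, l0)).2.1 : G)
          = (P (β l0) (α i0))⁻¹ * θh (P l0 i0 * ↑k) := by
      intro k
      have hmem : ((i0, k, l0) : I × ↥(Subgroup.closure (reesEntries P)) × Λ)
          ∈ {t | CSClosure (reesMul (reesEntriesMatrix P))
            (reesInv (reesEntriesMatrix P)) (XK : Set _) t} := by
        rw [hclXK]
        exact Finset.mem_coe.mpr ((hXKmem _).mpr ⟨hi0, hl0⟩)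
      rw [hΦKext _ hmem, hφKmid]
      simp only
      rw [map_mul]
      group
    have hnm : ∀ (i j : I) (l m : Λ) (k k' : ↥(Subgroup.closure (reesEntries P))),
        ((ΦK (i, k * reesEntriesMatrix P l j * k', m)).2.1 : G)
          = ((ΦK (i, k, l)).2.1 : G) * P (β2 l) (α2 j) * ((ΦK (j, k', m)).2.1 : G) := by
      intro i j l m k k'
      have h := hΦKmul (i, k, l) (j, k', m)
      have h0 : reesMul (reesEntriesMatrix P) (i, k, l) (j, k', m)
          = (i, k * reesEntriesMatrix P l j * k', m) := rfl
      rw [h0] at h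
      have h2 : ((ΦK (i, k * reesEntriesMatrix P l j * k', m)).2.1 : G)
          = ((reesMul (reesEntriesMatrix P) (ΦK (i, k, l)) (ΦK (j, k', m))).2.1 : G) := by
        rw [h]
      rw [h2]
      have h3 : ((reesMul (reesEntriesMatrix P) (ΦK (i, k, l)) (ΦK (j, k', m))).2.1 : G)
          = ↑(ΦK (i, k, l)).2.1 * P ((ΦK (i, k, l)).2.2) ((ΦK (j, k', m)).1)
            * ↑(ΦK (j, k', m)).2.1 := rfl
      rw [h3, hβ2spec, hα2spec]
    have hF : ∀ (l : Λ) (j : I), P (β2 l) (α2 j)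
        = (((ΦK (i0, 1, l)).2.1 : G))⁻¹
          * ((P (β l0) (α i0))⁻¹ * θh (P l0 i0 * P l j))
          * (((ΦK (j, 1, l0)).2.1 : G))⁻¹ := by
      intro l j
      have h := hnm i0 j l l0 1 1
      rw [one_mul, mul_one, hnbase (reesEntriesMatrix P l j)] at h
      have hcoe : ((reesEntriesMatrix P l j : ↥(Subgroup.closure (reesEntries P))) : G)
          = P l j := rfl
      rw [hcoe] at h
      rw [h]
      group
    have hN0 : ((ΦK ((i0, 1, l0) : I × ↥(Subgroup.closure (reesEntries P)) × Λ)).2.1 : G)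
        = (P (β l0) (α i0))⁻¹ * θh (P l0 i0) := by
      rw [hnbase 1, OneMemClass.coe_one, mul_one]
    have hstar : ∀ (l : Λ) (j : I),
        cfun P (α i0) (β l0) (β2 l) (α2 j) = θh (cfun P i0 l0 l j) := by
      intro l j
      have hL0 : β2 l0 = β l0 := hβ2β l0 hl0
      have hI0 : α2 i0 = α i0 := hα2α i0 hi0
      simp only [cfun]
      rw [← hI0, ← hL0]
      rw [hF l0 i0, hF l i0, hF l j, hF l0 j, hN0]
      simp only [map_mul, map_inv]
      group
    have hC : ∀ (l : Λ) (j : I),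
        θh (P l j) = (θh (P l i0) * (θh (P l0 i0))⁻¹ * P (β l0) (α i0)
            * (P (β2 l) (α i0))⁻¹)
          * P (β2 l) (α2 j) * ((P (β l0) (α2 j))⁻¹ * θh (P l0 j)) := by
      intro l j
      conv_lhs => rw [P_decomp P i0 l0 l j]
      rw [map_mul, map_mul, map_mul, map_inv, ← hstar l j]
      simp only [cfun]
      group
    -- the automorphism of S
    set uu : I → G := fun i => (P (β l0) (α2 i))⁻¹ * θh (P l0 i) with huu
    set vv : Λ → G := fun l => θh (P l i0) * (θh (P l0 i0))⁻¹ * P (β l0) (α i0)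
      * (P (β2 l) (α i0))⁻¹ with hvv
    have hCuv : ∀ (l : Λ) (j : I),
        θh (P l j) = vv l * P (β2 l) (α2 j) * uu j := by
      intro l j
      rw [huu, hvv]
      simp only
      rw [hC l j]
    set Φf : I × G × Λ → I × G × Λ :=
      fun s => (α2 s.1, uu s.1 * θh s.2.1 * vv s.2.2, β2 s.2.2) with hΦf
    refine ⟨Φf, ?_, ?_, ?_⟩
    · -- bijective
      rw [Function.bijective_iff_has_inverse]
      refine ⟨fun s => (αe.symm s.1,
        θh.symm ((uu (αe.symm s.1))⁻¹ * s.2.1 * (vv (βe.symm s.2.2))⁻¹),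
        βe.symm s.2.2), ?_, ?_⟩
      · intro s
        have hαs : αe.symm (α2 s.1) = s.1 := αe.symm_apply_apply s.1
        have hβs : βe.symm (β2 s.2.2) = s.2.2 := βe.symm_apply_apply s.2.2
        have h1 : (Φf s).1 = α2 s.1 := rfl
        have h2 : (Φf s).2.2 = β2 s.2.2 := rfl
        have h3 : (Φf s).2.1 = uu s.1 * θh s.2.1 * vv s.2.2 := rfl
        refine Prod.ext ?_ (Prod.ext ?_ ?_)
        · show αe.symm (Φf s).1 = s.1
          rw [h1, hαs]
        · show θh.symm ((uu (αe.symm (Φf s).1))⁻¹ * (Φf s).2.1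
            * (vv (βe.symm (Φf s).2.2))⁻¹) = s.2.1
          rw [h1, h2, h3, hαs, hβs]
          have h4 : (uu s.1)⁻¹ * (uu s.1 * θh s.2.1 * vv s.2.2) * (vv s.2.2)⁻¹
              = θh s.2.1 := by group
          rw [h4, MulEquiv.symm_apply_apply]
        · show βe.symm (Φf s).2.2 = s.2.2
          rw [h2, hβs]
      · intro s
        have hαs : α2 (αe.symm s.1) = s.1 := αe.apply_symm_apply s.1
        have hβs : β2 (βe.symm s.2.2) = s.2.2 := βe.apply_symm_apply s.2.2
        refine Prod.ext ?_ (Prod.ext ?_ ?_)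
        · exact hαs
        · show uu (αe.symm s.1)
            * θh (θh.symm ((uu (αe.symm s.1))⁻¹ * s.2.1 * (vv (βe.symm s.2.2))⁻¹))
            * vv (βe.symm s.2.2) = s.2.1
          rw [MulEquiv.apply_symm_apply]
          group
        · exact hβs
    · -- multiplicative
      intro x y
      refine Prod.ext rfl (Prod.ext ?_ rfl)
      show uu x.1 * θh (x.2.1 * P x.2.2 y.1 * y.2.1) * vv y.2.2
        = (uu x.1 * θh x.2.1 * vv x.2.2) * P (β2 x.2.2) (α2 y.1)
          * (uu y.1 * θh y.2.1 * vv y.2.2)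
      rw [map_mul, map_mul, hCuv x.2.2 y.1]
      group
    · -- extends φ
      intro t ht
      have htT : t ∈ T1 := ht
      have hiI : t.1 ∈ I1 := (hcoords t htT).1
      have hlΛ : t.2.2 ∈ Λ1 := (hcoords t htT).2
      have h5 : θh (wfun P i0 l0 t) = wfun P (α i0) (β l0) (φ t) := by
        rw [hθV _ (hwV t htT)]
        exact hτw t htT
      simp only [wfun] at h5
      rw [map_mul, map_mul, map_mul, map_inv] at h5
      rw [hαspec t htT, hβspec t htT] at h5
      have h6 : (φ t).2.1 = (P (β l0) (α t.1))⁻¹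
          * (θh (P l0 t.1) * θh t.2.1 * θh (P t.2.2 i0) * (θh (P l0 i0))⁻¹)
          * P (β l0) (α i0) * (P (β t.2.2) (α i0))⁻¹ := by
        rw [h5]
        group
      refine Prod.ext ?_ (Prod.ext ?_ ?_)
      · show α2 t.1 = (φ t).1
        rw [hαspec t htT, hα2α t.1 hiI]
      · show uu t.1 * θh t.2.1 * vv t.2.2 = (φ t).2.1
        rw [h6, huu, hvv]
        simp only
        rw [hα2α t.1 hiI, hβ2β t.2.2 hlΛ]
        group
      · show β2 t.2.2 = (φ t).2.2
        rw [hβspec t htT, hβ2β t.2.2 hlΛ]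
end

section
/- Let G be a countable group, let I and Λ be nonempty countable sets, let B = I × Λ be the rectangular band with multiplication (i,λ)(j,μ) = (i,μ), and let S = G × B be the rectangular group with componentwise multiplication. Then S is homogeneous as a completely simple semigroup if and only if G is a homogeneous group. -/
section RectAux

variable {G I Λ : Type*} [Group G]

/-- Multiplication of the rectangular group `G × I × Λ`. -/
private abbrev rop : (G × I × Λ) → (G × I × Λ) → (G × I × Λ) :=
  fun x y => (x.1 * y.1, x.2.1, y.2.2)

/-- Inversion-in-maximal-subgroup of the rectangular group `G × I × Λ`. -/
private abbrev rst : (G × I × Λ) → (G × I × Λ) :=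
  fun x => (x.1⁻¹, x.2.1, x.2.2)

private lemma rect_mem_closure_iff (X : Set (G × I × Λ)) (s : G × I × Λ) :
    CSClosure rop rst X s ↔
      s.1 ∈ Subgroup.closure (Prod.fst '' X) ∧ (∃ x ∈ X, x.2.1 = s.2.1) ∧
        (∃ x ∈ X, x.2.2 = s.2.2) := by
  constructor
  · intro h
    induction h with
    | base hx => exact ⟨Subgroup.subset_closure ⟨_, hx, rfl⟩, ⟨_, hx, rfl⟩, ⟨_, hx, rfl⟩⟩
    | mul hx hy ihx ihy => exact ⟨mul_mem ihx.1 ihy.1, ihx.2.1, ihy.2.2⟩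
    | inv hx ih => exact ⟨inv_mem ih.1, ih.2.1, ih.2.2⟩
  · rintro ⟨hg, ⟨a, haX, hai⟩, ⟨b, hbX, hbl⟩⟩
    have ea : CSClosure rop rst X ((1 : G), a.2.1, a.2.2) := by
      have h1 : CSClosure rop rst X (a.1 * a.1⁻¹, a.2.1, a.2.2) :=
        CSClosure.mul (CSClosure.base haX) (CSClosure.inv (CSClosure.base haX))
      simpa using h1
    have haux : ∀ g, g ∈ Subgroup.closure (Prod.fst '' X) →
        CSClosure rop rst X (g, a.2.1, a.2.2) := by
      intro g hgmem
      induction hgmem using Subgroup.closure_induction with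
      | mem x hx =>
        obtain ⟨y, hyX, rfl⟩ := hx
        have h2 : CSClosure rop rst X ((1 * y.1) * 1, a.2.1, a.2.2) :=
          CSClosure.mul (CSClosure.mul ea (CSClosure.base hyX)) ea
        simpa using h2
      | one => exact ea
      | mul x y hx hy ihx ihy => exact CSClosure.mul ihx ihy
      | inv x hx ih => exact CSClosure.inv ih
    have h3 : CSClosure rop rst X (s.1 * (b.1 * b.1⁻¹), a.2.1, b.2.2) :=
      CSClosure.mul (haux s.1 hg)
        (CSClosure.mul (CSClosure.base hbX) (CSClosure.inv (CSClosure.base hbX)))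
    rw [hai, hbl] at h3
    simpa using h3

private lemma exists_perm_extend {α : Type*} (A : Finset α) (f : α → α)
    (hf : Set.InjOn f ↑A) : ∃ g : Equiv.Perm α, ∀ a ∈ A, g a = f a := by
  classical
  induction A using Finset.induction with
  | empty => exact ⟨1, by simp⟩
  | @insert a A ha ih =>
    obtain ⟨g, hg⟩ := ih (hf.mono (Finset.coe_subset.mpr (Finset.subset_insert a A)))
    refine ⟨g.trans (Equiv.swap (g a) (f a)), ?_⟩
    intro x hx
    rcases Finset.mem_insert.1 hx with rfl | hxA
    · show Equiv.swap (g x) (f x) (g x) = f x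
      exact Equiv.swap_apply_left _ _
    · have h1 : g x = f x := hg x hxA
      have hxa : x ≠ a := fun h => ha (h ▸ hxA)
      have hne1 : g x ≠ g a := fun h => hxa (g.injective h)
      have hne2 : g x ≠ f a := by
        rw [h1]
        intro h
        exact hxa (hf (by simp [hxA]) (by simp) h)
      show Equiv.swap (g a) (f a) (g x) = f x
      rw [Equiv.swap_apply_of_ne_of_ne hne1 hne2, h1]

private lemma rect_decomp (T : Set (G × I × Λ)) (φ : G × I × Λ → G × I × Λ)
    (i0 : I) (l0 : Λ)
    (hmul : ∀ x y, x ∈ T → y ∈ T → φ (rop x y) = rop (φ x) (φ y))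
    (hcl : ∀ g i l, (g, i, l) ∈ T →
      (((1 : G), i, l0) ∈ T ∧ (g, i0, l0) ∈ T ∧ ((1 : G), i0, l) ∈ T ∧ (g, i, l0) ∈ T)) :
    ∀ g i l, (g, i, l) ∈ T →
      φ (g, i, l) =
        ((φ (g, i0, l0)).1, (φ ((1 : G), i, l0)).2.1, (φ ((1 : G), i0, l)).2.2) := by
  have hid : ∀ i l, ((1 : G), i, l) ∈ T → (φ ((1 : G), i, l)).1 = 1 := by
    intro i l hmem
    have h1 : φ ((1 * 1 : G), i, l) = rop (φ ((1 : G), i, l)) (φ ((1 : G), i, l)) :=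
      hmul _ _ hmem hmem
    rw [one_mul] at h1
    have h2 : (φ ((1 : G), i, l)).1 = (φ ((1 : G), i, l)).1 * (φ ((1 : G), i, l)).1 :=
      congrArg Prod.fst h1
    exact right_eq_mul.mp h2
  intro g i l hmem
  obtain ⟨h1T, h2T, h3T, h4T⟩ := hcl g i l hmem
  have e1 : φ ((1 * g : G), i, l0) = rop (φ ((1 : G), i, l0)) (φ (g, i0, l0)) :=
    hmul _ _ h1T h2T
  rw [one_mul] at e1
  have e2 : φ ((g * 1 : G), i, l) = rop (φ (g, i, l0)) (φ ((1 : G), i0, l)) :=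
    hmul _ _ h4T h3T
  rw [mul_one] at e2
  have hv1 : (φ ((1 : G), i, l0)).1 = 1 := hid _ _ h1T
  have hv3 : (φ ((1 : G), i0, l)).1 = 1 := hid _ _ h3T
  rw [e2, e1]
  refine Prod.ext ?_ rfl
  show ((φ ((1 : G), i, l0)).1 * (φ (g, i0, l0)).1) * (φ ((1 : G), i0, l)).1 =
    (φ (g, i0, l0)).1
  rw [hv1, hv3, one_mul, mul_one]

end RectAux


/-- A rectangular group `S = G × B`, where `G` is a countable group and
`B = I × Λ` is a rectangular band on countable nonempty index sets (so that
`(g,i,λ)(h,j,μ) = (g·h, i, μ)` and the unary operation is `(g,i,λ)' = (g⁻¹,i,λ)`),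
is homogeneous as a completely simple semigroup iff `G` is a homogeneous group. -/
theorem rectangular_group_homogeneous_iff {G I Λ : Type*} [Group G] [Countable G]
    [Countable I] [Countable Λ] [Nonempty I] [Nonempty Λ] :
    IsCSHomogeneous (S := G × I × Λ)
      (fun x y => (x.1 * y.1, x.2.1, y.2.2))
      (fun x => (x.1⁻¹, x.2.1, x.2.2)) ↔
    IsHomogeneousGroup G := by
  constructor
  · -- CS-homogeneous ⇒ homogeneous group
    intro hS A B hA hB e
    classical
    obtain ⟨TA, hTA⟩ := hA
    obtain ⟨TB, hTB⟩ := hB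
    obtain ⟨i0⟩ := (inferInstance : Nonempty I)
    obtain ⟨l0⟩ := (inferInstance : Nonempty Λ)
    -- characterization of the closures of the chosen finsets
    have hchar : ∀ (T : Finset G) (C : Subgroup G), Subgroup.closure (↑T : Set G) = C →
        ∀ s : G × I × Λ,
        CSClosure rop rst
          (↑((insert (1 : G) T).image (fun g => ((g : G), i0, l0))) : Set (G × I × Λ)) s ↔
          (s.1 ∈ C ∧ s.2.1 = i0 ∧ s.2.2 = l0) := by
      intro T C hTC s
      rw [rect_mem_closure_iff]
      have himg : Prod.fst ''
          (↑((insert (1 : G) T).image (fun g => ((g : G), i0, l0))) : Set (G × I × Λ)) =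
          ↑(insert (1 : G) T) := by
        rw [Finset.coe_image, Set.image_image]
        simp
      have hclos : Subgroup.closure (↑(insert (1 : G) T) : Set G) = C := by
        rw [Finset.coe_insert]
        rw [← hTC]
        refine le_antisymm ((Subgroup.closure_le _).2 ?_)
          (Subgroup.closure_mono (Set.subset_insert _ _))
        rintro x (rfl | hx)
        · exact one_mem _
        · exact Subgroup.subset_closure hx
      rw [himg, hclos]
      have hmem1 : ((1 : G), i0, l0) ∈
          (↑((insert (1 : G) T).image (fun g => ((g : G), i0, l0))) : Set (G × I × Λ)) :=
        Finset.mem_coe.2 (Finset.mem_image.2 ⟨1, Finset.mem_insert_self _ _, rfl⟩)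
      constructor
      · rintro ⟨h1, ⟨x, hxX, hx1⟩, ⟨y, hyX, hy2⟩⟩
        refine ⟨h1, ?_, ?_⟩
        · obtain ⟨g, hg, rfl⟩ := Finset.mem_image.1 (Finset.mem_coe.1 hxX)
          exact hx1.symm
        · obtain ⟨g, hg, rfl⟩ := Finset.mem_image.1 (Finset.mem_coe.1 hyX)
          exact hy2.symm
      · rintro ⟨h1, h2, h3⟩
        exact ⟨h1, ⟨_, hmem1, h2.symm⟩, ⟨_, hmem1, h3.symm⟩⟩
    have hmemX := hchar TA A hTA
    have hmemY := hchar TB B hTB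
    -- the partial isomorphism
    set φ : G × I × Λ → G × I × Λ :=
      fun x => if h : x.1 ∈ A then (((e ⟨x.1, h⟩ : B) : G), x.2.1, x.2.2) else x with hφdef
    have hφval : ∀ (x : G × I × Λ) (h : x.1 ∈ A),
        φ x = (((e ⟨x.1, h⟩ : B) : G), x.2.1, x.2.2) := fun x h => dif_pos h
    have hbij : Set.BijOn φ
        {s | CSClosure rop rst
          (↑((insert (1 : G) TA).image (fun g => ((g : G), i0, l0))) : Set (G × I × Λ)) s}
        {s | CSClosure rop rst
          (↑((insert (1 : G) TB).image (fun g => ((g : G), i0, l0))) : Set (G × I × Λ)) s} := by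
      refine ⟨?_, ?_, ?_⟩
      · intro s hs
        obtain ⟨h1, h2, h3⟩ := (hmemX s).mp hs
        refine (hmemY (φ s)).mpr ?_
        rw [hφval s h1]
        exact ⟨SetLike.coe_mem _, h2, h3⟩
      · intro s hs t ht hst
        obtain ⟨hs1, hs2, hs3⟩ := (hmemX s).mp hs
        obtain ⟨ht1, ht2, ht3⟩ := (hmemX t).mp ht
        rw [hφval s hs1, hφval t ht1] at hst
        have h1 : (⟨s.1, hs1⟩ : A) = ⟨t.1, ht1⟩ :=
          e.injective (Subtype.ext (congrArg Prod.fst hst))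
        have h2 : ((((e ⟨s.1, hs1⟩ : B) : G), s.2.1, s.2.2) : G × I × Λ).2 =
            ((((e ⟨t.1, ht1⟩ : B) : G), t.2.1, t.2.2) : G × I × Λ).2 := congrArg Prod.snd hst
        exact Prod.ext (congrArg Subtype.val h1) h2
      · intro y hy
        obtain ⟨hy1, hy2, hy3⟩ := (hmemY y).mp hy
        have hx1 : ((e.symm ⟨y.1, hy1⟩ : A) : G) ∈ A := SetLike.coe_mem _
        refine ⟨(((e.symm ⟨y.1, hy1⟩ : A) : G), i0, l0), ?_, ?_⟩
        · exact (hmemX _).mpr ⟨hx1, rfl, rfl⟩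
        · rw [hφval _ hx1]
          have h5 : ((e ⟨((e.symm ⟨y.1, hy1⟩ : A) : G), hx1⟩ : B) : G) = y.1 :=
            congrArg Subtype.val (e.apply_symm_apply ⟨y.1, hy1⟩)
          exact Prod.ext h5 (Prod.ext hy2.symm hy3.symm)
    have hmul : ∀ x y : G × I × Λ,
        CSClosure rop rst
          (↑((insert (1 : G) TA).image (fun g => ((g : G), i0, l0))) : Set (G × I × Λ)) x →
        CSClosure rop rst
          (↑((insert (1 : G) TA).image (fun g => ((g : G), i0, l0))) : Set (G × I × Λ)) y →
        φ (rop x y) = rop (φ x) (φ y) := by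
      intro x y hx hy
      obtain ⟨hx1, hx2, hx3⟩ := (hmemX x).mp hx
      obtain ⟨hy1, hy2, hy3⟩ := (hmemX y).mp hy
      have hm : (rop x y).1 ∈ A := mul_mem hx1 hy1
      rw [hφval _ hm, hφval x hx1, hφval y hy1]
      refine Prod.ext ?_ rfl
      have h1 : (⟨(rop x y).1, hm⟩ : A) = ⟨x.1, hx1⟩ * ⟨y.1, hy1⟩ := Subtype.ext rfl
      show ((e ⟨(rop x y).1, hm⟩ : B) : G) = _
      rw [h1, map_mul]
      rfl
    obtain ⟨Φ, hΦbij, hΦmul, hΦext⟩ :=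
      hS ((insert (1 : G) TA).image (fun g => ((g : G), i0, l0)))
         ((insert (1 : G) TB).image (fun g => ((g : G), i0, l0))) φ hbij hmul
    have hdec := rect_decomp Set.univ Φ i0 l0 (fun x y _ _ => hΦmul x y)
      (fun g i l _ => ⟨trivial, trivial, trivial, trivial⟩)
    have hθmul : ∀ g h : G,
        (Φ (g * h, i0, l0)).1 = (Φ (g, i0, l0)).1 * (Φ (h, i0, l0)).1 :=
      fun g h => congrArg Prod.fst (hΦmul (g, i0, l0) (h, i0, l0))
    have hθinj : Function.Injective (fun g => (Φ (g, i0, l0)).1) := by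
      intro g g' hgg
      have h1 : Φ (g, i0, l0) = Φ (g', i0, l0) := by
        rw [hdec g i0 l0 trivial, hdec g' i0 l0 trivial]
        exact Prod.ext hgg rfl
      exact congrArg Prod.fst (hΦbij.injective h1)
    have hθsurj : Function.Surjective (fun g => (Φ (g, i0, l0)).1) := by
      intro h
      obtain ⟨x, hx⟩ := hΦbij.surjective
        (h, (Φ ((1 : G), i0, l0)).2.1, (Φ ((1 : G), i0, l0)).2.2)
      refine ⟨x.1, ?_⟩
      have h2 := hdec x.1 x.2.1 x.2.2 trivial
      exact (congrArg Prod.fst h2).symm.trans (congrArg Prod.fst hx)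
    refine ⟨MulEquiv.ofBijective
      (MonoidHom.mk' (fun g => (Φ (g, i0, l0)).1) hθmul) ⟨hθinj, hθsurj⟩, ?_⟩
    intro a
    have hmem : CSClosure rop rst
        (↑((insert (1 : G) TA).image (fun g => ((g : G), i0, l0))) : Set (G × I × Λ))
        ((a : G), i0, l0) := (hmemX _).mpr ⟨a.2, rfl, rfl⟩
    have h6 : Φ ((a : G), i0, l0) = φ ((a : G), i0, l0) := hΦext _ hmem
    have h7 : φ ((a : G), i0, l0) = (((e ⟨(a : G), a.2⟩ : B) : G), i0, l0) := hφval _ a.2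
    exact (congrArg Prod.fst h6).trans (congrArg Prod.fst h7)
  · -- homogeneous group ⇒ CS-homogeneous
    intro hG X Y φ hbij hmul
    classical
    rcases X.eq_empty_or_nonempty with rfl | ⟨x₀, hx₀⟩
    · refine ⟨id, Function.bijective_id, fun x y => rfl, ?_⟩
      intro x hx
      exact absurd ((rect_mem_closure_iff _ _).mp hx).2.1 (by simp)
    · have hx₀' : x₀ ∈ (↑X : Set (G × I × Λ)) := Finset.mem_coe.2 hx₀
      have hix₀ : ∃ x ∈ (↑X : Set (G × I × Λ)), x.2.1 = x₀.2.1 := ⟨x₀, hx₀', rfl⟩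
      have hlx₀ : ∃ x ∈ (↑X : Set (G × I × Λ)), x.2.2 = x₀.2.2 := ⟨x₀, hx₀', rfl⟩
      have hTmem : ∀ {g i l}, g ∈ Subgroup.closure (Prod.fst '' (↑X : Set (G × I × Λ))) →
          (∃ x ∈ (↑X : Set (G × I × Λ)), x.2.1 = i) →
          (∃ x ∈ (↑X : Set (G × I × Λ)), x.2.2 = l) →
          CSClosure rop rst (↑X : Set (G × I × Λ)) (g, i, l) :=
        fun hg hi hl => (rect_mem_closure_iff _ _).mpr ⟨hg, hi, hl⟩
      -- decomposition of φ on the closure of X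
      have hdec := rect_decomp {s | CSClosure rop rst (↑X : Set (G × I × Λ)) s} φ
        x₀.2.1 x₀.2.2 (fun x y hx hy => hmul x y hx hy)
        (by
          intro g i l h
          obtain ⟨h1, h2, h3⟩ := (rect_mem_closure_iff _ _).mp h
          exact ⟨hTmem (one_mem _) h2 hlx₀, hTmem h1 hix₀ hlx₀,
            hTmem (one_mem _) hix₀ h3, hTmem h1 h2 hlx₀⟩)
      -- θ properties
      have hθmaps : ∀ g, g ∈ Subgroup.closure (Prod.fst '' (↑X : Set (G × I × Λ))) →
          (φ (g, x₀.2.1, x₀.2.2)).1 ∈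
            Subgroup.closure (Prod.fst '' (↑Y : Set (G × I × Λ))) := by
        intro g hg
        have h := hbij.mapsTo (hTmem hg hix₀ hlx₀)
        exact ((rect_mem_closure_iff _ _).mp h).1
      have hθmul : ∀ g ∈ Subgroup.closure (Prod.fst '' (↑X : Set (G × I × Λ))),
          ∀ h ∈ Subgroup.closure (Prod.fst '' (↑X : Set (G × I × Λ))),
          (φ (g * h, x₀.2.1, x₀.2.2)).1 =
            (φ (g, x₀.2.1, x₀.2.2)).1 * (φ (h, x₀.2.1, x₀.2.2)).1 :=
        fun g hg h hh => congrArg Prod.fst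
          (hmul (g, x₀.2.1, x₀.2.2) (h, x₀.2.1, x₀.2.2)
            (hTmem hg hix₀ hlx₀) (hTmem hh hix₀ hlx₀))
      have hθinj : ∀ g ∈ Subgroup.closure (Prod.fst '' (↑X : Set (G × I × Λ))),
          ∀ h ∈ Subgroup.closure (Prod.fst '' (↑X : Set (G × I × Λ))),
          (φ (g, x₀.2.1, x₀.2.2)).1 = (φ (h, x₀.2.1, x₀.2.2)).1 → g = h := by
        intro g hg h hh hgh
        have m1 := hTmem hg hix₀ hlx₀
        have m2 := hTmem hh hix₀ hlx₀
        have h1 : φ (g, x₀.2.1, x₀.2.2) = φ (h, x₀.2.1, x₀.2.2) := by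
          rw [hdec g x₀.2.1 x₀.2.2 m1, hdec h x₀.2.1 x₀.2.2 m2]
          exact Prod.ext hgh rfl
        exact congrArg Prod.fst (hbij.injOn m1 m2 h1)
      have hθsurj : ∀ b ∈ Subgroup.closure (Prod.fst '' (↑Y : Set (G × I × Λ))),
          ∃ g ∈ Subgroup.closure (Prod.fst '' (↑X : Set (G × I × Λ))),
            (φ (g, x₀.2.1, x₀.2.2)).1 = b := by
        intro b hb
        have m0 := hTmem (one_mem _) hix₀ hlx₀
        have hmem1 : CSClosure rop rst (↑Y : Set (G × I × Λ))
            ((φ ((1 : G), x₀.2.1, x₀.2.2)).1,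
             (φ ((1 : G), x₀.2.1, x₀.2.2)).2.1, (φ ((1 : G), x₀.2.1, x₀.2.2)).2.2) := by
          have h := hbij.mapsTo m0
          exact h
        obtain ⟨-, hyi, hyl⟩ := (rect_mem_closure_iff _ _).mp hmem1
        have hmem2 : CSClosure rop rst (↑Y : Set (G × I × Λ))
            (b, (φ ((1 : G), x₀.2.1, x₀.2.2)).2.1, (φ ((1 : G), x₀.2.1, x₀.2.2)).2.2) :=
          (rect_mem_closure_iff _ _).mpr ⟨hb, hyi, hyl⟩
        obtain ⟨x, hxT, hφx⟩ := hbij.surjOn hmem2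
        obtain ⟨hx1, -, -⟩ := (rect_mem_closure_iff _ _).mp hxT
        refine ⟨x.1, hx1, ?_⟩
        have h2 := hdec x.1 x.2.1 x.2.2 hxT
        have h3 : ((φ (x.1, x₀.2.1, x₀.2.2)).1,
            (φ ((1 : G), x.2.1, x₀.2.2)).2.1, (φ ((1 : G), x₀.2.1, x.2.2)).2.2) =
            ((b, (φ ((1 : G), x₀.2.1, x₀.2.2)).2.1,
              (φ ((1 : G), x₀.2.1, x₀.2.2)).2.2) : G × I × Λ) := h2.symm.trans hφx
        exact congrArg Prod.fst h3
      -- injectivity of the coordinate maps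
      have hψinj : Set.InjOn (fun i => (φ ((1 : G), i, x₀.2.2)).2.1)
          ↑(X.image (fun x => x.2.1)) := by
        intro i hi i' hi' hii
        rw [Finset.coe_image] at hi hi'
        obtain ⟨x, hxX, rfl⟩ := hi
        obtain ⟨x', hx'X, rfl⟩ := hi'
        have m1 := hTmem (one_mem _) ⟨x, hxX, rfl⟩ hlx₀
        have m2 := hTmem (one_mem _) ⟨x', hx'X, rfl⟩ hlx₀
        have h1 : φ ((1 : G), x.2.1, x₀.2.2) = φ ((1 : G), x'.2.1, x₀.2.2) := by
          rw [hdec 1 x.2.1 x₀.2.2 m1, hdec 1 x'.2.1 x₀.2.2 m2]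
          exact Prod.ext rfl (Prod.ext hii rfl)
        have h5 : (((1 : G), x.2.1, x₀.2.2) : G × I × Λ) = ((1 : G), x'.2.1, x₀.2.2) :=
          hbij.injOn m1 m2 h1
        have h6 := congrArg (fun s : G × I × Λ => s.2.1) h5
        exact h6
      have hχinj : Set.InjOn (fun l => (φ ((1 : G), x₀.2.1, l)).2.2)
          ↑(X.image (fun x => x.2.2)) := by
        intro l hl l' hl' hll
        rw [Finset.coe_image] at hl hl'
        obtain ⟨x, hxX, rfl⟩ := hl
        obtain ⟨x', hx'X, rfl⟩ := hl'
        have m1 := hTmem (one_mem _) hix₀ ⟨x, hxX, rfl⟩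
        have m2 := hTmem (one_mem _) hix₀ ⟨x', hx'X, rfl⟩
        have h1 : φ ((1 : G), x₀.2.1, x.2.2) = φ ((1 : G), x₀.2.1, x'.2.2) := by
          rw [hdec 1 x₀.2.1 x.2.2 m1, hdec 1 x₀.2.1 x'.2.2 m2]
          exact Prod.ext rfl (Prod.ext rfl hll)
        have h5 : (((1 : G), x₀.2.1, x.2.2) : G × I × Λ) = ((1 : G), x₀.2.1, x'.2.2) :=
          hbij.injOn m1 m2 h1
        have h6 := congrArg (fun s : G × I × Λ => s.2.2) h5
        exact h6
      -- apply group homogeneity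
      obtain ⟨Θ, hΘ⟩ := hG
        (Subgroup.closure (Prod.fst '' (↑X : Set (G × I × Λ))))
        (Subgroup.closure (Prod.fst '' (↑Y : Set (G × I × Λ))))
        ⟨X.image Prod.fst, by rw [Finset.coe_image]⟩
        ⟨Y.image Prod.fst, by rw [Finset.coe_image]⟩
        (MulEquiv.ofBijective
          (MonoidHom.mk'
            (fun (a : ↥(Subgroup.closure (Prod.fst '' (↑X : Set (G × I × Λ))))) =>
              (⟨(φ ((a : G), x₀.2.1, x₀.2.2)).1, hθmaps a a.2⟩ :
              Subgroup.closure (Prod.fst '' (↑Y : Set (G × I × Λ)))))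
            (fun a b => Subtype.ext (hθmul a a.2 b b.2)))
          ⟨fun a b hab => Subtype.ext (hθinj a a.2 b b.2 (congrArg Subtype.val hab)),
           fun b => by
            obtain ⟨g, hg, hgb⟩ := hθsurj b b.2
            exact ⟨⟨g, hg⟩, Subtype.ext hgb⟩⟩)
      obtain ⟨Ψ, hΨ⟩ := exists_perm_extend (X.image (fun x => x.2.1))
        (fun i => (φ ((1 : G), i, x₀.2.2)).2.1) hψinj
      obtain ⟨Χ, hΧ⟩ := exists_perm_extend (X.image (fun x => x.2.2))
        (fun l => (φ ((1 : G), x₀.2.1, l)).2.2) hχinj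
      refine ⟨fun x => (Θ x.1, Ψ x.2.1, Χ x.2.2), ?_, ?_, ?_⟩
      · exact (Equiv.prodCongr Θ.toEquiv (Equiv.prodCongr Ψ Χ)).bijective
      · intro x y
        exact Prod.ext (map_mul Θ x.1 y.1) rfl
      · intro x hx
        obtain ⟨hx1, hx2, hx3⟩ := (rect_mem_closure_iff _ _).mp hx
        have h2 : φ x = ((φ (x.1, x₀.2.1, x₀.2.2)).1,
            (φ ((1 : G), x.2.1, x₀.2.2)).2.1, (φ ((1 : G), x₀.2.1, x.2.2)).2.2) :=
          hdec x.1 x.2.1 x.2.2 hx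
        rw [h2]
        obtain ⟨w, hwX, hw⟩ := hx2
        obtain ⟨w', hw'X, hw'⟩ := hx3
        refine Prod.ext ?_ (Prod.ext ?_ ?_)
        · exact hΘ ⟨x.1, hx1⟩
        · exact hΨ x.2.1 (Finset.mem_image.2 ⟨w, Finset.mem_coe.1 hwX, hw⟩)
        · exact hΧ x.2.2 (Finset.mem_image.2 ⟨w', Finset.mem_coe.1 hw'X, hw'⟩)
end

section
/- Let C be a nonempty countable set of colours. Then: (a) any C-generic complete C-edge-coloured bipartite graph is homogeneous; (b) every complete C-edge-coloured bipartite graph with finite left and right sets embeds colour-preservingly into any C-generic graph (i.e. there are injections of its left set into L and of its right set into R preserving the colouring); and (c) any two C-generic complete C-edge-coloured bipartite graphs are isomorphic, via a pair of colour-preserving bijections of their left sets and of their right sets. -/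
/-- A complete `C`-edge-coloured bipartite graph with left set `L`, right set `R` and
colouring `F` is `C`-generic: `L` and `R` are countably infinite and every finitely
specified colour pattern is realised by a witness on the other side. -/
def IsGenericBipartite {L R C : Type*} (F : L → R → C) : Prop :=
  (Countable L ∧ Infinite L) ∧ (Countable R ∧ Infinite R) ∧
  (∀ (A : Finset L) (α : L → C), ∃ x : R, ∀ a ∈ A, F a x = α a) ∧
  (∀ (B : Finset R) (β : R → C), ∃ z : L, ∀ b ∈ B, F z b = β b)

namespace GenBip

attribute [local instance] Classical.propDecidable

variable {C L R L' R' L₀ R₀ : Type*}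

lemma flip' {F : L → R → C} (h : IsGenericBipartite F) :
    IsGenericBipartite (fun r l => F l r) := by
  obtain ⟨h1, h2, h3, h4⟩ := h
  exact ⟨h2, h1, h4, h3⟩

/-- Fresh realization: a left vertex realizing a colour pattern, avoiding a finite set. -/
lemma fresh_left [Nonempty C] {F : L → R → C} (hF : IsGenericBipartite F)
    (B : Finset R) (β : R → C) (T : Finset L) :
    ∃ x : L, x ∉ T ∧ ∀ b ∈ B, F x b = β b := by
  classical
  obtain ⟨⟨_, hLinf⟩, ⟨_, hRinf⟩, _, hreal⟩ := hF
  by_cases hC : ∃ c₀ c₁ : C, c₀ ≠ c₁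
  · obtain ⟨c₀, c₁, hc⟩ := hC
    have hinf : ((↑B : Set R)ᶜ).Infinite := B.finite_toSet.infinite_compl
    obtain ⟨S, hSsub, hScard⟩ := hinf.exists_subset_card_eq T.card
    have hcard : Fintype.card S = Fintype.card T := by
      simp [Fintype.card_coe, hScard]
    let e : S ≃ T := Fintype.equivOfCardEq hcard
    let β' : R → C := fun r =>
      if hr : r ∈ S then (if F ((e ⟨r, hr⟩ : T) : L) r = c₀ then c₁ else c₀) else β r
    obtain ⟨x, hx⟩ := hreal (B ∪ S) β'
    refine ⟨x, ?_, ?_⟩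
    · intro hxT
      set r : R := ((e.symm ⟨x, hxT⟩ : S) : R) with hrdef
      have hrS : r ∈ S := (e.symm ⟨x, hxT⟩).2
      have h1 : F x r = β' r := hx r (Finset.mem_union_right _ hrS)
      have h2 : β' r = if F x r = c₀ then c₁ else c₀ := by
        have : (⟨r, hrS⟩ : S) = e.symm ⟨x, hxT⟩ := rfl
        simp only [β', dif_pos hrS, this, Equiv.apply_symm_apply]
      rw [h2] at h1
      by_cases h : F x r = c₀
      · rw [if_pos h] at h1; exact hc (h.symm.trans h1)
      · rw [if_neg h] at h1; exact h h1
    · intro b hb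
      have hbS : b ∉ S := fun hbS => hSsub hbS (by simp [hb])
      have := hx b (Finset.mem_union_left _ hb)
      simpa only [β', dif_neg hbS] using this
  · push_neg at hC
    haveI := hLinf
    obtain ⟨x, hx⟩ := Infinite.exists_notMem_finset T
    exact ⟨x, hx, fun b _ => hC _ _⟩

/-- A good pair of finsets: graphs of finite partial bijections compatible with colours. -/
def Good (F : L → R → C) (F' : L' → R' → C)
    (s : Finset (L × L')) (t : Finset (R × R')) : Prop :=
  (∀ p ∈ s, ∀ q ∈ s, p.1 = q.1 ↔ p.2 = q.2) ∧
  (∀ p ∈ t, ∀ q ∈ t, p.1 = q.1 ↔ p.2 = q.2) ∧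
  (∀ p ∈ s, ∀ q ∈ t, F' p.2 q.2 = F p.1 q.1)

variable {F : L → R → C} {F' : L' → R' → C}

lemma Good.swapLR {s t} (h : Good F F' s t) :
    Good F' F (s.image Prod.swap) (t.image Prod.swap) := by
  classical
  obtain ⟨h1, h2, h3⟩ := h
  refine ⟨?_, ?_, ?_⟩
  · intro p hp q hq
    obtain ⟨p₀, hp₀, rfl⟩ := Finset.mem_image.1 hp
    obtain ⟨q₀, hq₀, rfl⟩ := Finset.mem_image.1 hq
    exact (h1 p₀ hp₀ q₀ hq₀).symm
  · intro p hp q hq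
    obtain ⟨p₀, hp₀, rfl⟩ := Finset.mem_image.1 hp
    obtain ⟨q₀, hq₀, rfl⟩ := Finset.mem_image.1 hq
    exact (h2 p₀ hp₀ q₀ hq₀).symm
  · intro p hp q hq
    obtain ⟨p₀, hp₀, rfl⟩ := Finset.mem_image.1 hp
    obtain ⟨q₀, hq₀, rfl⟩ := Finset.mem_image.1 hq
    exact (h3 p₀ hp₀ q₀ hq₀).symm

lemma Good.flip {s t} (h : Good F F' s t) :
    Good (fun r l => F l r) (fun r' l' => F' l' r') t s :=
  ⟨h.2.1, h.1, fun p hp q hq => h.2.2 q hq p hp⟩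

/-- Extend the left partial bijection to contain `x` in its domain. -/
lemma extend_domL [Nonempty C] (hF' : IsGenericBipartite F') {s t}
    (h : Good F F' s t) (x : L) :
    ∃ x', Good F F' (insert (x, x') s) t := by
  classical
  by_cases hx : ∃ p ∈ s, p.1 = x
  · obtain ⟨p, hp, hpx⟩ := hx
    refine ⟨p.2, ?_⟩
    have : (x, p.2) = p := by rw [← hpx]
    rwa [this, Finset.insert_eq_self.2 hp]
  · push_neg at hx
    let β : R' → C := fun r' =>
      if hr : ∃ q, q ∈ t ∧ q.2 = r' then F x hr.choose.1 else Classical.arbitrary C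
    have hβ : ∀ q ∈ t, β q.2 = F x q.1 := by
      intro q hq
      have hex : ∃ q', q' ∈ t ∧ q'.2 = q.2 := ⟨q, hq, rfl⟩
      have hch := hex.choose_spec
      have : hex.choose.1 = q.1 := (h.2.1 _ hch.1 q hq).2 hch.2
      simp only [β, dif_pos hex, this]
    obtain ⟨x', hx'T, hx'⟩ := fresh_left hF' (t.image Prod.snd) β (s.image Prod.snd)
    refine ⟨x', ?_, h.2.1, ?_⟩
    · intro p hp q hq
      rcases Finset.mem_insert.1 hp with rfl | hp <;>
        rcases Finset.mem_insert.1 hq with rfl | hq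
      · simp
      · constructor
        · intro he; exact absurd he.symm (hx q hq)
        · intro he
          exact absurd (Finset.mem_image.2 ⟨q, hq, he.symm⟩) hx'T
      · constructor
        · intro he; exact absurd he (hx p hp)
        · intro he
          exact absurd (Finset.mem_image.2 ⟨p, hp, he⟩) hx'T
      · exact h.1 p hp q hq
    · intro p hp q hq
      rcases Finset.mem_insert.1 hp with rfl | hp
      · have := hx' q.2 (Finset.mem_image.2 ⟨q, hq, rfl⟩)
        rw [this, hβ q hq]
      · exact h.2.2 p hp q hq


lemma extend_ranL [Nonempty C] (hF : IsGenericBipartite F) {s t}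
    (h : Good F F' s t) (x' : L') :
    ∃ x, Good F F' (insert (x, x') s) t := by
  obtain ⟨x, hx⟩ := extend_domL hF h.swapLR x'
  refine ⟨x, ?_⟩
  have h2 := hx.swapLR
  simpa only [Finset.image_insert, Finset.image_image, Prod.swap_swap_eq,
    Finset.image_id, Prod.swap_prod_mk] using h2

lemma extend_domR [Nonempty C] (hF' : IsGenericBipartite F') {s t}
    (h : Good F F' s t) (y : R) :
    ∃ y', Good F F' s (insert (y, y') t) := by
  obtain ⟨y', hy⟩ := extend_domL (flip' hF') h.flip y
  exact ⟨y', hy.flip⟩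

lemma extend_ranR [Nonempty C] (hF : IsGenericBipartite F) {s t}
    (h : Good F F' s t) (y' : R') :
    ∃ y, Good F F' s (insert (y, y') t) := by
  obtain ⟨y, hy⟩ := extend_ranL (flip' hF) h.flip y'
  exact ⟨y, hy.flip⟩

/-- One full back-and-forth step. -/
lemma step [Nonempty C] (hF : IsGenericBipartite F) (hF' : IsGenericBipartite F')
    {s t} (h : Good F F' s t) (x : L) (x' : L') (y : R) (y' : R') :
    ∃ s' t', s ⊆ s' ∧ t ⊆ t' ∧ Good F F' s' t' ∧
      (∃ a, (x, a) ∈ s') ∧ (∃ a, (a, x') ∈ s') ∧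
      (∃ b, (y, b) ∈ t') ∧ (∃ b, (b, y') ∈ t') := by
  obtain ⟨a₁, h1⟩ := extend_domL hF' h x
  obtain ⟨a₂, h2⟩ := extend_ranL hF h1 x'
  obtain ⟨b₁, h3⟩ := extend_domR hF' h2 y
  obtain ⟨b₂, h4⟩ := extend_ranR hF h3 y'
  refine ⟨insert (a₂, x') (insert (x, a₁) s), insert (b₂, y') (insert (y, b₁) t),
    ?_, ?_, h4, ?_, ?_, ?_, ?_⟩
  · exact (Finset.subset_insert _ _).trans (Finset.subset_insert _ _)
  · exact (Finset.subset_insert _ _).trans (Finset.subset_insert _ _)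
  · exact ⟨a₁, Finset.mem_insert_of_mem (Finset.mem_insert_self _ _)⟩
  · exact ⟨a₂, Finset.mem_insert_self _ _⟩
  · exact ⟨b₁, Finset.mem_insert_of_mem (Finset.mem_insert_self _ _)⟩
  · exact ⟨b₂, Finset.mem_insert_self _ _⟩


/-- The back-and-forth theorem: any good finite partial isomorphism between two generic
graphs extends to a full isomorphism. -/
theorem backAndForth [Nonempty C] (hF : IsGenericBipartite F) (hF' : IsGenericBipartite F')
    {s₀ : Finset (L × L')} {t₀ : Finset (R × R')} (h₀ : Good F F' s₀ t₀) :
    ∃ (e : L ≃ L') (f : R ≃ R'),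
      (∀ p ∈ s₀, e p.1 = p.2) ∧ (∀ q ∈ t₀, f q.1 = q.2) ∧
      ∀ (x : L) (y : R), F' (e x) (f y) = F x y := by
  classical
  haveI : Countable L := hF.1.1
  haveI : Infinite L := hF.1.2
  haveI : Countable R := hF.2.1.1
  haveI : Infinite R := hF.2.1.2
  haveI : Countable L' := hF'.1.1
  haveI : Infinite L' := hF'.1.2
  haveI : Countable R' := hF'.2.1.1
  haveI : Infinite R' := hF'.2.1.2
  obtain ⟨eL, heL⟩ := exists_surjective_nat L
  obtain ⟨eR, heR⟩ := exists_surjective_nat R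
  obtain ⟨eL', heL'⟩ := exists_surjective_nat L'
  obtain ⟨eR', heR'⟩ := exists_surjective_nat R'
  have key : ∀ (p : {p : Finset (L × L') × Finset (R × R') // Good F F' p.1 p.2}) (n : ℕ),
      ∃ q : {p : Finset (L × L') × Finset (R × R') // Good F F' p.1 p.2},
        p.1.1 ⊆ q.1.1 ∧ p.1.2 ⊆ q.1.2 ∧
        (∃ a, (eL n, a) ∈ q.1.1) ∧ (∃ a, (a, eL' n) ∈ q.1.1) ∧
        (∃ b, (eR n, b) ∈ q.1.2) ∧ (∃ b, (b, eR' n) ∈ q.1.2) := by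
    intro p n
    obtain ⟨s', t', hs, ht, hg, h1, h2, h3, h4⟩ :=
      step hF hF' p.2 (eL n) (eL' n) (eR n) (eR' n)
    exact ⟨⟨(s', t'), hg⟩, hs, ht, h1, h2, h3, h4⟩
  choose nxt hn1 hn2 hn3 hn4 hn5 hn6 using key
  set Q : ℕ → {p : Finset (L × L') × Finset (R × R') // Good F F' p.1 p.2} :=
    fun n => Nat.rec (⟨(s₀, t₀), h₀⟩ :
      {p : Finset (L × L') × Finset (R × R') // Good F F' p.1 p.2})
      (fun n p => nxt p n) n with hQ
  have hQs : ∀ n, Q (n+1) = nxt (Q n) n := fun n => rfl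
  have mono1 : ∀ m n, m ≤ n → (Q m).1.1 ⊆ (Q n).1.1 := by
    intro m n h
    induction n, h using Nat.le_induction with
    | base => exact subset_rfl
    | succ n hmn ih => exact ih.trans (hn1 (Q n) n)
  have mono2 : ∀ m n, m ≤ n → (Q m).1.2 ⊆ (Q n).1.2 := by
    intro m n h
    induction n, h using Nat.le_induction with
    | base => exact subset_rfl
    | succ n hmn ih => exact ih.trans (hn2 (Q n) n)
  -- uniqueness of partners
  have uniqL : ∀ (x : L) (a a' : L') (m n : ℕ),
      (x, a) ∈ (Q m).1.1 → (x, a') ∈ (Q n).1.1 → a = a' := by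
    intro x a a' m n hm hn
    have h1 := mono1 m (max m n) (le_max_left _ _) hm
    have h2 := mono1 n (max m n) (le_max_right _ _) hn
    exact ((Q (max m n)).2.1 _ h1 _ h2).1 rfl
  have uniqL' : ∀ (a a' : L) (x : L') (m n : ℕ),
      (a, x) ∈ (Q m).1.1 → (a', x) ∈ (Q n).1.1 → a = a' := by
    intro a a' x m n hm hn
    have h1 := mono1 m (max m n) (le_max_left _ _) hm
    have h2 := mono1 n (max m n) (le_max_right _ _) hn
    exact ((Q (max m n)).2.1 _ h1 _ h2).2 rfl
  have uniqR : ∀ (y : R) (b b' : R') (m n : ℕ),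
      (y, b) ∈ (Q m).1.2 → (y, b') ∈ (Q n).1.2 → b = b' := by
    intro y b b' m n hm hn
    have h1 := mono2 m (max m n) (le_max_left _ _) hm
    have h2 := mono2 n (max m n) (le_max_right _ _) hn
    exact ((Q (max m n)).2.2.1 _ h1 _ h2).1 rfl
  have uniqR' : ∀ (b b' : R) (y : R') (m n : ℕ),
      (b, y) ∈ (Q m).1.2 → (b', y) ∈ (Q n).1.2 → b = b' := by
    intro b b' y m n hm hn
    have h1 := mono2 m (max m n) (le_max_left _ _) hm
    have h2 := mono2 n (max m n) (le_max_right _ _) hn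
    exact ((Q (max m n)).2.2.1 _ h1 _ h2).2 rfl
  -- totality
  have totL : ∀ x : L, ∃ a, ∃ n, (x, a) ∈ (Q n).1.1 := by
    intro x
    obtain ⟨n, rfl⟩ := heL x
    obtain ⟨a, ha⟩ := hn3 (Q n) n
    exact ⟨a, n + 1, by rw [hQs n]; exact ha⟩
  have totL' : ∀ x' : L', ∃ a, ∃ n, (a, x') ∈ (Q n).1.1 := by
    intro x'
    obtain ⟨n, rfl⟩ := heL' x'
    obtain ⟨a, ha⟩ := hn4 (Q n) n
    exact ⟨a, n + 1, by rw [hQs n]; exact ha⟩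
  have totR : ∀ y : R, ∃ b, ∃ n, (y, b) ∈ (Q n).1.2 := by
    intro y
    obtain ⟨n, rfl⟩ := heR y
    obtain ⟨b, hb⟩ := hn5 (Q n) n
    exact ⟨b, n + 1, by rw [hQs n]; exact hb⟩
  have totR' : ∀ y' : R', ∃ b, ∃ n, (b, y') ∈ (Q n).1.2 := by
    intro y'
    obtain ⟨n, rfl⟩ := heR' y'
    obtain ⟨b, hb⟩ := hn6 (Q n) n
    exact ⟨b, n + 1, by rw [hQs n]; exact hb⟩
  choose φ hφ using totL
  choose ψ hψ using totL'
  choose φR hφR using totR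
  choose ψR hψR using totR'
  have hφ' : ∀ x, ∃ n, (x, φ x) ∈ (Q n).1.1 := hφ
  refine ⟨⟨φ, ψ, ?_, ?_⟩, ⟨φR, ψR, ?_, ?_⟩, ?_, ?_, ?_⟩
  · intro x
    obtain ⟨n, h1⟩ := hφ x
    obtain ⟨m, h2⟩ := hψ (φ x)
    exact uniqL' _ _ _ m n h2 h1
  · intro x'
    obtain ⟨n, h1⟩ := hψ x'
    obtain ⟨m, h2⟩ := hφ (ψ x')
    exact uniqL _ _ _ m n h2 h1
  · intro y
    obtain ⟨n, h1⟩ := hφR y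
    obtain ⟨m, h2⟩ := hψR (φR y)
    exact uniqR' _ _ _ m n h2 h1
  · intro y'
    obtain ⟨n, h1⟩ := hψR y'
    obtain ⟨m, h2⟩ := hφR (ψR y')
    exact uniqR _ _ _ m n h2 h1
  · intro p hp
    obtain ⟨n, h1⟩ := hφ p.1
    have h2 : (p.1, p.2) ∈ (Q 0).1.1 := by exact hp
    exact uniqL _ _ _ n 0 h1 h2
  · intro q hq
    obtain ⟨n, h1⟩ := hφR q.1
    have h2 : (q.1, q.2) ∈ (Q 0).1.2 := by exact hq
    exact uniqR _ _ _ n 0 h1 h2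
  · intro x y
    obtain ⟨n, h1⟩ := hφ x
    obtain ⟨m, h2⟩ := hφR y
    have h1' := mono1 n (max n m) (le_max_left _ _) h1
    have h2' := mono2 m (max n m) (le_max_right _ _) h2
    exact (Q (max n m)).2.2.2 _ h1' _ h2'


lemma extend_finset_domL [Nonempty C] (hF' : IsGenericBipartite F') (A : Finset L) :
    ∀ {s : Finset (L × L')} {t : Finset (R × R')}, Good F F' s t →
      ∃ s', s ⊆ s' ∧ Good F F' s' t ∧ ∀ a ∈ A, ∃ a', (a, a') ∈ s' := by
  classical
  induction A using Finset.induction_on with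
  | empty => exact fun h => ⟨_, subset_rfl, h, by simp⟩
  | @insert x A hxA ih =>
    intro s t h
    obtain ⟨s', hsub, hg, hall⟩ := ih h
    obtain ⟨x', hx'⟩ := extend_domL hF' hg x
    refine ⟨insert (x, x') s', hsub.trans (Finset.subset_insert _ _), hx', ?_⟩
    intro a ha
    rcases Finset.mem_insert.1 ha with rfl | ha
    · exact ⟨x', Finset.mem_insert_self _ _⟩
    · obtain ⟨a', ha'⟩ := hall a ha
      exact ⟨a', Finset.mem_insert_of_mem ha'⟩

lemma extend_finset_domR [Nonempty C] (hF' : IsGenericBipartite F') (B : Finset R) :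
    ∀ {s : Finset (L × L')} {t : Finset (R × R')}, Good F F' s t →
      ∃ t', t ⊆ t' ∧ Good F F' s t' ∧ ∀ b ∈ B, ∃ b', (b, b') ∈ t' := by
  classical
  induction B using Finset.induction_on with
  | empty => exact fun h => ⟨_, subset_rfl, h, by simp⟩
  | @insert y B hyB ih =>
    intro s t h
    obtain ⟨t', hsub, hg, hall⟩ := ih h
    obtain ⟨y', hy'⟩ := extend_domR hF' hg y
    refine ⟨insert (y, y') t', hsub.trans (Finset.subset_insert _ _), hy', ?_⟩
    intro b hb
    rcases Finset.mem_insert.1 hb with rfl | hb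
    · exact ⟨y', Finset.mem_insert_self _ _⟩
    · obtain ⟨b', hb'⟩ := hall b hb
      exact ⟨b', Finset.mem_insert_of_mem hb'⟩

end GenBip

/-- For a nonempty countable colour set `C`:
(a) any `C`-generic complete `C`-edge-coloured bipartite graph is homogeneous;
(b) every complete `C`-edge-coloured bipartite graph with finite (nonempty) left and right
sets embeds colour-preservingly into any `C`-generic graph;
(c) any two `C`-generic complete `C`-edge-coloured bipartite graphs are isomorphic via a
pair of colour-preserving bijections of left sets and of right sets. -/
theorem generic_bipartite_properties {C : Type} [Countable C] [Nonempty C] :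
    (∀ (L R : Type) (F : L → R → C), IsGenericBipartite F → IsHomogeneousBipartite F) ∧
    (∀ (L R : Type) (F : L → R → C), IsGenericBipartite F →
      ∀ (L₀ R₀ : Type) [Finite L₀] [Finite R₀] [Nonempty L₀] [Nonempty R₀]
        (F₀ : L₀ → R₀ → C),
        ∃ (el : L₀ → L) (er : R₀ → R),
          Function.Injective el ∧ Function.Injective er ∧
          ∀ (a : L₀) (b : R₀), F (el a) (er b) = F₀ a b) ∧
    (∀ (L R L' R' : Type) (F : L → R → C) (F' : L' → R' → C),
      IsGenericBipartite F → IsGenericBipartite F' →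
      ∃ (e : L ≃ L') (f : R ≃ R'), ∀ (x : L) (y : R), F' (e x) (f y) = F x y) := by
  classical
  refine ⟨?_, ?_, ?_⟩
  · -- (a) homogeneity
    intro L R F hF A B α β hα hβ hcomp
    have h₀ : GenBip.Good F F (A.image fun a => (a, α a)) (B.image fun b => (b, β b)) := by
      refine ⟨?_, ?_, ?_⟩
      · intro p hp q hq
        obtain ⟨a, ha, rfl⟩ := Finset.mem_image.1 hp
        obtain ⟨a₂, ha₂, rfl⟩ := Finset.mem_image.1 hq
        constructor
        · rintro (h : a = a₂); rw [h]
        · intro h; exact hα (Finset.mem_coe.2 ha) (Finset.mem_coe.2 ha₂) h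
      · intro p hp q hq
        obtain ⟨b, hb, rfl⟩ := Finset.mem_image.1 hp
        obtain ⟨b₂, hb₂, rfl⟩ := Finset.mem_image.1 hq
        constructor
        · rintro (h : b = b₂); rw [h]
        · intro h; exact hβ (Finset.mem_coe.2 hb) (Finset.mem_coe.2 hb₂) h
      · intro p hp q hq
        obtain ⟨a, ha, rfl⟩ := Finset.mem_image.1 hp
        obtain ⟨b, hb, rfl⟩ := Finset.mem_image.1 hq
        exact hcomp a ha b hb
    obtain ⟨e, f, he, hf, hcol⟩ := GenBip.backAndForth hF hF h₀
    refine ⟨e, f, ?_, ?_, hcol⟩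
    · intro a ha; exact he (a, α a) (Finset.mem_image_of_mem _ ha)
    · intro b hb; exact hf (b, β b) (Finset.mem_image_of_mem _ hb)
  · -- (b) finite embedding
    intro L R F hF L₀ R₀ hfin1 hfin2 hne1 hne2 F₀
    haveI := hfin1; haveI := hfin2; haveI := hne1; haveI := hne2
    haveI := Fintype.ofFinite L₀
    haveI := Fintype.ofFinite R₀
    have h₀ : GenBip.Good F₀ F (∅ : Finset (L₀ × L)) (∅ : Finset (R₀ × R)) :=
      ⟨by simp, by simp, by simp⟩
    obtain ⟨s, -, hg1, hs⟩ := GenBip.extend_finset_domL hF (Finset.univ : Finset L₀) h₀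
    obtain ⟨t, -, hg2, ht⟩ := GenBip.extend_finset_domR hF (Finset.univ : Finset R₀) hg1
    choose el hel using fun a : L₀ => hs a (Finset.mem_univ a)
    choose er her using fun b : R₀ => ht b (Finset.mem_univ b)
    refine ⟨el, er, ?_, ?_, ?_⟩
    · intro a a₂ h
      exact (hg2.1 (a, el a) (hel a) (a₂, el a₂) (hel a₂)).2 h
    · intro b b₂ h
      exact (hg2.2.1 (b, er b) (her b) (b₂, er b₂) (her b₂)).2 h
    · intro a b
      exact hg2.2.2 (a, el a) (hel a) (b, er b) (her b)
  · -- (c) uniqueness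
    intro L R L' R' F F' hF hF'
    have h₀ : GenBip.Good F F' (∅ : Finset (L × L')) (∅ : Finset (R × R')) :=
      ⟨by simp, by simp, by simp⟩
    obtain ⟨e, f, -, -, hcol⟩ := GenBip.backAndForth hF hF' h₀
    exact ⟨e, f, hcol⟩
end

section
/- Let S = M[G;I,Λ;P] and T = M[H;J,M;Q] be normalised Rees matrix semigroups. (a) If θ : G → H is a group homomorphism, ψ_I : I → J and ψ_Λ : Λ → M are maps, and u : I → H, v : Λ → H are families satisfying θ(P(λ,i)) = v_λ · Q(ψ_Λ(λ), ψ_I(i)) · u_i for all i ∈ I, λ ∈ Λ, then the map φ = [θ,ψ,u,v] : S → T defined by φ(i,g,λ) = (ψ_I(i), u_i·θ(g)·v_λ, ψ_Λ(λ)) is a semigroup homomorphism. (b) Conversely, every semigroup homomorphism from S to T is of this form. (c) Such a φ is injective if and only if θ, ψ_I and ψ_Λ are all injective, and surjective if and only if θ, ψ_I and ψ_Λ are all surjective. -/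
lemma monoidHom_mk'_apply {G H : Type*} [Group G] [Group H] (f : G → H)
    (h : ∀ a b : G, f (a * b) = f a * f b) (x : G) : MonoidHom.mk' f h x = f x := rfl

/-- For normalised Rees matrix semigroups `S = M[G;I,Λ;P]` and
`T = M[H;J,M;Q]`: (a) any `[θ,ψ,u,v]` satisfying the compatibility condition
`θ(P(λ,i)) = v_λ · Q(ψ_Λ(λ), ψ_I(i)) · u_i` is a semigroup homomorphism `S → T`;
(b) every semigroup homomorphism `S → T` is of this form; (c) such a map is injective
(resp. surjective) iff `θ`, `ψ_I` and `ψ_Λ` are all injective (resp. surjective). -/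
theorem rees_hom_form {G H I Λ J M : Type*} [Group G] [Group H]
    (P : Λ → I → G) (Q : M → J → H)
    (iI : I) (lL : Λ) (hP1 : ∀ j : I, P lL j = 1) (hP2 : ∀ m : Λ, P m iI = 1)
    (jJ : J) (mM : M) (hQ1 : ∀ j : J, Q mM j = 1) (hQ2 : ∀ m : M, Q m jJ = 1) :
    (∀ (θ : G →* H) (ψI : I → J) (ψΛ : Λ → M) (u : I → H) (v : Λ → H),
      (∀ (i : I) (l : Λ), θ (P l i) = v l * Q (ψΛ l) (ψI i) * u i) →
      ∀ x y : I × G × Λ,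
        reesMap θ ψI ψΛ u v (reesMul P x y) =
          reesMul Q (reesMap θ ψI ψΛ u v x) (reesMap θ ψI ψΛ u v y)) ∧
    (∀ φ : I × G × Λ → J × H × M,
      (∀ x y : I × G × Λ, φ (reesMul P x y) = reesMul Q (φ x) (φ y)) →
      ∃ (θ : G →* H) (ψI : I → J) (ψΛ : Λ → M) (u : I → H) (v : Λ → H),
        (∀ (i : I) (l : Λ), θ (P l i) = v l * Q (ψΛ l) (ψI i) * u i) ∧
        φ = reesMap θ ψI ψΛ u v) ∧
    (∀ (θ : G →* H) (ψI : I → J) (ψΛ : Λ → M) (u : I → H) (v : Λ → H),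
      (∀ (i : I) (l : Λ), θ (P l i) = v l * Q (ψΛ l) (ψI i) * u i) →
      (Function.Injective (reesMap θ ψI ψΛ u v) ↔
        Function.Injective θ ∧ Function.Injective ψI ∧ Function.Injective ψΛ) ∧
      (Function.Surjective (reesMap θ ψI ψΛ u v) ↔
        Function.Surjective θ ∧ Function.Surjective ψI ∧ Function.Surjective ψΛ)) := by
  refine ⟨?_, ?_, ?_⟩
  · -- (a)
    rintro θ ψI ψΛ u v hc ⟨i, g, l⟩ ⟨j, h, m⟩
    simp only [reesMul, reesMap, map_mul, hc, Prod.mk.injEq]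
    refine ⟨trivial, ?_, trivial⟩
    group
  · -- (b)
    intro φ hφ
    have key0 : ∀ (i : I) (g : G) (l : Λ),
        φ (i, g, l) = reesMul Q (reesMul Q (φ (i, 1, lL)) (φ (iI, g, lL))) (φ (iI, 1, l)) := by
      intro i g l
      have h1 : reesMul P (i, (1:G), lL) (iI, g, lL) = (i, g, lL) := by
        simp [reesMul, hP1]
      have h2 : reesMul P (i, g, lL) (iI, (1:G), l) = (i, g, l) := by
        simp [reesMul, hP1]
      rw [← h2, hφ, ← h1, hφ]
    have hm : ∀ (i : I) (g : G), (φ (i, g, lL)).2.2 = (φ (iI, (1:G), lL)).2.2 := by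
      intro i g
      have h2 : reesMul P (i, g, lL) (iI, (1:G), lL) = (i, g, lL) := by
        simp [reesMul, hP1]
      conv_lhs => rw [← h2, hφ]
      rfl
    have hj : ∀ (g : G) (l : Λ), (φ (iI, g, l)).1 = (φ (iI, (1:G), lL)).1 := by
      intro g l
      have h1 : reesMul P (iI, (1:G), lL) (iI, g, l) = (iI, g, l) := by
        simp [reesMul, hP1]
      conv_lhs => rw [← h1, hφ]
      rfl
    have fmul : ∀ g h : G, (φ (iI, g * h, lL)).2.1
        = (φ (iI, g, lL)).2.1 * Q (φ (iI, (1:G), lL)).2.2 (φ (iI, (1:G), lL)).1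
          * (φ (iI, h, lL)).2.1 := by
      intro g h
      have h1 : reesMul P (iI, g, lL) (iI, h, lL) = (iI, g * h, lL) := by
        simp [reesMul, hP1]
      rw [← h1, hφ]
      simp [reesMul, hm iI g, hj h lL]
    refine ⟨MonoidHom.mk' (fun g => (φ (iI, g, lL)).2.1
        * Q (φ (iI, (1:G), lL)).2.2 (φ (iI, (1:G), lL)).1) ?_,
      fun i => (φ (i, (1:G), lL)).1, fun l => (φ (iI, (1:G), l)).2.2,
      fun i => (φ (i, (1:G), lL)).2.1
        * Q (φ (iI, (1:G), lL)).2.2 (φ (iI, (1:G), lL)).1,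
      fun l => (φ (iI, (1:G), l)).2.1, ?_, ?_⟩
    · intro a b
      rw [fmul a b]
      group
    · intro i l
      have h1 : reesMul P (iI, (1:G), l) (i, (1:G), lL) = (iI, P l i, lL) := by
        simp [reesMul]
      rw [monoidHom_mk'_apply]
      dsimp only
      rw [← h1, hφ]
      simp [reesMul, mul_assoc]
    · funext x
      obtain ⟨i, g, l⟩ := x
      rw [key0]
      simp only [reesMap, reesMul, monoidHom_mk'_apply]
      refine Prod.ext rfl (Prod.ext ?_ rfl)
      simp only [hm, hj, mul_assoc]
  · -- (c)
    intro θ ψI ψΛ u v hc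
    have hu1 : ∀ i, v lL * Q (ψΛ lL) (ψI i) * u i = 1 := by
      intro i
      have h := hc i lL
      rw [hP1, map_one] at h
      exact h.symm
    have hv1 : ∀ l, v l * Q (ψΛ l) (ψI iI) * u iI = 1 := by
      intro l
      have h := hc iI l
      rw [hP2, map_one] at h
      exact h.symm
    have hu : ∀ i, u i = (v lL * Q (ψΛ lL) (ψI i))⁻¹ := by
      intro i
      exact eq_inv_of_mul_eq_one_right (hu1 i)
    have hv : ∀ l, v l = (Q (ψΛ l) (ψI iI) * u iI)⁻¹ := by
      intro l
      have h := hv1 l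
      rw [mul_assoc] at h
      exact eq_inv_of_mul_eq_one_left h
    constructor
    · constructor
      · intro hinj
        refine ⟨?_, ?_, ?_⟩
        · intro a b hab
          have h : ((iI, a, lL) : I × G × Λ) = (iI, b, lL) :=
            hinj (by simp [reesMap, hab])
          simpa using h
        · intro a b hab
          have hu' : u a = u b := by
            rw [hu a, hu b, hab]
          have h : ((a, (1:G), lL) : I × G × Λ) = (b, 1, lL) :=
            hinj (by simp [reesMap, hab, hu'])
          simpa using h
        · intro a b hab
          have hv' : v a = v b := by
            rw [hv a, hv b, hab]
          have h : ((iI, (1:G), a) : I × G × Λ) = (iI, 1, b) :=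
            hinj (by simp [reesMap, hab, hv'])
          simpa using h
      · rintro ⟨hθ, hI, hL⟩ ⟨a, g, l⟩ ⟨b, h, m⟩ hxy
        simp only [reesMap, Prod.mk.injEq] at hxy
        obtain ⟨h1, h2, h3⟩ := hxy
        have e1 : a = b := hI h1
        have e3 : l = m := hL h3
        subst e1; subst e3
        have e2 : g = h := hθ (by
          have := mul_left_cancel (mul_right_cancel h2)
          exact this)
        rw [e2]
    · constructor
      · intro hs
        refine ⟨?_, ?_, ?_⟩
        · intro t
          obtain ⟨x, hx⟩ := hs (jJ, (v lL)⁻¹ * t * (u iI)⁻¹, mM)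
          obtain ⟨i, g, l⟩ := x
          simp only [reesMap, Prod.mk.injEq] at hx
          obtain ⟨h1, h2, h3⟩ := hx
          refine ⟨g, ?_⟩
          have hui : u i = (v lL)⁻¹ := by
            rw [hu i, h1, hQ2, mul_one]
          have hvl : v l = (u iI)⁻¹ := by
            rw [hv l, h3, hQ1, one_mul]
          rw [hui, hvl] at h2
          have := mul_left_cancel (mul_right_cancel h2)
          exact this
        · intro j
          obtain ⟨x, hx⟩ := hs (j, 1, mM)
          exact ⟨x.1, congrArg Prod.fst hx⟩
        · intro m
          obtain ⟨x, hx⟩ := hs (jJ, 1, m)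
          exact ⟨x.2.2, congrArg (fun y => y.2.2) hx⟩
      · rintro ⟨hθ, hI, hL⟩ ⟨j, t, m⟩
        obtain ⟨i, hi⟩ := hI j
        obtain ⟨l, hl⟩ := hL m
        obtain ⟨g, hg⟩ := hθ ((u i)⁻¹ * t * (v l)⁻¹)
        refine ⟨(i, g, l), ?_⟩
        simp only [reesMap, hi, hl, hg, Prod.mk.injEq]
        refine ⟨trivial, ?_, trivial⟩
        group
end

section
/- Let S = M[G;I,Λ;P] and T = M[H;J,M;Q] be normalised Rees matrix semigroups and let φ : S → T be a semigroup homomorphism. Then there exist a group homomorphism θ : G → H, maps ψ_I : I → J and ψ_Λ : Λ → M, and families u : I → H, v : Λ → H with u_i ∈ ⟨H^Q⟩ and v_λ ∈ ⟨H^Q⟩ for all i ∈ I, λ ∈ Λ, such that φ = [θ,ψ,u,v], θ maps ⟨G^P⟩ into ⟨H^Q⟩, and the restriction of φ to ⟨E(S)⟩ = I × ⟨G^P⟩ × Λ is a semigroup homomorphism into ⟨E(T)⟩ = J × ⟨H^Q⟩ × M. -/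
/-- Every semigroup homomorphism `φ` between normalised Rees matrix
semigroups `S = M[G;I,Λ;P]` and `T = M[H;J,M;Q]` can be written as `[θ,ψ,u,v]` with all
`u_i, v_λ ∈ ⟨H^Q⟩`, with `θ` mapping `⟨G^P⟩` into `⟨H^Q⟩`, and with `φ` restricting to a
homomorphism from `⟨E(S)⟩ = I × ⟨G^P⟩ × Λ` into `⟨E(T)⟩ = J × ⟨H^Q⟩ × M`. -/
theorem rees_hom_restricts_to_idempotent_generated {G H I Λ J M : Type*} [Group G] [Group H]
    (P : Λ → I → G) (Q : M → J → H)
    (iI : I) (lL : Λ) (hP1 : ∀ j : I, P lL j = 1) (hP2 : ∀ m : Λ, P m iI = 1)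
    (jJ : J) (mM : M) (hQ1 : ∀ j : J, Q mM j = 1) (hQ2 : ∀ m : M, Q m jJ = 1)
    (φ : I × G × Λ → J × H × M)
    (hφ : ∀ x y : I × G × Λ, φ (reesMul P x y) = reesMul Q (φ x) (φ y)) :
    ∃ (θ : G →* H) (ψI : I → J) (ψΛ : Λ → M) (u : I → H) (v : Λ → H),
      (∀ (i : I) (l : Λ), θ (P l i) = v l * Q (ψΛ l) (ψI i) * u i) ∧
      φ = reesMap θ ψI ψΛ u v ∧
      (∀ i : I, u i ∈ Subgroup.closure (reesEntries Q)) ∧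
      (∀ l : Λ, v l ∈ Subgroup.closure (reesEntries Q)) ∧
      (∀ g ∈ Subgroup.closure (reesEntries P), θ g ∈ Subgroup.closure (reesEntries Q)) ∧
      (∀ x : I × G × Λ, x.2.1 ∈ Subgroup.closure (reesEntries P) →
        (φ x).2.1 ∈ Subgroup.closure (reesEntries Q)) := by
  -- Notation: e = φ(iI,1,lL) is an idempotent of T.
  -- Key decomposition: (i,g,λ) = (i,1,lL)(iI,g,lL)(iI,1,λ).
  have key : ∀ x : I × G × Λ,
      φ x = reesMul Q (reesMul Q (φ (x.1, 1, lL)) (φ (iI, x.2.1, lL))) (φ (iI, 1, x.2.2)) := by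
    intro x
    rw [← hφ, ← hφ]
    congr 1
    simp [reesMul, hP1]
  -- idempotents are mapped to elements with middle the inverse of a matrix entry
  have hid : ∀ x : I × G × Λ, reesMul P x x = x →
      (φ x).2.1 = (Q (φ x).2.2 (φ x).1)⁻¹ := by
    intro x hx
    have h2 : reesMul Q (φ x) (φ x) = φ x := by rw [← hφ, hx]
    have h3 := congrArg (fun z : J × H × M => z.2.1) h2
    simp only [reesMul] at h3
    have h4 : (φ x).2.1 * Q (φ x).2.2 (φ x).1 = 1 := by
      have : (φ x).2.1 * Q (φ x).2.2 (φ x).1 * (φ x).2.1 = 1 * (φ x).2.1 := by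
        rw [one_mul]; exact h3
      exact mul_right_cancel this
    exact eq_inv_of_mul_eq_one_left h4
  -- components of the three basic families
  have hfst : ∀ x : I × G × Λ, (φ x).1 = (φ (x.1, 1, lL)).1 := fun x => by
    rw [key x]; simp [reesMul]
  have hthd : ∀ x : I × G × Λ, (φ x).2.2 = (φ (iI, 1, x.2.2)).2.2 := fun x => by
    rw [key x]; simp [reesMul]
  have ha2 : ∀ i : I, (φ (i, 1, lL)).2.2 = (φ (iI, 1, lL)).2.2 := fun i => hthd (i, 1, lL)
  have hb1 : ∀ l : Λ, (φ (iI, 1, l)).1 = (φ (iI, 1, lL)).1 := fun l => hfst (iI, 1, l)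
  have hc1 : ∀ g : G, (φ (iI, g, lL)).1 = (φ (iI, 1, lL)).1 := fun g => hfst (iI, g, lL)
  have hc2 : ∀ g : G, (φ (iI, g, lL)).2.2 = (φ (iI, 1, lL)).2.2 := fun g => hthd (iI, g, lL)
  have hai : ∀ i : I, (φ (i, 1, lL)).2.1 = (Q (φ (iI, 1, lL)).2.2 (φ (i, 1, lL)).1)⁻¹ := by
    intro i
    have := hid (i, 1, lL) (by simp [reesMul, hP1])
    rwa [ha2 i] at this
  have hbl : ∀ l : Λ, (φ (iI, 1, l)).2.1 = (Q (φ (iI, 1, l)).2.2 (φ (iI, 1, lL)).1)⁻¹ := by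
    intro l
    have := hid (iI, 1, l) (by simp [reesMul, hP2])
    rwa [hb1 l] at this
  have he2 : (φ (iI, 1, lL)).2.1 = (Q (φ (iI, 1, lL)).2.2 (φ (iI, 1, lL)).1)⁻¹ := hai iI
  -- multiplicativity of g ↦ middle of φ(iI,g,lL), twisted by q₀
  have hcmul : ∀ g h : G, (φ (iI, g * h, lL)).2.1
      = (φ (iI, g, lL)).2.1 * Q (φ (iI, 1, lL)).2.2 (φ (iI, 1, lL)).1 * (φ (iI, h, lL)).2.1 := by
    intro g h
    have h1 : φ (iI, g * h, lL) = reesMul Q (φ (iI, g, lL)) (φ (iI, h, lL)) := by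
      rw [← hφ]; congr 1; simp [reesMul, hP1]
    rw [h1]
    simp only [reesMul]
    rw [hc2 g, hc1 h]
  set q₀ : H := Q (φ (iI, 1, lL)).2.2 (φ (iI, 1, lL)).1 with hq₀
  have hmth : ∀ g h : G,
      (φ (iI, g * h, lL)).2.1 * q₀ = ((φ (iI, g, lL)).2.1 * q₀) * ((φ (iI, h, lL)).2.1 * q₀) := by
    intro g h
    rw [hcmul g h]
    group
  have hform : ∀ x : I × G × Λ, φ x = ((φ (x.1, 1, lL)).1,
      ((Q (φ (iI, 1, lL)).2.2 (φ (x.1, 1, lL)).1)⁻¹ * q₀) * ((φ (iI, x.2.1, lL)).2.1 * q₀) *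
        (Q (φ (iI, 1, x.2.2)).2.2 (φ (iI, 1, lL)).1)⁻¹,
      (φ (iI, 1, x.2.2)).2.2) := by
    intro x
    rw [key x]
    simp only [reesMul]
    rw [hai x.1, ha2 x.1, hc1 x.2.1, hc2 x.2.1, hb1 x.2.2, hbl x.2.2]
    simp only [Prod.mk.injEq, true_and, and_true]
    rw [← hq₀]
    group
  refine ⟨MonoidHom.mk' (fun g => (φ (iI, g, lL)).2.1 * q₀) hmth,
    fun i => (φ (i, 1, lL)).1, fun l => (φ (iI, 1, l)).2.2,
    fun i => (Q (φ (iI, 1, lL)).2.2 (φ (i, 1, lL)).1)⁻¹ * q₀,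
    fun l => (Q (φ (iI, 1, l)).2.2 (φ (iI, 1, lL)).1)⁻¹, ?_, ?_, ?_, ?_, ?_, ?_⟩
  case _ =>
    -- the compatibility identity θ(P l i) = v l * Q (ψΛ l) (ψI i) * u i
    intro i l
    have h1 : φ (iI, P l i, lL) = reesMul Q (φ (iI, 1, l)) (φ (i, 1, lL)) := by
      rw [← hφ]; congr 1; simp [reesMul]
    show (φ (iI, P l i, lL)).2.1 * q₀ = _
    rw [h1]
    simp only [reesMul]
    rw [hbl l, hai i]
    group
  case _ =>
    funext x
    rw [hform x]
    simp only [reesMap, MonoidHom.mk'_apply]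
  case _ =>
    intro i
    exact mul_mem (inv_mem (Subgroup.subset_closure ⟨_, _, rfl⟩))
      (Subgroup.subset_closure ⟨_, _, rfl⟩)
  case _ =>
    intro l
    exact inv_mem (Subgroup.subset_closure ⟨_, _, rfl⟩)
  case _ =>
    have hsub : ∀ g ∈ reesEntries P,
        (φ (iI, g, lL)).2.1 * q₀ ∈ Subgroup.closure (reesEntries Q) := by
      rintro g ⟨l, i, rfl⟩
      have h1 : φ (iI, P l i, lL) = reesMul Q (φ (iI, 1, l)) (φ (i, 1, lL)) := by
        rw [← hφ]; congr 1; simp [reesMul]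
      rw [h1]
      simp only [reesMul]
      rw [hbl l, hai i]
      refine mul_mem (mul_mem (mul_mem (inv_mem ?_) ?_) (inv_mem ?_)) ?_ <;>
        exact Subgroup.subset_closure ⟨_, _, rfl⟩
    intro g hg
    have hle : Subgroup.closure (reesEntries P) ≤
        Subgroup.comap (MonoidHom.mk' (fun g => (φ (iI, g, lL)).2.1 * q₀) hmth)
          (Subgroup.closure (reesEntries Q)) := by
      rw [Subgroup.closure_le]
      intro g hgmem
      exact hsub g hgmem
    exact hle hg
  case _ =>
    intro x hx
    have hform2 : (φ x).2.1
        = ((Q (φ (iI, 1, lL)).2.2 (φ (x.1, 1, lL)).1)⁻¹ * q₀) * ((φ (iI, x.2.1, lL)).2.1 * q₀)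
          * (Q (φ (iI, 1, x.2.2)).2.2 (φ (iI, 1, lL)).1)⁻¹ := by
      rw [hform x]
    rw [hform2]
    have htheta : (φ (iI, x.2.1, lL)).2.1 * q₀ ∈ Subgroup.closure (reesEntries Q) := by
      have hsub : ∀ g ∈ reesEntries P,
          (φ (iI, g, lL)).2.1 * q₀ ∈ Subgroup.closure (reesEntries Q) := by
        rintro g ⟨l, i, rfl⟩
        have h1 : φ (iI, P l i, lL) = reesMul Q (φ (iI, 1, l)) (φ (i, 1, lL)) := by
          rw [← hφ]; congr 1; simp [reesMul]
        rw [h1]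
        simp only [reesMul]
        rw [hbl l, hai i]
        refine mul_mem (mul_mem (mul_mem (inv_mem ?_) ?_) (inv_mem ?_)) ?_ <;>
          exact Subgroup.subset_closure ⟨_, _, rfl⟩
      have hle : Subgroup.closure (reesEntries P) ≤
          Subgroup.comap (MonoidHom.mk' (fun g => (φ (iI, g, lL)).2.1 * q₀) hmth)
            (Subgroup.closure (reesEntries Q)) := by
        rw [Subgroup.closure_le]
        intro g hgmem
        exact hsub g hgmem
      exact hle hx
    refine mul_mem (mul_mem (mul_mem (inv_mem ?_) ?_) htheta) (inv_mem ?_) <;>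
      exact Subgroup.subset_closure ⟨_, _, rfl⟩
end

section
/- Let S = M[G;I,Λ;P] and T = M[H;J,M;Q] be Rees matrix semigroups and let φ = [θ,ψ,u,v] and φ' = [θ',ψ',u',v'] be two semigroup homomorphisms from S to T of the standard form. Then φ = φ' if and only if ψ_I = ψ'_I, ψ_Λ = ψ'_Λ, u_i·v_λ = u'_i·v'_λ for all i ∈ I and λ ∈ Λ, and for every i ∈ I and every g ∈ G, θ(g) = (u_i⁻¹u'_i)·θ'(g)·(u_i⁻¹u'_i)⁻¹. -/
/-- Two semigroup homomorphisms `[θ,ψ,u,v]` and `[θ',ψ',u',v']` between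
Rees matrix semigroups (with nonempty index sets) are equal iff `ψ_I = ψ'_I`,
`ψ_Λ = ψ'_Λ`, `u_i·v_λ = u'_i·v'_λ` for all `i, λ`, and for every `i` and `g`,
`θ(g) = (u_i⁻¹u'_i)·θ'(g)·(u_i⁻¹u'_i)⁻¹`. -/
theorem rees_hom_eq_iff {G H I Λ J M : Type*} [Group G] [Group H]
    [Nonempty I] [Nonempty Λ] [Nonempty J] [Nonempty M]
    (P : Λ → I → G) (Q : M → J → H)
    (θ θ' : G →* H) (ψI ψI' : I → J) (ψΛ ψΛ' : Λ → M)
    (u u' : I → H) (v v' : Λ → H)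
    (hc : ∀ (i : I) (l : Λ), θ (P l i) = v l * Q (ψΛ l) (ψI i) * u i)
    (hc' : ∀ (i : I) (l : Λ), θ' (P l i) = v' l * Q (ψΛ' l) (ψI' i) * u' i) :
    reesMap θ ψI ψΛ u v = reesMap θ' ψI' ψΛ' u' v' ↔
      ψI = ψI' ∧ ψΛ = ψΛ' ∧ (∀ (i : I) (l : Λ), u i * v l = u' i * v' l) ∧
      ∀ (i : I) (g : G), θ g = ((u i)⁻¹ * u' i) * θ' g * ((u i)⁻¹ * u' i)⁻¹ := by
  constructor
  · intro h
    have hpt : ∀ (i : I) (g : G) (l : Λ),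
        (ψI i, u i * θ g * v l, ψΛ l) = (ψI' i, u' i * θ' g * v' l, ψΛ' l) := by
      intro i g l
      exact congrFun h (i, g, l)
    refine ⟨funext fun i => ?_, funext fun l => ?_, fun i l => ?_, fun i g => ?_⟩
    · exact (Prod.mk.injEq _ _ _ _ ▸ hpt i 1 (Classical.arbitrary Λ)).1
    · exact congrArg (fun x => x.2.2) (hpt (Classical.arbitrary I) 1 l)
    · have := congrArg (fun x => x.2.1) (hpt i 1 l)
      simpa using this
    · have l := Classical.arbitrary Λ
      have h1 : u i * v l = u' i * v' l := by
        have := congrArg (fun x => x.2.1) (hpt i 1 l); simpa using this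
      have h2 : u i * θ g * v l = u' i * θ' g * v' l :=
        congrArg (fun x => x.2.1) (hpt i g l)
      have hv' : v' l = (u' i)⁻¹ * (u i * v l) := by rw [h1]; group
      have key : u i * θ g * v l = (u' i * θ' g * (u' i)⁻¹ * u i) * v l := by
        rw [h2, hv']; group
      have key2 := mul_right_cancel key
      have : θ g = (u i)⁻¹ * (u' i * θ' g * (u' i)⁻¹ * u i) := by rw [← key2]; group
      rw [this]; group
  · rintro ⟨h1, h2, h3, h4⟩
    funext x
    obtain ⟨i, g, l⟩ := x
    simp only [reesMap, h1, h2]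
    refine Prod.ext rfl (Prod.ext ?_ rfl)
    simp only
    have hv : v l = (u i)⁻¹ * (u' i * v' l) := by rw [← h3 i l]; group
    rw [h4 i g, hv]; group
end

section
/- Let S = M[G;I,Λ;P] and T = M[H;J,M;Q] be Rees matrix semigroups in which every entry of P equals the identity ε_G of G and every entry of Q equals the identity ε_H of H. Then for every group homomorphism θ : G → H and all maps ψ_I : I → J, ψ_Λ : Λ → M, the map φ(i,g,λ) = (ψ_I(i), θ(g), ψ_Λ(λ)) is a semigroup homomorphism from S to T; conversely, every semigroup homomorphism from S to T has this form. -/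
/-- If the sandwich matrices `P` and `Q` have all entries equal to the
identity (so both Rees matrix semigroups are rectangular groups), then for every group
homomorphism `θ : G → H` and maps `ψ_I : I → J`, `ψ_Λ : Λ → M` the map
`(i,g,λ) ↦ (ψ_I(i), θ(g), ψ_Λ(λ))` is a semigroup homomorphism `S → T`; conversely,
every semigroup homomorphism from `S` to `T` has this form. -/
theorem rees_hom_trivial_sandwich {G H I Λ J M : Type*} [Group G] [Group H]
    [Nonempty I] [Nonempty Λ] [Nonempty J] [Nonempty M]
    (P : Λ → I → G) (Q : M → J → H)
    (hP : ∀ (l : Λ) (i : I), P l i = 1) (hQ : ∀ (m : M) (j : J), Q m j = 1) :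
    (∀ (θ : G →* H) (ψI : I → J) (ψΛ : Λ → M) (x y : I × G × Λ),
      ((fun z : I × G × Λ => ((ψI z.1, θ z.2.1, ψΛ z.2.2) : J × H × M)) (reesMul P x y)) =
        reesMul Q ((fun z : I × G × Λ => ((ψI z.1, θ z.2.1, ψΛ z.2.2) : J × H × M)) x)
          ((fun z : I × G × Λ => ((ψI z.1, θ z.2.1, ψΛ z.2.2) : J × H × M)) y)) ∧
    (∀ φ : I × G × Λ → J × H × M,
      (∀ x y : I × G × Λ, φ (reesMul P x y) = reesMul Q (φ x) (φ y)) →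
      ∃ (θ : G →* H) (ψI : I → J) (ψΛ : Λ → M),
        ∀ z : I × G × Λ, φ z = (ψI z.1, θ z.2.1, ψΛ z.2.2)) := by
  constructor
  · intro θ ψI ψΛ x y
    simp [reesMul, hP, hQ, map_mul]
  · intro φ hφ
    obtain ⟨i0⟩ := ‹Nonempty I›
    obtain ⟨l0⟩ := ‹Nonempty Λ›
    have key : ∀ (i j : I) (g h : G) (l m : Λ),
        φ (i, g * h, m) =
          ((φ (i, g, l)).1, (φ (i, g, l)).2.1 * (φ (j, h, m)).2.1, (φ (j, h, m)).2.2) := by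
      intro i j g h l m
      have := hφ (i, g, l) (j, h, m)
      simpa [reesMul, hP, hQ] using this
    have h1 : ∀ (i : I) (l : Λ), (φ (i, 1, l)).2.1 = 1 := by
      intro i l
      have h2 := congrArg (fun z : J × H × M => z.2.1) (key i i 1 1 l l)
      simp only [one_mul] at h2
      exact (left_eq_mul.mp h2)
    have hmid : ∀ (i : I) (g : G) (l : Λ), (φ (i, g, l)).2.1 = (φ (i0, g, l0)).2.1 := by
      intro i g l
      have e1 := congrArg (fun z : J × H × M => z.2.1) (key i i0 1 g l0 l)
      have e2 := congrArg (fun z : J × H × M => z.2.1) (key i0 i0 g 1 l0 l)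
      simp only [one_mul, mul_one, h1] at e1 e2
      rw [e1, e2]
    have hfst : ∀ (i : I) (g : G) (l : Λ), (φ (i, g, l)).1 = (φ (i, 1, l0)).1 := by
      intro i g l
      have e1 := congrArg (fun z : J × H × M => z.1) (key i i0 g 1 l0 l)
      have e2 := congrArg (fun z : J × H × M => z.1) (key i i0 1 g l0 l0)
      simp only [one_mul, mul_one] at e1 e2
      rw [e1, e2]
    have hlst : ∀ (i : I) (g : G) (l : Λ), (φ (i, g, l)).2.2 = (φ (i0, 1, l)).2.2 := by
      intro i g l
      have e1 := congrArg (fun z : J × H × M => z.2.2) (key i0 i 1 g l0 l)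
      have e2 := congrArg (fun z : J × H × M => z.2.2) (key i0 i0 g 1 l0 l)
      simp only [one_mul, mul_one] at e1 e2
      rw [← e1, e2]
    refine ⟨MonoidHom.mk' (fun g => (φ (i0, g, l0)).2.1) ?_,
      fun i => (φ (i, 1, l0)).1, fun l => (φ (i0, 1, l)).2.2, ?_⟩
    · intro g h
      have := congrArg (fun z : J × H × M => z.2.1) (key i0 i0 g h l0 l0)
      simpa using this
    · rintro ⟨i, g, l⟩
      exact Prod.ext (hfst i g l) (Prod.ext (hmid i g l) (hlst i g l))
end
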